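/- arXiv:1111.3475 — 6 statements merged into one kernel-verified Lean document; each statement's English description precedes it below -/
import Mathlib

section
/- Let p and q be coprime positive integers with q ≥ 2, set α = p/q, and let κ ∈ ℝ. Let S be the q × q cyclic shift matrix over ℂ (S sends the j-th standard basis vector to the (j+1 mod q)-th), let G be any invertible q × q complex matrix commuting with S (i.e., a circulant matrix), and for t ∈ ℝ let D(t) be the diagonal q × q matrix with diagonal entries D(t)_{jj} = exp(−2iκ·cos(2π(t − jα))) for j = 0, …, q−1. Define M(t) = D(t)·G⁻¹·D(t)·G. Then the characteristic polynomial of M(t) has period 1/q in t: for every t ∈ ℝ and every z ∈ ℂ, det(z·I_q − M(t + 1/q)) = det(z·I_q − M(t)). -/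
open Fin.NatCast

private def T (q : ℕ) [NeZero q] : Matrix (Fin q) (Fin q) ℂ :=
  Matrix.of fun i j : Fin q => if i = j + 1 then 1 else 0

private lemma T_eq_perm (q : ℕ) [NeZero q] :
    T q = Equiv.Perm.permMatrix ℂ (Equiv.subRight (1 : Fin q)) := by
  ext i j
  simp only [T, Matrix.of_apply, Equiv.Perm.permMatrix, PEquiv.toMatrix_apply,
    Equiv.toPEquiv_apply, Option.mem_def, Option.some.injEq, Equiv.subRight_apply]
  congr 1
  rw [eq_iff_iff, sub_eq_iff_eq_add, eq_comm (b := j + 1)]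

private lemma T_isUnit (q : ℕ) [NeZero q] : IsUnit (T q) := by
  rw [Matrix.isUnit_iff_isUnit_det, T_eq_perm, Matrix.det_permutation]
  rcases Int.units_eq_one_or (Equiv.Perm.sign (Equiv.subRight (1 : Fin q))) with h | h <;>
    simp [h]

private lemma T_mul_diag (q : ℕ) [NeZero q] (d : Fin q → ℂ) :
    T q * Matrix.diagonal (fun i => d (i + 1)) = Matrix.diagonal d * T q := by
  ext i j
  rw [Matrix.mul_diagonal, Matrix.diagonal_mul]
  rcases eq_or_ne i (j + 1) with h | h
  · simp [T, h]
  · simp [T, h]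

private lemma T_pow_mul_diag (q : ℕ) [NeZero q] (d : Fin q → ℂ) (k : ℕ) :
    T q ^ k * Matrix.diagonal (fun i => d (i + (k : Fin q))) = Matrix.diagonal d * T q ^ k := by
  induction k generalizing d with
  | zero => simp
  | succ n ih =>
    have hcast : ((n + 1 : ℕ) : Fin q) = (n : Fin q) + 1 := by push_cast; ring
    have h1 : T q * Matrix.diagonal (fun i => d (i + ((n + 1 : ℕ) : Fin q)))
        = Matrix.diagonal (fun i => d (i + (n : Fin q))) * T q := by
      have := T_mul_diag q (fun i => d (i + (n : Fin q)))
      simpa only [hcast, add_assoc, add_comm (1 : Fin q)] using this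
    calc T q ^ (n + 1) * Matrix.diagonal (fun i => d (i + ((n + 1 : ℕ) : Fin q)))
        = T q ^ n * (T q * Matrix.diagonal (fun i => d (i + ((n + 1 : ℕ) : Fin q)))) := by
          rw [pow_succ, mul_assoc]
      _ = T q ^ n * (Matrix.diagonal (fun i => d (i + (n : Fin q))) * T q) := by rw [h1]
      _ = Matrix.diagonal d * T q ^ (n + 1) := by
          rw [← mul_assoc, ih, pow_succ, mul_assoc]

private noncomputable def fentry (κ : ℝ) (p q : ℕ) (s : ℝ) (j : Fin q) : ℂ :=
  Complex.exp (-(Complex.I * (2 * κ)) *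
    (Real.cos (2 * Real.pi * (s - (j : ℝ) * ((p : ℝ) / (q : ℝ)))) : ℝ))

/-- For coprime positive integers `p, q` with `q ≥ 2`, `α = p/q`, `κ ∈ ℝ`,
`S` the `q × q` cyclic shift, `G` an invertible circulant (i.e. commuting with `S`) matrix,
`D t` the diagonal matrix with entries `exp(-2iκ cos(2π(t - jα)))`, and
`M t = D t * G⁻¹ * D t * G`, the characteristic polynomial of `M t` has period `1/q` in `t`. -/
theorem stmt_0 (p q : ℕ) (hp : 0 < p) (hq : 2 ≤ q) (hpq : Nat.Coprime p q) (κ : ℝ)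
    (S : Matrix (Fin q) (Fin q) ℂ)
    (hS : S = Matrix.of fun i j : Fin q => if (i : ℕ) = ((j : ℕ) + 1) % q then 1 else 0)
    (G : Matrix (Fin q) (Fin q) ℂ) (hG : IsUnit G) (hGS : G * S = S * G)
    (D : ℝ → Matrix (Fin q) (Fin q) ℂ)
    (hD : ∀ t : ℝ, D t = Matrix.diagonal fun j : Fin q =>
      Complex.exp (-(Complex.I * (2 * κ)) *
        (Real.cos (2 * Real.pi * (t - (j : ℝ) * ((p : ℝ) / (q : ℝ)))) : ℝ)))
    (M : ℝ → Matrix (Fin q) (Fin q) ℂ)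
    (hM : ∀ t : ℝ, M t = D t * G⁻¹ * D t * G) :
    ∀ (t : ℝ) (z : ℂ),
      (z • (1 : Matrix (Fin q) (Fin q) ℂ) - M (t + 1 / (q : ℝ))).det
        = (z • (1 : Matrix (Fin q) (Fin q) ℂ) - M t).det := by
  haveI : NeZero q := ⟨by omega⟩
  intro t z
  have hq0 : (q : ℝ) ≠ 0 := by positivity
  have hDf : ∀ s : ℝ, D s = Matrix.diagonal (fentry κ p q s) := fun s => hD s
  -- S in Fin-addition form
  have h1v : ((1 : Fin q) : ℕ) = 1 := by
    rw [show (1 : Fin q) = ((1 : ℕ) : Fin q) by simp]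
    exact Fin.val_cast_of_lt (by omega)
  have hST : S = T q := by
    rw [hS]
    ext i j
    simp only [Matrix.of_apply, T]
    congr 1
    rw [eq_iff_iff, Fin.ext_iff, Fin.add_def, h1v]
  -- choose m with q ∣ 1 + m * p
  obtain ⟨m, hdvd⟩ : ∃ m : ℕ, q ∣ 1 + m * p := by
    have hup : IsUnit (p : ZMod q) := (ZMod.isUnit_iff_coprime p q).2 hpq
    refine ⟨(-(p : ZMod q)⁻¹).val, ?_⟩
    have h1 : ((1 + (-(p : ZMod q)⁻¹).val * p : ℕ) : ZMod q) = 0 := by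
      push_cast
      rw [ZMod.natCast_val, ZMod.cast_id, neg_mul, ZMod.inv_mul_of_unit _ hup]
      ring
    exact (ZMod.natCast_eq_zero_iff _ _).1 h1
  -- key entry identity
  have hentry : ∀ j : Fin q, fentry κ p q (t + 1 / (q : ℝ)) j = fentry κ p q t (j + (m : Fin q)) := by
    intro j
    set j' : Fin q := j + (m : Fin q) with hj'
    have hmodn : ((j' : ℕ) : ℤ) ≡ (j : ℕ) + m [ZMOD (q : ℤ)] := by
      have : (j' : ℕ) ≡ (j : ℕ) + m [MOD q] := by
        rw [hj', Fin.add_def]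
        calc ((j : ℕ) + ((m : Fin q) : ℕ)) % q ≡ (j : ℕ) + ((m : Fin q) : ℕ) [MOD q] :=
              Nat.mod_modEq _ q
          _ ≡ (j : ℕ) + m [MOD q] := by
              have : ((m : Fin q) : ℕ) ≡ m [MOD q] := by
                rw [Fin.val_natCast]; exact Nat.mod_modEq m q
              exact Nat.ModEq.add_left _ this
      exact_mod_cast Int.natCast_modEq_iff.2 this
    set N : ℤ := 1 + (((j' : ℕ) : ℤ) - ((j : ℕ) : ℤ)) * p with hN
    have hNdvd : (q : ℤ) ∣ N := by
      have h2 : N ≡ 1 + (m : ℤ) * p [ZMOD (q : ℤ)] := by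
        rw [hN]
        exact Int.ModEq.add_left 1 (Int.ModEq.mul_right _ (by
          have := hmodn.sub_right ((j : ℕ) : ℤ); simpa using this))
      have h3 : ((1 : ℤ) + (m : ℤ) * p) ≡ 0 [ZMOD (q : ℤ)] :=
        (Int.modEq_zero_iff_dvd).2 (by exact_mod_cast hdvd)
      exact (Int.modEq_zero_iff_dvd).1 (h2.trans h3)
    set k : ℤ := N / (q : ℤ) with hk
    have hkq : k * (q : ℤ) = N := Int.ediv_mul_cancel hNdvd
    have hkR : (k : ℝ) * (q : ℝ) = 1 + (((j' : ℕ) : ℝ) - ((j : ℕ) : ℝ)) * p := by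
      have h := congrArg (fun x : ℤ => (x : ℝ)) hkq
      simp only [hN] at h
      push_cast at h
      exact h
    have harg : 2 * Real.pi * (t + 1 / (q : ℝ) - (j : ℝ) * ((p : ℝ) / (q : ℝ)))
        = 2 * Real.pi * (t - (j' : ℝ) * ((p : ℝ) / (q : ℝ))) + k * (2 * Real.pi) := by
      field_simp
      linear_combination (-1 : ℝ) * hkR
    unfold fentry
    rw [harg, Real.cos_add_int_mul_two_pi]
  -- matrix conjugation part
  have hPD : T q ^ m * D (t + 1 / (q : ℝ)) = D t * T q ^ m := by
    rw [hDf, hDf]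
    have hdiag : (Matrix.diagonal (fentry κ p q (t + 1 / (q : ℝ))))
        = Matrix.diagonal (fun i : Fin q => fentry κ p q t (i + (m : Fin q))) := by
      exact congrArg Matrix.diagonal (funext fun j => hentry j)
    rw [hdiag]
    exact T_pow_mul_diag q (fentry κ p q t) m
  have hGdet : IsUnit G.det := (Matrix.isUnit_iff_isUnit_det G).1 hG
  have hGi : G * G⁻¹ = 1 := Matrix.mul_nonsing_inv G hGdet
  have hGi' : G⁻¹ * G = 1 := Matrix.nonsing_inv_mul G hGdet
  have hGT : G * T q = T q * G := by rw [← hST]; exact hGS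
  have hGiT : G⁻¹ * T q = T q * G⁻¹ := by
    calc G⁻¹ * T q = G⁻¹ * T q * (G * G⁻¹) := by rw [hGi, mul_one]
      _ = G⁻¹ * (T q * G) * G⁻¹ := by simp only [mul_assoc]
      _ = G⁻¹ * (G * T q) * G⁻¹ := by rw [hGT]
      _ = T q * G⁻¹ := by rw [← mul_assoc, hGi', one_mul]
  have hGP : G * T q ^ m = T q ^ m * G := Commute.pow_right hGT m
  have hGiP : G⁻¹ * T q ^ m = T q ^ m * G⁻¹ := Commute.pow_right hGiT m
  have key : T q ^ m * M (t + 1 / (q : ℝ)) = M t * T q ^ m := by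
    rw [hM, hM]
    calc T q ^ m * (D (t + 1 / (q : ℝ)) * G⁻¹ * D (t + 1 / (q : ℝ)) * G)
        = (T q ^ m * D (t + 1 / (q : ℝ))) * (G⁻¹ * (D (t + 1 / (q : ℝ)) * G)) := by
          simp only [mul_assoc]
      _ = (D t * T q ^ m) * (G⁻¹ * (D (t + 1 / (q : ℝ)) * G)) := by rw [hPD]
      _ = D t * ((G⁻¹ * T q ^ m) * (D (t + 1 / (q : ℝ)) * G)) := by
          rw [hGiP]; simp only [mul_assoc]
      _ = D t * (G⁻¹ * ((T q ^ m * D (t + 1 / (q : ℝ))) * G)) := by simp only [mul_assoc]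
      _ = D t * (G⁻¹ * ((D t * T q ^ m) * G)) := by rw [hPD]
      _ = D t * (G⁻¹ * (D t * (G * T q ^ m))) := by rw [hGP]; simp only [mul_assoc]
      _ = D t * G⁻¹ * D t * G * T q ^ m := by simp only [mul_assoc]
  have key2 : T q ^ m * (z • (1 : Matrix (Fin q) (Fin q) ℂ) - M (t + 1 / (q : ℝ)))
      = (z • (1 : Matrix (Fin q) (Fin q) ℂ) - M t) * T q ^ m := by
    rw [mul_sub, sub_mul, key, Matrix.mul_smul, Matrix.smul_mul, mul_one, one_mul]
  have hdet := congrArg Matrix.det key2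
  rw [Matrix.det_mul, Matrix.det_mul] at hdet
  have hPdet : (T q ^ m).det ≠ 0 :=
    ((Matrix.isUnit_iff_isUnit_det _).1 ((T_isUnit q).pow m)).ne_zero
  exact mul_left_cancel₀ hPdet (by rw [hdet, mul_comm])
end

section
/- Let n ≥ 2 and let Q(t,z) = zⁿ + q_{n−1}(t)z^{n−1} + ⋯ + q_0(t) where each coefficient q_j is a real-analytic complex-valued function on some open neighborhood of 0 in ℝ. Then the following are equivalent: (a) there exist δ > 0, a monic polynomial B(t,z) in z of degree ≥ 1 and a monic polynomial C(t,z) in z, both with coefficients real-analytic on (−δ, δ), such that Q(t,z) = B(t,z)²·C(t,z) for all |t| < δ and all z ∈ ℂ; (b) the discriminant D(Q(t,·)) = −Res(Q(t,·), ∂Q/∂z(t,·)) vanishes for all t in some neighborhood of 0. -/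
open Polynomial Filter Matrix

noncomputable def sylvesterMatrix (P Q : Polynomial ℂ) (m n : ℕ) :
    Matrix (Fin (m + n)) (Fin (m + n)) ℂ :=
  Matrix.of fun i j =>
    if (i : ℕ) < n then
      (if (i : ℕ) ≤ (j : ℕ) ∧ (j : ℕ) ≤ (i : ℕ) + m then P.coeff (m + (i : ℕ) - (j : ℕ)) else 0)
    else
      (if (i : ℕ) - n ≤ (j : ℕ) ∧ (j : ℕ) ≤ ((i : ℕ) - n) + n then
        Q.coeff (n + ((i : ℕ) - n) - (j : ℕ)) else 0)

noncomputable def discrim' (P : Polynomial ℂ) (m : ℕ) : ℂ :=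
  -(sylvesterMatrix P (Polynomial.derivative P) m (m - 1)).det

section Syl
variable {R S : Type*} [CommRing R] [CommRing S]

/-- generalized Sylvester matrix over any commutative ring -/
noncomputable def sylR (P Q : R[X]) (m n : ℕ) : Matrix (Fin (m + n)) (Fin (m + n)) R :=
  Matrix.of fun i j =>
    if (i : ℕ) < n then
      (if (i : ℕ) ≤ (j : ℕ) ∧ (j : ℕ) ≤ (i : ℕ) + m then P.coeff (m + (i : ℕ) - (j : ℕ)) else 0)
    else
      (if (i : ℕ) - n ≤ (j : ℕ) ∧ (j : ℕ) ≤ ((i : ℕ) - n) + n then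
        Q.coeff (n + ((i : ℕ) - n) - (j : ℕ)) else 0)

lemma sylR_eq_sylvesterMatrix (P Q : Polynomial ℂ) (m n : ℕ) :
    sylR P Q m n = sylvesterMatrix P Q m n := rfl

lemma sylR_map (f : R →+* S) (P Q : R[X]) (m n : ℕ) :
    sylR (P.map f) (Q.map f) m n = f.mapMatrix (sylR P Q m n) := by
  ext i j
  simp only [sylR, Matrix.of_apply, RingHom.mapMatrix_apply, Matrix.map_apply, coeff_map]
  split <;> split <;> simp

lemma key_sum (P : R[X]) (m : ℕ) (hP : P.natDegree ≤ m) (s L : ℕ) (hs : s + m ≤ L) :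
    ∑ j ∈ Finset.range (L + 1),
      (if s ≤ j ∧ j ≤ s + m then C (P.coeff (m + s - j)) else 0) * X ^ (L - j)
      = X ^ (L - m - s) * P := by
  have h1 : ∑ j ∈ Finset.range (L + 1),
      (if s ≤ j ∧ j ≤ s + m then C (P.coeff (m + s - j)) else 0) * X ^ (L - j)
      = ∑ j ∈ (Finset.range (L + 1)).filter (fun j => s ≤ j ∧ j ≤ s + m),
          C (P.coeff (m + s - j)) * X ^ (L - j) := by
    rw [Finset.sum_filter]
    exact Finset.sum_congr rfl fun j _ => by split <;> simp
  have h2 : (Finset.range (L + 1)).filter (fun j => s ≤ j ∧ j ≤ s + m)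
      = Finset.Ico s (s + m + 1) := by
    ext j; simp only [Finset.mem_filter, Finset.mem_range, Finset.mem_Ico]; omega
  rw [h1, h2, Finset.sum_Ico_eq_sum_range]
  have h3 : s + m + 1 - s = m + 1 := by omega
  rw [h3]
  have h5 : ∀ i ∈ Finset.range (m + 1),
      C (P.coeff (m + s - (s + i))) * X ^ (L - (s + i))
      = (fun k => C (P.coeff k) * X ^ ((L - m - s) + k)) (m + 1 - 1 - i) := by
    intro i hi
    simp only [Finset.mem_range] at hi
    have e1 : m + s - (s + i) = m + 1 - 1 - i := by omega
    have e2 : L - (s + i) = L - m - s + (m + 1 - 1 - i) := by omega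
    rw [e1, e2]
  rw [Finset.sum_congr rfl h5,
    Finset.sum_range_reflect (fun k => C (P.coeff k) * X ^ (L - m - s + k)) (m + 1)]
  have hPs : P = ∑ i ∈ Finset.range (m + 1), C (P.coeff i) * X ^ i := by
    conv_lhs => rw [P.as_sum_range' (m + 1) (Nat.lt_succ_of_le hP)]
    exact Finset.sum_congr rfl fun i _ => (C_mul_X_pow_eq_monomial).symm
  conv_rhs => rw [hPs]
  rw [Finset.mul_sum]
  exact Finset.sum_congr rfl fun i _ => by rw [pow_add]; ring

lemma row_poly (P Q : R[X]) (m n : ℕ) (hP : P.natDegree ≤ m) (hQ : Q.natDegree ≤ n)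
    (hm : 1 ≤ m) (hn : 1 ≤ n) (i : Fin (m + n)) :
    ∑ j : Fin (m + n), C (sylR P Q m n i j) * X ^ (m + n - 1 - (j : ℕ)) =
      if (i : ℕ) < n then X ^ (n - 1 - (i : ℕ)) * P else X ^ (m - 1 - ((i : ℕ) - n)) * Q := by
  have hL : m + n = (m + n - 1) + 1 := by omega
  by_cases hi : (i : ℕ) < n
  · simp only [hi, if_true]
    have : ∀ j : Fin (m + n), C (sylR P Q m n i j) * X ^ (m + n - 1 - (j : ℕ)) =
        (fun j : ℕ => (if (i : ℕ) ≤ j ∧ j ≤ (i : ℕ) + m then C (P.coeff (m + (i : ℕ) - j)) else 0)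
          * X ^ (m + n - 1 - j)) (j : ℕ) := by
      intro j
      simp only [sylR, Matrix.of_apply, hi, if_true]
      split <;> simp
    rw [Finset.sum_congr rfl (fun j _ => this j),
      Fin.sum_univ_eq_sum_range (fun j => (if (i : ℕ) ≤ j ∧ j ≤ (i : ℕ) + m then
        C (P.coeff (m + (i : ℕ) - j)) else 0) * X ^ (m + n - 1 - j)) (m + n),
      show Finset.range (m + n) = Finset.range ((m + n - 1) + 1) by rw [← hL]]
    rw [key_sum P m hP (i : ℕ) (m + n - 1) (by omega),
      show m + n - 1 - m - (i : ℕ) = n - 1 - (i : ℕ) by omega]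
  · simp only [hi, if_false]
    have : ∀ j : Fin (m + n), C (sylR P Q m n i j) * X ^ (m + n - 1 - (j : ℕ)) =
        (fun j : ℕ => (if (i : ℕ) - n ≤ j ∧ j ≤ ((i : ℕ) - n) + n then
          C (Q.coeff (n + ((i : ℕ) - n) - j)) else 0) * X ^ (m + n - 1 - j)) (j : ℕ) := by
      intro j
      simp only [sylR, Matrix.of_apply, hi, if_false]
      split <;> simp
    rw [Finset.sum_congr rfl (fun j _ => this j),
      Fin.sum_univ_eq_sum_range (fun j => (if (i : ℕ) - n ≤ j ∧ j ≤ ((i : ℕ) - n) + n then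
        C (Q.coeff (n + ((i : ℕ) - n) - j)) else 0) * X ^ (m + n - 1 - j)) (m + n),
      show Finset.range (m + n) = Finset.range ((m + n - 1) + 1) by rw [← hL]]
    rw [key_sum Q n hQ ((i : ℕ) - n) (m + n - 1) (by have := i.isLt; omega),
      show m + n - 1 - n - ((i : ℕ) - n) = m - 1 - ((i : ℕ) - n) by omega]

end Syl

section Syl2
variable {K : Type*} [Field K]

lemma det_sylR_zero_of_common_root (P Q : K[X]) (m n : ℕ)
    (hm : 1 ≤ m) (hn : 1 ≤ n) (hP : P.natDegree ≤ m) (hQ : Q.natDegree ≤ n)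
    (α : K) (hPα : P.eval α = 0) (hQα : Q.eval α = 0) :
    (sylR P Q m n).det = 0 := by
  rw [← Matrix.exists_mulVec_eq_zero_iff]
  refine ⟨fun j => α ^ (m + n - 1 - (j : ℕ)), ?_, ?_⟩
  · intro h
    have h1 := congrFun h ⟨m + n - 1, by omega⟩
    simp only [Nat.sub_self, pow_zero, Pi.zero_apply] at h1
    exact one_ne_zero h1
  · funext i
    have hrow := congrArg (Polynomial.eval α) (row_poly P Q m n hP hQ hm hn i)
    simp only [eval_finset_sum, eval_mul, eval_C, eval_pow, eval_X] at hrow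
    show (∑ j, sylR P Q m n i j * α ^ (m + n - 1 - (j : ℕ))) = 0
    rw [hrow]
    by_cases hi : (i : ℕ) < n
    · simp [hi, hPα]
    · simp [hi, hQα]

lemma exists_combination_of_det_zero (P Q : K[X]) (m n : ℕ)
    (hm : 1 ≤ m) (hn : 1 ≤ n) (hP : P.natDegree ≤ m) (hQ : Q.natDegree ≤ n)
    (hdet : (sylR P Q m n).det = 0) :
    ∃ a b : K[X], ¬(a = 0 ∧ b = 0) ∧ a.natDegree ≤ n - 1 ∧ b.natDegree ≤ m - 1 ∧
      a * P + b * Q = 0 := by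
  have hdt : (sylR P Q m n)ᵀ.det = 0 := by rw [Matrix.det_transpose]; exact hdet
  obtain ⟨w, hw0, hw⟩ := Matrix.exists_mulVec_eq_zero_iff.mpr hdt
  set M := sylR P Q m n with hM
  refine ⟨∑ i : Fin (m + n), if (i : ℕ) < n then C (w i) * X ^ (n - 1 - (i : ℕ)) else 0,
    ∑ i : Fin (m + n), if (i : ℕ) < n then 0 else C (w i) * X ^ (m - 1 - ((i : ℕ) - n)),
    ?_, ?_, ?_, ?_⟩
  · rintro ⟨ha, hb⟩
    apply hw0
    funext i₀
    by_cases hi₀ : (i₀ : ℕ) < n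
    · have hco := congrArg (fun p => Polynomial.coeff p (n - 1 - (i₀ : ℕ))) ha
      simp only [finset_sum_coeff, coeff_zero] at hco
      rw [Finset.sum_eq_single i₀] at hco
      · simpa [hi₀, coeff_C_mul, coeff_X_pow] using hco
      · intro i _ hne
        by_cases hi : (i : ℕ) < n
        · simp only [hi, if_true, coeff_C_mul, coeff_X_pow]
          have : ¬ (n - 1 - (i₀ : ℕ) = n - 1 - (i : ℕ)) := by
            have : (i : ℕ) ≠ (i₀ : ℕ) := fun h => hne (Fin.ext h)
            omega
          simp [this]
        · simp [hi]
      · intro h; exact absurd (Finset.mem_univ i₀) h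
    · have hco := congrArg (fun p => Polynomial.coeff p (m - 1 - ((i₀ : ℕ) - n))) hb
      simp only [finset_sum_coeff, coeff_zero] at hco
      rw [Finset.sum_eq_single i₀] at hco
      · simpa [hi₀, coeff_C_mul, coeff_X_pow] using hco
      · intro i _ hne
        by_cases hi : (i : ℕ) < n
        · simp [hi]
        · simp only [hi, if_false, coeff_C_mul, coeff_X_pow]
          have : ¬ (m - 1 - ((i₀ : ℕ) - n) = m - 1 - ((i : ℕ) - n)) := by
            have h1 : (i : ℕ) ≠ (i₀ : ℕ) := fun h => hne (Fin.ext h)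
            have h2 := i.isLt
            have h3 := i₀.isLt
            omega
          simp [this]
      · intro h; exact absurd (Finset.mem_univ i₀) h
  · apply natDegree_sum_le_of_forall_le
    intro i _
    by_cases hi : (i : ℕ) < n
    · simp only [hi, if_true]
      exact le_trans (natDegree_C_mul_X_pow_le _ _) (by omega)
    · simp [hi]
  · apply natDegree_sum_le_of_forall_le
    intro i _
    by_cases hi : (i : ℕ) < n
    · simp [hi]
    · simp only [hi, if_false]
      exact le_trans (natDegree_C_mul_X_pow_le _ _) (by omega)
  · rw [Finset.sum_mul, Finset.sum_mul, ← Finset.sum_add_distrib]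
    have step1 : ∀ i : Fin (m + n),
        (if (i : ℕ) < n then C (w i) * X ^ (n - 1 - (i : ℕ)) else 0) * P +
        (if (i : ℕ) < n then 0 else C (w i) * X ^ (m - 1 - ((i : ℕ) - n))) * Q
        = C (w i) * ∑ j : Fin (m + n), C (M i j) * X ^ (m + n - 1 - (j : ℕ)) := by
      intro i
      rw [row_poly P Q m n hP hQ hm hn i]
      by_cases hi : (i : ℕ) < n <;> simp [hi, mul_assoc]
    rw [Finset.sum_congr rfl (fun i _ => step1 i)]
    have step2 : ∑ i : Fin (m + n), C (w i) * ∑ j : Fin (m + n),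
        C (M i j) * X ^ (m + n - 1 - (j : ℕ))
        = ∑ j : Fin (m + n), C (∑ i : Fin (m + n), w i * M i j) * X ^ (m + n - 1 - (j : ℕ)) := by
      simp_rw [Finset.mul_sum]
      rw [Finset.sum_comm]
      congr 1
      funext j
      rw [map_sum, Finset.sum_mul]
      congr 1
      funext i
      rw [C_mul]
      ring
    rw [step2]
    have hzero : ∀ j : Fin (m + n), (∑ i : Fin (m + n), w i * M i j) = 0 := by
      intro j
      have := congrFun hw j
      simpa [Matrix.mulVec, dotProduct, Matrix.transpose_apply, mul_comm] using this
    simp [hzero]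

end Syl2

section Germs

abbrev Germ0 : Type := Filter.Germ (nhds (0:ℝ)) ℂ

def AnalyticGerms : Subring Germ0 where
  carrier := {x | ∃ f : ℝ → ℂ, AnalyticAt ℝ f 0 ∧ x = ↑f}
  mul_mem' := by
    rintro x y ⟨f, hf, rfl⟩ ⟨g, hg, rfl⟩
    exact ⟨f * g, hf.mul hg, (Filter.Germ.coe_mul _ _).symm⟩
  one_mem' := ⟨fun _ => 1, analyticAt_const, rfl⟩
  add_mem' := by
    rintro x y ⟨f, hf, rfl⟩ ⟨g, hg, rfl⟩
    exact ⟨f + g, hf.add hg, (Filter.Germ.coe_add _ _).symm⟩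
  zero_mem' := ⟨fun _ => 0, analyticAt_const, rfl⟩
  neg_mem' := by
    rintro x ⟨f, hf, rfl⟩
    exact ⟨-f, hf.neg, (Filter.Germ.coe_neg _).symm⟩

instance : Nontrivial AnalyticGerms :=
  ⟨1, 0, fun h => one_ne_zero (α := Germ0) (by simpa [Subtype.ext_iff] using h)⟩

lemma AnalyticGerms.exists_rep (x : AnalyticGerms) :
    ∃ f : ℝ → ℂ, AnalyticAt ℝ f 0 ∧ (x : Germ0) = ↑f := x.2

instance : NoZeroDivisors AnalyticGerms where
  eq_zero_or_eq_zero_of_mul_eq_zero := by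
    rintro x y hxy
    obtain ⟨f, hf, hxf⟩ := x.2
    obtain ⟨g, hg, hyg⟩ := y.2
    have h : (↑(f * g) : Germ0) = ↑(0 : ℝ → ℂ) := by
      have := congrArg Subtype.val hxy
      push_cast at this
      rw [hxf, hyg] at this
      simpa [Filter.Germ.coe_mul] using this
    have hfg : f * g =ᶠ[nhds (0:ℝ)] 0 := Filter.Germ.coe_eq.mp h
    rcases hf.eventually_eq_zero_or_eventually_ne_zero with h0 | hne
    · left
      exact Subtype.ext (by rw [hxf]; exact Filter.Germ.coe_eq.mpr h0)
    · right
      have hg0 : ∀ᶠ z in nhdsWithin (0:ℝ) {(0:ℝ)}ᶜ, g z = 0 := by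
        filter_upwards [hne, eventually_nhdsWithin_of_eventually_nhds hfg] with z h1 h2
        have : f z * g z = 0 := h2
        rcases mul_eq_zero.mp this with h | h
        · exact absurd h h1
        · exact h
      have hgz : g 0 = 0 := by
        have t1 : Filter.Tendsto g (nhdsWithin (0:ℝ) {(0:ℝ)}ᶜ) (nhds (g 0)) :=
          hg.continuousAt.continuousWithinAt
        have t2 : Filter.Tendsto g (nhdsWithin (0:ℝ) {(0:ℝ)}ᶜ) (nhds 0) :=
          Filter.Tendsto.congr' (Filter.EventuallyEq.symm hg0) tendsto_const_nhds
        exact tendsto_nhds_unique t1 t2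
      have hge : g =ᶠ[nhds (0:ℝ)] 0 := by
        rw [eventually_nhdsWithin_iff] at hg0
        filter_upwards [hg0] with z hz
        by_cases hz0 : z = 0
        · rw [hz0]; exact hgz
        · exact hz (by simp [hz0])
      exact Subtype.ext (by rw [hyg]; exact Filter.Germ.coe_eq.mpr hge)

instance : IsDomain AnalyticGerms := NoZeroDivisors.to_isDomain _

/-- The germ of the coordinate function `t ↦ (t : ℂ)`. -/
def Tg : AnalyticGerms :=
  ⟨(↑(fun t : ℝ => (t : ℂ)) : Germ0), fun t : ℝ => (t : ℂ),
    Complex.ofRealCLM.analyticAt 0, rfl⟩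

lemma AnalyticGerms.exists_pow_mul_unit (x : AnalyticGerms) (hx : x ≠ 0) :
    ∃ (k : ℕ) (u : AnalyticGerms), IsUnit u ∧ x = Tg ^ k * u := by
  obtain ⟨f, hf, hxf⟩ := x.2
  have hford : analyticOrderAt f 0 ≠ ⊤ := by
    intro htop
    have h0 := analyticOrderAt_eq_top.mp htop
    exact hx (Subtype.ext (by rw [hxf]; exact Filter.Germ.coe_eq.mpr h0))
  obtain ⟨k, hk⟩ : ∃ k : ℕ, analyticOrderAt f 0 = (k : ℕ∞) := by
    cases h : analyticOrderAt f 0 with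
    | top => exact absurd h hford
    | coe k => exact ⟨k, rfl⟩
  obtain ⟨g, hg, hg0, hfg⟩ := (hf.analyticOrderAt_eq_natCast (n := k)).mp hk
  have hgmem : (↑g : Germ0) ∈ AnalyticGerms := ⟨g, hg, rfl⟩
  set u : AnalyticGerms := ⟨↑g, hgmem⟩ with hu
  have hginv : AnalyticAt ℝ (fun z => (g z)⁻¹) 0 := hg.inv hg0
  have hinvmem : (↑(fun z => (g z)⁻¹) : Germ0) ∈ AnalyticGerms := ⟨_, hginv, rfl⟩
  refine ⟨k, u, ?_, ?_⟩
  · apply IsUnit.of_mul_eq_one (a := u) ⟨_, hinvmem⟩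
    apply Subtype.ext
    push_cast
    show (↑g * ↑(fun z => (g z)⁻¹) : Germ0) = 1
    rw [← Filter.Germ.coe_mul]
    have : (fun z => g z * (g z)⁻¹) =ᶠ[nhds (0:ℝ)] (fun _ => 1) := by
      filter_upwards [hg.continuousAt.eventually_ne hg0] with z hz
      exact mul_inv_cancel₀ hz
    exact Filter.Germ.coe_eq.mpr this
  · apply Subtype.ext
    rw [hxf]
    have hpow : ((Tg ^ k * u : AnalyticGerms) : Germ0)
        = (↑((fun t : ℝ => (t : ℂ)) ^ k * g) : Germ0) := by
      push_cast
      rfl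
    rw [hpow]
    apply Filter.Germ.coe_eq.mpr
    filter_upwards [hfg] with z hz
    rw [hz]
    simp only [Pi.mul_apply, Pi.pow_apply, sub_zero]
    rw [Complex.real_smul]
    push_cast
    ring

instance : ValuationRing AnalyticGerms where
  cond' := by
    intro a b
    by_cases ha : a = 0
    · exact ⟨0, Or.inr (by rw [ha, mul_zero])⟩
    by_cases hb : b = 0
    · exact ⟨0, Or.inl (by rw [hb, mul_zero])⟩
    obtain ⟨j, u, hu, hau⟩ := AnalyticGerms.exists_pow_mul_unit a ha
    obtain ⟨k, v, hv, hbv⟩ := AnalyticGerms.exists_pow_mul_unit b hb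
    obtain ⟨U, hU⟩ := hu
    rcases le_total j k with hjk | hkj
    · refine ⟨Tg ^ (k - j) * v * (↑U⁻¹ : AnalyticGerms), Or.inl ?_⟩
      rw [hau, hbv]
      have : Tg ^ j * u * (Tg ^ (k - j) * v * (↑U⁻¹ : AnalyticGerms))
          = Tg ^ j * Tg ^ (k - j) * v * (u * ↑U⁻¹) := by ring
      rw [this, ← pow_add, ← hU, Units.mul_inv, mul_one]
      congr 2
      omega
    · obtain ⟨V, hV⟩ := hv
      refine ⟨Tg ^ (j - k) * u * (↑V⁻¹ : AnalyticGerms), Or.inr ?_⟩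
      rw [hau, hbv]
      have : Tg ^ k * v * (Tg ^ (j - k) * u * (↑V⁻¹ : AnalyticGerms))
          = Tg ^ k * Tg ^ (j - k) * u * (v * ↑V⁻¹) := by ring
      rw [this, ← pow_add, ← hV, Units.mul_inv, mul_one]
      congr 2
      omega

instance : CharZero AnalyticGerms where
  cast_injective := by
    intro p r h
    have h1 : ((p : AnalyticGerms) : Germ0) = ((r : AnalyticGerms) : Germ0) := by rw [h]
    have h2 : ((p : ℕ) : Germ0) = ((r : ℕ) : Germ0) := by push_cast at h1 ⊢; exact h1
    have h3 : (↑(fun _ : ℝ => (p : ℂ)) : Germ0) = (↑(fun _ : ℝ => (r : ℂ)) : Germ0) := h2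
    obtain ⟨t, ht⟩ := (Filter.Germ.coe_eq.mp h3).exists
    simp only at ht
    exact_mod_cast ht

end Germs

set_option synthInstance.maxHeartbeats 1000000 in
instance : IsIntegrallyClosed AnalyticGerms := inferInstance

section PolyAux
variable {R S : Type*} [CommRing R] [CommRing S]

noncomputable def stdPoly (n : ℕ) (a : Fin n → R) : R[X] :=
  X ^ n + ∑ j : Fin n, C (a j) * X ^ (j : ℕ)

lemma stdPoly_degree_sum_lt (n : ℕ) (a : Fin n → R) :
    (∑ j : Fin n, C (a j) * X ^ (j : ℕ)).degree < (n : WithBot ℕ) := by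
  apply lt_of_le_of_lt (degree_sum_le _ _)
  rw [Finset.sup_lt_iff (by exact_mod_cast WithBot.bot_lt_coe n)]
  intro j _
  exact lt_of_le_of_lt (degree_C_mul_X_pow_le _ _) (by exact_mod_cast j.isLt)

lemma stdPoly_monic [Nontrivial R] (n : ℕ) (a : Fin n → R) : (stdPoly n a).Monic :=
  monic_X_pow_add (stdPoly_degree_sum_lt n a)

lemma stdPoly_degree [Nontrivial R] (n : ℕ) (a : Fin n → R) :
    (stdPoly n a).degree = n := by
  rw [stdPoly, degree_add_eq_left_of_degree_lt, degree_X_pow]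
  rw [degree_X_pow]
  exact stdPoly_degree_sum_lt n a

lemma stdPoly_natDegree [Nontrivial R] (n : ℕ) (a : Fin n → R) :
    (stdPoly n a).natDegree = n :=
  natDegree_eq_of_degree_eq_some (stdPoly_degree n a)

lemma stdPoly_coeff (n : ℕ) (a : Fin n → R) (k : ℕ) :
    (stdPoly n a).coeff k = if h : k < n then a ⟨k, h⟩ else if k = n then 1 else 0 := by
  rw [stdPoly, coeff_add, coeff_X_pow, finset_sum_coeff]
  simp only [coeff_C_mul, coeff_X_pow]
  by_cases h : k < n
  · rw [dif_pos h, if_neg (by omega)]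
    rw [Finset.sum_eq_single (⟨k, h⟩ : Fin n)]
    · simp
    · intro j _ hj
      have : ¬ (k = (j : ℕ)) := fun he => hj (by apply Fin.ext; simp [← he])
      simp [this]
    · intro hj; exact absurd (Finset.mem_univ _) hj
  · rw [dif_neg h]
    have : ∀ j : Fin n, a j * (if k = (j : ℕ) then (1:R) else 0) = 0 := by
      intro j
      have : ¬ (k = (j : ℕ)) := by have := j.isLt; omega
      simp [this]
    rw [Finset.sum_congr rfl (fun j _ => this j), Finset.sum_const_zero, add_zero]

lemma stdPoly_map (f : R →+* S) (n : ℕ) (a : Fin n → R) :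
    (stdPoly n a).map f = stdPoly n (fun j => f (a j)) := by
  simp [stdPoly, Polynomial.map_add, Polynomial.map_pow, Polynomial.map_sum, Polynomial.map_mul]

lemma stdPoly_eval (n : ℕ) (a : Fin n → R) (z : R) :
    (stdPoly n a).eval z = z ^ n + ∑ j : Fin n, a j * z ^ (j : ℕ) := by
  simp [stdPoly, eval_finset_sum]

end PolyAux

lemma not_separable_of_det_zero {K : Type*} [Field K] (P : K[X]) (n : ℕ) (hn : 2 ≤ n)
    (hdeg : P.natDegree = n) (hdet : (sylR P (derivative P) n (n - 1)).det = 0) :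
    ¬ P.Separable := by
  intro hsep
  obtain ⟨a, b, hab, hdega, hdegb, heq⟩ :=
    exists_combination_of_det_zero P (derivative P) n (n - 1) (by omega) (by omega)
      hdeg.le (le_trans (natDegree_derivative_le P) (by omega)) hdet
  have hPne : P ≠ 0 := fun h => by rw [h] at hdeg; simp at hdeg; omega
  have hb : b ≠ 0 := by
    intro hb0
    apply hab
    have h0 : a * P = 0 := by rw [hb0] at heq; simpa using heq
    exact ⟨(mul_eq_zero.mp h0).resolve_right hPne, hb0⟩
  have hdvd : P ∣ b * derivative P := ⟨-a, by linear_combination heq⟩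
  have hdvd2 : P ∣ b := (hsep : IsCoprime P (derivative P)).dvd_of_dvd_mul_right hdvd
  have := Polynomial.natDegree_le_of_dvd hdvd2 hb
  omega

set_option maxHeartbeats 2000000 in
set_option synthInstance.maxHeartbeats 1000000 in
/-- For a monic polynomial `Q(t,z) = zⁿ + ∑ q_j(t) z^j` of degree `n ≥ 2` with
coefficients real-analytic near `0 ∈ ℝ`, the following are equivalent:
(a) `Q = B² C` near `0` with `B, C` monic in `z`, `deg B ≥ 1`, coefficients real-analytic
on `(-δ, δ)`; (b) the discriminant `-Res(Q(t,·), ∂Q/∂z(t,·))` vanishes for all `t` near `0`. -/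
theorem stmt_2 (n : ℕ) (hn : 2 ≤ n) (q : Fin n → ℝ → ℂ)
    (hq : ∀ j, AnalyticAt ℝ (q j) 0) :
    (∃ δ : ℝ, 0 < δ ∧ ∃ d e : ℕ, 1 ≤ d ∧ 2 * d + e = n ∧
      ∃ b : Fin d → ℝ → ℂ, ∃ c : Fin e → ℝ → ℂ,
        (∀ j, AnalyticOnNhd ℝ (b j) (Set.Ioo (-δ) δ)) ∧
        (∀ j, AnalyticOnNhd ℝ (c j) (Set.Ioo (-δ) δ)) ∧
        ∀ t ∈ Set.Ioo (-δ) δ, ∀ z : ℂ,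
          z ^ n + ∑ j, q j t * z ^ (j : ℕ) =
            (z ^ d + ∑ j, b j t * z ^ (j : ℕ)) ^ 2 * (z ^ e + ∑ j, c j t * z ^ (j : ℕ)))
    ↔
    (∃ ε : ℝ, 0 < ε ∧ ∀ t ∈ Set.Ioo (-ε) ε,
      discrim' (Polynomial.X ^ n + ∑ j, Polynomial.C (q j t) * Polynomial.X ^ (j : ℕ)) n
        = 0) := by
  constructor
  · rintro ⟨δ, hδ, d, e, hd, hde, b, c, hb, hc, hfac⟩
    refine ⟨δ, hδ, fun t ht => ?_⟩
    set Qt : ℂ[X] := stdPoly n (fun j => q j t) with hQt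
    set Bt : ℂ[X] := stdPoly d (fun j => b j t) with hBt
    set Ct : ℂ[X] := stdPoly e (fun j => c j t) with hCt
    have hfact : Qt = Bt ^ 2 * Ct := by
      apply Polynomial.funext
      intro z
      simp only [hQt, hBt, hCt, eval_mul, eval_pow, stdPoly_eval]
      exact hfac t ht z
    obtain ⟨α, hα⟩ := Complex.exists_root (f := Bt)
      (by rw [hBt, stdPoly_degree]; exact_mod_cast hd)
    have hα0 : Bt.eval α = 0 := hα
    have hQα : Qt.eval α = 0 := by rw [hfact]; simp [hα0]
    have hQ'α : (Polynomial.derivative Qt).eval α = 0 := by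
      rw [hfact]
      simp [derivative_mul, derivative_pow, eval_mul, eval_add, hα0]
    have hgoal : (Polynomial.X ^ n + ∑ j, Polynomial.C (q j t) * Polynomial.X ^ (j : ℕ) : ℂ[X])
        = Qt := rfl
    rw [hgoal, discrim', neg_eq_zero, ← sylR_eq_sylvesterMatrix]
    exact det_sylR_zero_of_common_root Qt (Polynomial.derivative Qt) n (n - 1)
      (by omega) (by omega) (by rw [hQt, stdPoly_natDegree])
      (by simpa [hQt, stdPoly_natDegree] using natDegree_derivative_le Qt) α hQα hQ'α
  · rintro ⟨ε, hε, hdisc⟩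
    classical
    set Φ : (ℝ → ℂ) →+* Germ0 := Filter.Germ.coeRingHom (nhds (0:ℝ)) with hΦ
    set ι : AnalyticGerms →+* Germ0 := AnalyticGerms.subtype with hι
    set Qfun : (ℝ → ℂ)[X] := stdPoly n q with hQfun
    -- the determinant, as a function of t, vanishes near 0
    have hdetfun : ∀ t ∈ Set.Ioo (-ε) ε,
        (sylR Qfun (Polynomial.derivative Qfun) n (n - 1)).det t = 0 := by
      intro t ht
      have h1 := hdisc t ht
      rw [discrim', neg_eq_zero, ← sylR_eq_sylvesterMatrix] at h1
      set f : (ℝ → ℂ) →+* ℂ := Pi.evalRingHom (fun _ : ℝ => ℂ) t with hf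
      have h2 : (Polynomial.X ^ n + ∑ j, Polynomial.C (q j t) * Polynomial.X ^ (j : ℕ) : ℂ[X])
          = Qfun.map f := by
        rw [hQfun, stdPoly_map]; rfl
      rw [h2] at h1
      calc (sylR Qfun (Polynomial.derivative Qfun) n (n - 1)).det t
          = f ((sylR Qfun (Polynomial.derivative Qfun) n (n - 1)).det) := rfl
        _ = (f.mapMatrix (sylR Qfun (Polynomial.derivative Qfun) n (n - 1))).det :=
            RingHom.map_det f _
        _ = (sylR (Qfun.map f) ((Polynomial.derivative Qfun).map f) n (n - 1)).det := by
            rw [sylR_map]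
        _ = (sylR (Qfun.map f) (Polynomial.derivative (Qfun.map f)) n (n - 1)).det := by
            rw [derivative_map]
        _ = 0 := h1
    -- hence the germ of the determinant is 0
    have hdetgerm : Φ ((sylR Qfun (Polynomial.derivative Qfun) n (n - 1)).det) = 0 := by
      have hEv : (sylR Qfun (Polynomial.derivative Qfun) n (n - 1)).det
          =ᶠ[nhds (0:ℝ)] (0 : ℝ → ℂ) :=
        Filter.eventually_of_mem (Ioo_mem_nhds (by linarith) hε) hdetfun
      exact Filter.Germ.coe_eq.mpr hEv
    -- the polynomial over the ring of analytic germs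
    set aj : Fin n → AnalyticGerms := fun j => ⟨(↑(q j) : Germ0), ⟨q j, hq j, rfl⟩⟩ with haj
    set QA : AnalyticGerms[X] := stdPoly n aj with hQA
    have hmapQ : QA.map ι = Qfun.map Φ := by
      rw [hQA, hQfun, stdPoly_map, stdPoly_map]; rfl
    have hιinj : Function.Injective ι := Subtype.val_injective
    have hdetA : (sylR QA (Polynomial.derivative QA) n (n - 1)).det = 0 := by
      apply hιinj
      rw [map_zero]
      calc ι ((sylR QA (Polynomial.derivative QA) n (n - 1)).det)
          = (ι.mapMatrix (sylR QA (Polynomial.derivative QA) n (n - 1))).det :=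
            RingHom.map_det ι _
        _ = (sylR (QA.map ι) ((Polynomial.derivative QA).map ι) n (n - 1)).det := by
            rw [sylR_map]
        _ = (sylR (Qfun.map Φ) (Polynomial.derivative (Qfun.map Φ)) n (n - 1)).det := by
            rw [← derivative_map, hmapQ]
        _ = (sylR (Qfun.map Φ) ((Polynomial.derivative Qfun).map Φ) n (n - 1)).det := by
            rw [derivative_map]
        _ = (Φ.mapMatrix (sylR Qfun (Polynomial.derivative Qfun) n (n - 1))).det := by
            rw [sylR_map]
        _ = Φ ((sylR Qfun (Polynomial.derivative Qfun) n (n - 1)).det) :=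
            (RingHom.map_det Φ _).symm
        _ = 0 := hdetgerm
    -- pass to the fraction field
    set F := FractionRing AnalyticGerms with hF
    set ψ : AnalyticGerms →+* F := algebraMap AnalyticGerms F with hψ
    have hψinj : Function.Injective ψ := IsFractionRing.injective _ _
    set QF : F[X] := QA.map ψ with hQF
    have hQAmonic : QA.Monic := stdPoly_monic n aj
    have hQFmonic : QF.Monic := hQAmonic.map ψ
    have hQFdeg : QF.natDegree = n := by
      rw [hQF, hQA, stdPoly_map, stdPoly_natDegree]
    have hdetF : (sylR QF (Polynomial.derivative QF) n (n - 1)).det = 0 := by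
      calc (sylR QF (Polynomial.derivative QF) n (n - 1)).det
          = (sylR (QA.map ψ) ((Polynomial.derivative QA).map ψ) n (n - 1)).det := by
            rw [hQF, derivative_map]
        _ = (ψ.mapMatrix (sylR QA (Polynomial.derivative QA) n (n - 1))).det := by
            rw [sylR_map]
        _ = ψ ((sylR QA (Polynomial.derivative QA) n (n - 1)).det) :=
            (RingHom.map_det ψ _).symm
        _ = 0 := by rw [hdetA, map_zero]
    have hsep : ¬ QF.Separable := not_separable_of_det_zero QF n hn hQFdeg hdetF
    have hsq : ¬ Squarefree QF := fun h => hsep (PerfectField.separable_iff_squarefree.mpr h)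
    unfold Squarefree at hsq
    push_neg at hsq
    obtain ⟨x, hx2, hxu⟩ := hsq
    have hQFne : QF ≠ 0 := hQFmonic.ne_zero
    have hx0 : x ≠ 0 := by
      rintro rfl
      exact hQFne (zero_dvd_iff.mp (by simpa using hx2))
    set p : F[X] := x * Polynomial.C (x.leadingCoeff)⁻¹ with hp
    have hpmonic : p.Monic := monic_mul_leadingCoeff_inv hx0
    have hl : x.leadingCoeff ≠ 0 := leadingCoeff_ne_zero.mpr hx0
    obtain ⟨r, hr⟩ := hx2
    have hCC : Polynomial.C (x.leadingCoeff)⁻¹ * Polynomial.C x.leadingCoeff = 1 := by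
      rw [← Polynomial.C_mul, inv_mul_cancel₀ hl, Polynomial.C_1]
    have hp2 : QF = p * p * (Polynomial.C x.leadingCoeff ^ 2 * r) := by
      have hring : p * p * (Polynomial.C x.leadingCoeff ^ 2 * r)
          = (x * x * r) * ((Polynomial.C (x.leadingCoeff)⁻¹ * Polynomial.C x.leadingCoeff) ^ 2) := by
        rw [hp]; ring
      rw [hring, hCC, one_pow, mul_one, ← hr]
    set cq : F[X] := Polynomial.C x.leadingCoeff ^ 2 * r with hcq
    have hcqmonic : cq.Monic := (hpmonic.mul hpmonic).of_mul_monic_left (by rwa [← hp2])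
    have hppos : 0 < p.natDegree := by
      rcases Nat.eq_zero_or_pos p.natDegree with h0 | h; swap
      · exact h
      exfalso
      have hp1 : p = 1 := hpmonic.natDegree_eq_zero.mp h0
      exact hxu (IsUnit.of_mul_eq_one (a := x) _ (by rw [← hp, hp1]))
    -- descend the factors to the ring of analytic germs
    have hpdvd : p ∣ QF := ⟨p * cq, by rw [hp2]; ring⟩
    have hcdvd : cq ∣ QF := ⟨p * p, by rw [hp2]; ring⟩
    obtain ⟨PA, hPA⟩ := IsIntegrallyClosed.eq_map_mul_C_of_dvd (K := F) hQAmonic hpdvd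
    obtain ⟨CA, hCA⟩ := IsIntegrallyClosed.eq_map_mul_C_of_dvd (K := F) hQAmonic hcdvd
    rw [← hψ] at hPA hCA
    rw [hpmonic.leadingCoeff, Polynomial.C_1, mul_one] at hPA
    rw [hcqmonic.leadingCoeff, Polynomial.C_1, mul_one] at hCA
    have hPAmonic : PA.Monic := by
      have h1 : ψ PA.leadingCoeff = ψ 1 := by
        rw [ψ.map_one, ← hpmonic.leadingCoeff, ← hPA, leadingCoeff_map_of_injective hψinj]
      exact hψinj h1
    have hCAmonic : CA.Monic := by
      have h1 : ψ CA.leadingCoeff = ψ 1 := by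
        rw [ψ.map_one, ← hcqmonic.leadingCoeff, ← hCA, leadingCoeff_map_of_injective hψinj]
      exact hψinj h1
    have hmain : QA = PA * PA * CA := by
      apply Polynomial.map_injective ψ hψinj
      rw [Polynomial.map_mul, Polynomial.map_mul, hPA, hCA, ← hQF, hp2]
    set d : ℕ := PA.natDegree with hdd
    set e : ℕ := CA.natDegree with hee
    have hd1 : 1 ≤ d := by
      rw [hdd, ← natDegree_map_eq_of_injective hψinj PA, hPA]
      exact hppos
    have hde : 2 * d + e = n := by
      have h1 : QA.natDegree = n := by rw [hQA, stdPoly_natDegree]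
      rw [hmain] at h1
      rw [natDegree_mul (mul_ne_zero hPAmonic.ne_zero hPAmonic.ne_zero) hCAmonic.ne_zero,
        natDegree_mul hPAmonic.ne_zero hPAmonic.ne_zero] at h1
      omega
    -- choose analytic representatives of the coefficients
    choose bb hbb1 hbb2 using fun j : Fin d => (PA.coeff (j : ℕ)).2
    choose cc hcc1 hcc2 using fun j : Fin e => (CA.coeff (j : ℕ)).2
    set Bfun : (ℝ → ℂ)[X] := stdPoly d bb with hBfun
    set Cfun : (ℝ → ℂ)[X] := stdPoly e cc with hCfun
    have hBmap : Bfun.map Φ = PA.map ι := by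
      apply Polynomial.ext
      intro k
      rw [coeff_map, coeff_map, hBfun, stdPoly_coeff]
      by_cases h : k < d
      · rw [dif_pos h]
        exact (hbb2 ⟨k, h⟩).symm
      · rw [dif_neg h]
        by_cases h2 : k = d
        · rw [if_pos h2, h2]
          have : PA.coeff d = 1 := hPAmonic.coeff_natDegree
          rw [this, ι.map_one, Φ.map_one]
        · rw [if_neg h2]
          have : PA.coeff k = 0 := coeff_eq_zero_of_natDegree_lt (by omega)
          rw [this, map_zero, map_zero]
    have hCmap : Cfun.map Φ = CA.map ι := by
      apply Polynomial.ext
      intro k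
      rw [coeff_map, coeff_map, hCfun, stdPoly_coeff]
      by_cases h : k < e
      · rw [dif_pos h]
        exact (hcc2 ⟨k, h⟩).symm
      · rw [dif_neg h]
        by_cases h2 : k = e
        · rw [if_pos h2, h2]
          have : CA.coeff e = 1 := hCAmonic.coeff_natDegree
          rw [this, ι.map_one, Φ.map_one]
        · rw [if_neg h2]
          have : CA.coeff k = 0 := coeff_eq_zero_of_natDegree_lt (by omega)
          rw [this, map_zero, map_zero]
    set Dp : (ℝ → ℂ)[X] := Qfun - Bfun * Bfun * Cfun with hDp
    have hgerm : Dp.map Φ = 0 := by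
      rw [hDp, Polynomial.map_sub, Polynomial.map_mul, Polynomial.map_mul,
        hBmap, hCmap, hmapQ.symm, hmain, Polynomial.map_mul, Polynomial.map_mul]
      ring
    have hco : ∀ k, (Dp.coeff k) =ᶠ[nhds (0:ℝ)] (0 : ℝ → ℂ) := by
      intro k
      apply Filter.Germ.coe_eq.mp
      have : Φ (Dp.coeff k) = 0 := by rw [← coeff_map, hgerm, coeff_zero]
      exact this
    have hevent : ∀ᶠ t in nhds (0:ℝ), ∀ k ∈ Dp.support, (Dp.coeff k) t = 0 :=
      (Filter.eventually_all_finset _).mpr (fun k _ => hco k)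
    have hanB : ∀ᶠ t in nhds (0:ℝ), ∀ j : Fin d, AnalyticAt ℝ (bb j) t :=
      Filter.eventually_all.mpr (fun j => (hbb1 j).eventually_analyticAt)
    have hanC : ∀ᶠ t in nhds (0:ℝ), ∀ j : Fin e, AnalyticAt ℝ (cc j) t :=
      Filter.eventually_all.mpr (fun j => (hcc1 j).eventually_analyticAt)
    obtain ⟨δ, hδpos, hδ⟩ := Metric.eventually_nhds_iff.mp (hevent.and (hanB.and hanC))
    have hmem : ∀ t ∈ Set.Ioo (-δ) δ, dist t (0:ℝ) < δ := by
      intro t ht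
      rw [Real.dist_eq, sub_zero]
      exact abs_lt.mpr ⟨ht.1, ht.2⟩
    refine ⟨δ, hδpos, d, e, hd1, hde, bb, cc,
      fun j t ht => ((hδ (hmem t ht)).2.1 j),
      fun j t ht => ((hδ (hmem t ht)).2.2 j), ?_⟩
    intro t ht z
    have hcz := (hδ (hmem t ht)).1
    set f : (ℝ → ℂ) →+* ℂ := Pi.evalRingHom (fun _ : ℝ => ℂ) t with hf
    have hzero : Dp.map f = 0 := by
      apply Polynomial.ext
      intro k
      rw [coeff_map, coeff_zero]
      by_cases hk : k ∈ Dp.support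
      · exact hcz k hk
      · rw [Polynomial.notMem_support_iff.mp hk, map_zero]
    have hsub : Qfun.map f - (Bfun * Bfun * Cfun).map f = 0 := by
      rw [← Polynomial.map_sub, ← hDp]
      exact hzero
    have heq : Qfun.map f = (Bfun.map f) * (Bfun.map f) * (Cfun.map f) := by
      have h2 := sub_eq_zero.mp hsub
      rw [h2, Polynomial.map_mul, Polynomial.map_mul]
    have heval := congrArg (Polynomial.eval z) heq
    rw [hQfun, hBfun, hCfun, stdPoly_map, stdPoly_map, stdPoly_map,
      stdPoly_eval, eval_mul, eval_mul, stdPoly_eval, stdPoly_eval] at heval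
    calc z ^ n + ∑ j, q j t * z ^ (j : ℕ)
        = (z ^ d + ∑ j, bb j t * z ^ (j : ℕ)) * (z ^ d + ∑ j, bb j t * z ^ (j : ℕ))
          * (z ^ e + ∑ j, cc j t * z ^ (j : ℕ)) := heval
      _ = (z ^ d + ∑ j, bb j t * z ^ (j : ℕ)) ^ 2 * (z ^ e + ∑ j, cc j t * z ^ (j : ℕ)) := by
          ring
end

section
/- Let P(t,z) = z² + p₁(t)z + p₀(t), where p₀ and p₁ are real-valued real-analytic functions on a neighborhood of 0 in ℝ, and assume that for every t near 0 both complex roots of P(t,·) have modulus 1. Then P is completely reducible: there exist δ > 0 and real-analytic functions λ₊, λ₋ : (−δ, δ) → ℂ such that P(t,z) = (z − λ₊(t))(z − λ₋(t)) for all |t| < δ and all z ∈ ℂ. -/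
open Set Complex Filter

lemma quad_factor (p q : ℂ) : ∃ a b : ℂ, ∀ z : ℂ, z^2 + p*z + q = (z-a)*(z-b) := by
  obtain ⟨w, hw⟩ := IsAlgClosed.exists_pow_nat_eq (p^2 - 4*q) (n := 2) (by norm_num)
  refine ⟨(-p+w)/2, (-p-w)/2, fun z => ?_⟩
  linear_combination ((1:ℂ)/4) * hw

lemma roots_facts (p q : ℝ) (h : ∀ z : ℂ, z^2 + (p:ℂ)*z + (q:ℂ) = 0 → ‖z‖ = 1) :
    (q = 1 ∧ p^2 ≤ 4) ∨ (q = -1 ∧ p = 0) := by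
  obtain ⟨a, b, hfac⟩ := quad_factor (p:ℂ) (q:ℂ)
  have ha : ‖a‖ = 1 := h a (by rw [hfac a]; ring)
  have hb : ‖b‖ = 1 := h b (by rw [hfac b]; ring)
  have hq : (q:ℂ) = a * b := by have := hfac 0; simpa using this
  have hp : (p:ℂ) = -(a+b) := by
    have := hfac 1; push_cast at this ⊢; linear_combination this - hq
  have hqabs : |q| = 1 := by
    have : ‖(q:ℂ)‖ = 1 := by rw [hq, norm_mul, ha, hb]; norm_num
    rwa [Complex.norm_real, Real.norm_eq_abs] at this
  have ha0 : a ≠ 0 := by intro h0; rw [h0] at ha; simp at ha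
  have hnsq : a * (starRingEnd ℂ) a = 1 := by
    rw [Complex.mul_conj]
    norm_cast
    rw [← Complex.sq_norm, ha]; norm_num
  rcases abs_eq (by norm_num : (0:ℝ) ≤ 1) |>.mp hqabs with hq1 | hq1
  · left
    refine ⟨hq1, ?_⟩
    have hb' : b = (starRingEnd ℂ) a := by
      have : a * b = a * (starRingEnd ℂ) a := by rw [← hq, hq1, hnsq]; norm_num
      exact mul_left_cancel₀ ha0 this
    have hpre : (p:ℂ) = ((-2 * a.re : ℝ) : ℂ) := by
      rw [hp, hb', Complex.add_conj]; push_cast; ring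
    have hpre' : p = -2 * a.re := by exact_mod_cast hpre
    have hre : |a.re| ≤ 1 := by rw [← ha]; exact Complex.abs_re_le_norm a
    have h2 : a.re^2 ≤ 1 := by
      rw [← _root_.sq_abs]; exact pow_le_one₀ (abs_nonneg _) hre
    have h3 : p^2 = 4 * a.re^2 := by rw [hpre']; ring
    linarith
  · right
    have hb' : b = -((starRingEnd ℂ) a) := by
      have : a * b = a * (-((starRingEnd ℂ) a)) := by
        rw [← hq, hq1, mul_neg, hnsq]; norm_num
      exact mul_left_cancel₀ ha0 this
    have hpim : (p:ℂ) = -(((2 * a.im : ℝ)) * Complex.I) := by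
      rw [hp, hb']
      have := Complex.sub_conj a
      linear_combination -this
    have him : a.im = 0 := by
      have := congrArg Complex.im hpim
      simp at this
      linarith
    refine ⟨hq1, ?_⟩
    have : (p:ℂ) = 0 := by rw [hpim, him]; norm_num
    exact_mod_cast this

/-- ofReal composed with a real-analytic function is real-analytic (into ℂ). -/
lemma analyticAt_ofReal_comp {f : ℝ → ℝ} {t : ℝ} (hf : AnalyticAt ℝ f t) :
    AnalyticAt ℝ (fun s => ((f s : ℝ) : ℂ)) t :=
  (Complex.ofRealCLM.analyticAt (f t)).comp hf

/-- If `P(t,z) = z² + p₁(t) z + p₀(t)` has real-valued coefficients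
real-analytic near `0 ∈ ℝ`, and for all `t` near `0` both complex roots of `P(t,·)` have
modulus `1`, then `P` is completely reducible: there are `δ > 0` and real-analytic
`λ₊, λ₋ : (-δ,δ) → ℂ` with `P(t,z) = (z - λ₊(t))(z - λ₋(t))` for `|t| < δ`. -/
theorem stmt_5 (p0 p1 : ℝ → ℝ)
    (h0 : AnalyticAt ℝ p0 0) (h1 : AnalyticAt ℝ p1 0)
    (hmod : ∃ ε : ℝ, 0 < ε ∧ ∀ t ∈ Set.Ioo (-ε) ε, ∀ z : ℂ,
      z ^ 2 + (p1 t : ℂ) * z + (p0 t : ℂ) = 0 → ‖z‖ = 1) :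
    ∃ δ : ℝ, 0 < δ ∧ ∃ lamP lamM : ℝ → ℂ,
      AnalyticOnNhd ℝ lamP (Set.Ioo (-δ) δ) ∧
      AnalyticOnNhd ℝ lamM (Set.Ioo (-δ) δ) ∧
      ∀ t ∈ Set.Ioo (-δ) δ, ∀ z : ℂ,
        z ^ 2 + (p1 t : ℂ) * z + (p0 t : ℂ) = (z - lamP t) * (z - lamM t) := by
  obtain ⟨ε, hε, hroots⟩ := hmod
  obtain ⟨s0, hs0, h0an⟩ := h0.exists_mem_nhds_analyticOnNhd
  obtain ⟨s1, hs1, h1an⟩ := h1.exists_mem_nhds_analyticOnNhd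
  have hnhds : s0 ∩ s1 ∩ Set.Ioo (-ε) ε ∈ nhds (0:ℝ) := by
    refine Filter.inter_mem (Filter.inter_mem hs0 hs1) ?_
    exact Ioo_mem_nhds (by linarith) hε
  obtain ⟨δ, hδpos, hδsub⟩ := Metric.mem_nhds_iff.mp hnhds
  rw [Real.ball_eq_Ioo] at hδsub
  simp only [zero_sub, zero_add] at hδsub
  set I : Set ℝ := Set.Ioo (-δ) δ with hI
  have hIsub : I ⊆ s0 ∩ s1 ∩ Set.Ioo (-ε) ε := hδsub
  have h0I : (0:ℝ) ∈ I := by constructor <;> simp [hδpos]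
  have hcase : ∀ t ∈ I, (p0 t = 1 ∧ p1 t ^2 ≤ 4) ∨ (p0 t = -1 ∧ p1 t = 0) := by
    intro t ht
    exact roots_facts (p1 t) (p0 t) (hroots t (hIsub ht).2)
  -- p0 is constant on I
  have hconst : ∀ t ∈ I, p0 t = p0 0 := by
    intro t ht
    by_contra hne
    have hcont : ContinuousOn p0 I :=
      (h0an.mono (fun x hx => ((hIsub hx).1).1)).continuousOn
    have huIcc : Set.uIcc 0 t ⊆ I := Set.ordConnected_Ioo.uIcc_subset h0I ht
    have habs : ∀ s ∈ I, p0 s = 1 ∨ p0 s = -1 := by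
      intro s hs; rcases hcase s hs with ⟨h, _⟩ | ⟨h, _⟩ <;> [left; right] <;> exact h
    have h0mem : (0:ℝ) ∈ Set.uIcc (p0 0) (p0 t) := by
      rcases habs 0 h0I with h0' | h0' <;> rcases habs t ht with ht' | ht'
      · exact absurd (ht'.trans h0'.symm) hne
      · rw [h0', ht', Set.mem_uIcc]; norm_num
      · rw [h0', ht', Set.mem_uIcc]; norm_num
      · exact absurd (ht'.trans h0'.symm) hne
    obtain ⟨c, hc, hc0⟩ := intermediate_value_uIcc (hcont.mono huIcc) h0mem
    rcases habs c (huIcc hc) with h | h <;> rw [hc0] at h <;> norm_num at h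
  rcases hcase 0 h0I with ⟨hp00, -⟩ | ⟨hp00, -⟩
  · -- p0 ≡ 1 case
    have hp0one : ∀ t ∈ I, p0 t = 1 := fun t ht => (hconst t ht).trans hp00
    have hDle : ∀ t ∈ I, p1 t ^ 2 - 4 ≤ 0 := by
      intro t ht
      rcases hcase t ht with ⟨-, h⟩ | ⟨h, -⟩
      · linarith
      · rw [hp0one t ht] at h; norm_num at h
    have hDan : AnalyticAt ℝ (fun t => p1 t ^ 2 - 4) 0 := (h1.pow 2).sub analyticAt_const
    by_cases horder : analyticOrderAt (fun t => p1 t ^ 2 - 4) 0 = ⊤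
    · -- discriminant identically zero near 0
      have hev : ∀ᶠ t in nhds (0:ℝ), p1 t ^ 2 - 4 = 0 := analyticOrderAt_eq_top.mp horder
      obtain ⟨δ₂, hδ₂pos, hδ₂⟩ := Metric.eventually_nhds_iff.mp hev
      refine ⟨min δ δ₂, by positivity, fun t => (-2⁻¹ : ℂ) * (p1 t : ℂ),
        fun t => (-2⁻¹ : ℂ) * (p1 t : ℂ), ?_, ?_, ?_⟩
      · intro t ht
        have htI : t ∈ I := ⟨lt_of_le_of_lt (by simp) ht.1, lt_of_lt_of_le ht.2 (min_le_left _ _)⟩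
        exact analyticAt_const.mul (analyticAt_ofReal_comp (h1an t ((hIsub htI).1).2))
      · intro t ht
        have htI : t ∈ I := ⟨lt_of_le_of_lt (by simp) ht.1, lt_of_lt_of_le ht.2 (min_le_left _ _)⟩
        exact analyticAt_const.mul (analyticAt_ofReal_comp (h1an t ((hIsub htI).1).2))
      · intro t ht z
        have htI : t ∈ I := ⟨lt_of_le_of_lt (by simp) ht.1, lt_of_lt_of_le ht.2 (min_le_left _ _)⟩
        have hd : p1 t ^ 2 - 4 = 0 := by
          apply hδ₂
          rw [Real.dist_eq, sub_zero, abs_lt]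
          constructor
          · exact lt_of_le_of_lt (by simp) ht.1
          · exact lt_of_lt_of_le ht.2 (min_le_right _ _)
        have hd' : ((p1 t : ℂ))^2 - 4 = 0 := by exact_mod_cast hd
        have hp' : ((p0 t : ℂ)) = 1 := by exact_mod_cast hp0one t htI
        linear_combination hp' - (1/4 : ℂ) * hd'
    · -- finite order: discriminant = t^(2k) * g with g 0 < 0
      obtain ⟨m, hm⟩ := WithTop.ne_top_iff_exists.mp horder
      obtain ⟨g, hgan, hg0, hev⟩ := (hDan.analyticOrderAt_eq_natCast (n := m)).mp hm.symm
      simp only [sub_zero, smul_eq_mul] at hev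
      -- g 0 < 0
      have hg0neg : g 0 < 0 := by
        rcases lt_or_gt_of_ne hg0 with h | h
        · exact h
        exfalso
        have hpos : ∀ᶠ t in nhds (0:ℝ), 0 < g t :=
          hgan.continuousAt.eventually_const_lt h
        obtain ⟨δ₃, hδ₃pos, hδ₃⟩ := Metric.eventually_nhds_iff.mp (hev.and hpos)
        set t0 : ℝ := min δ δ₃ / 2 with ht0
        have ht0pos : 0 < t0 := by positivity
        have ht0d : dist t0 0 < δ₃ := by
          rw [Real.dist_eq, sub_zero, abs_of_pos ht0pos]
          have := min_le_right δ δ₃; linarith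
        obtain ⟨he, hgpos⟩ := hδ₃ ht0d
        have ht0I : t0 ∈ I := by
          constructor
          · linarith
          · have := min_le_left δ δ₃; linarith
        have := hDle t0 ht0I
        rw [he] at this
        nlinarith [pow_pos ht0pos m]
      -- m is even
      have hmeven : Even m := by
        by_contra hodd
        rw [Nat.not_even_iff_odd] at hodd
        have hneg : ∀ᶠ t in nhds (0:ℝ), g t < 0 :=
          hgan.continuousAt.eventually_lt_const hg0neg
        obtain ⟨δ₃, hδ₃pos, hδ₃⟩ := Metric.eventually_nhds_iff.mp (hev.and hneg)
        set t0 : ℝ := -(min δ δ₃ / 2) with ht0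
        have ht0neg : t0 < 0 := by
          rw [ht0, neg_lt, neg_zero]; positivity
        have ht0d : dist t0 0 < δ₃ := by
          rw [Real.dist_eq, sub_zero, abs_of_neg ht0neg, ht0]
          have := min_le_right δ δ₃; linarith
        obtain ⟨he, hgneg⟩ := hδ₃ ht0d
        have ht0I : t0 ∈ I := by
          have h1' := min_le_left δ δ₃
          have h2' : 0 < min δ δ₃ := lt_min hδpos hδ₃pos
          constructor <;> rw [ht0] <;> [linarith; linarith]
        have hle := hDle t0 ht0I
        rw [he] at hle
        have hpow : t0 ^ m < 0 := hodd.pow_neg ht0neg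
        nlinarith
      obtain ⟨k, hk⟩ := hmeven
      -- shrink to where g < 0 and factorization holds and g analytic
      obtain ⟨s2, hs2, h2an⟩ := hgan.exists_mem_nhds_analyticOnNhd
      have hneg : ∀ᶠ t in nhds (0:ℝ), g t < 0 :=
        hgan.continuousAt.eventually_lt_const hg0neg
      have hfin : {t : ℝ | p1 t ^2 - 4 = t ^ m * g t ∧ g t < 0} ∩ s2 ∈ nhds (0:ℝ) :=
        Filter.inter_mem (hev.and hneg) hs2
      obtain ⟨δ₄, hδ₄pos, hδ₄⟩ := Metric.mem_nhds_iff.mp hfin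
      rw [Real.ball_eq_Ioo] at hδ₄
      simp only [zero_sub, zero_add] at hδ₄
      set δ' : ℝ := min δ δ₄ with hδ'
      have hδ'pos : 0 < δ' := lt_min hδpos hδ₄pos
      have hsubI : Set.Ioo (-δ') δ' ⊆ I := by
        apply Set.Ioo_subset_Ioo <;> simp [hδ']
      have hsub4 : Set.Ioo (-δ') δ' ⊆ Set.Ioo (-δ₄) δ₄ := by
        apply Set.Ioo_subset_Ioo <;> simp [hδ']
      set u : ℝ → ℂ := fun t => Complex.exp (Complex.log ((-g t : ℝ) : ℂ) * (2⁻¹ : ℂ)) with hu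
      refine ⟨δ', hδ'pos,
        fun t => (-(p1 t : ℂ) + Complex.I * ((t:ℂ)^k * u t)) * (2⁻¹ : ℂ),
        fun t => (-(p1 t : ℂ) - Complex.I * ((t:ℂ)^k * u t)) * (2⁻¹ : ℂ), ?_, ?_, ?_⟩
      case _ | _ =>
        intro t ht
        have htI := hsubI ht
        have ht4 := hδ₄ (hsub4 ht)
        have hgneg : g t < 0 := ht4.1.2
        have hp1C : AnalyticAt ℝ (fun s => ((p1 s : ℝ) : ℂ)) t :=
          analyticAt_ofReal_comp (h1an t ((hIsub htI).1).2)
        have hgC : AnalyticAt ℝ (fun s => ((-g s : ℝ) : ℂ)) t :=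
          analyticAt_ofReal_comp (h2an t ht4.2).neg
        have hmem : ((-g t : ℝ) : ℂ) ∈ Complex.slitPlane :=
          Complex.ofReal_mem_slitPlane.mpr (by linarith)
        have hlog : AnalyticAt ℝ (fun s => Complex.log ((-g s : ℝ) : ℂ)) t := by
          have := AnalyticAt.comp (𝕜 := ℝ) (f := fun s => ((-g s : ℝ) : ℂ)) (x := t)
            ((analyticAt_clog hmem).restrictScalars (𝕜 := ℝ)) hgC
          exact this
        have huan : AnalyticAt ℝ u t := by
          have := AnalyticAt.comp (𝕜 := ℝ)
            (f := fun s => Complex.log ((-g s : ℝ) : ℂ) * (2⁻¹ : ℂ)) (x := t)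
            (analyticAt_cexp.restrictScalars (𝕜 := ℝ)) (hlog.mul analyticAt_const)
          exact this
        have hpow : AnalyticAt ℝ (fun s : ℝ => ((s:ℝ):ℂ)^k) t :=
          (Complex.ofRealCLM.analyticAt t).pow k
        first
        | exact (hp1C.neg.add (analyticAt_const.mul (hpow.mul huan))).mul analyticAt_const
        | exact (hp1C.neg.sub (analyticAt_const.mul (hpow.mul huan))).mul analyticAt_const
      · intro t ht z
        have htI := hsubI ht
        have ht4 := hδ₄ (hsub4 ht)
        have hgneg : g t < 0 := ht4.1.2
        have hDt : p1 t ^2 - 4 = (t^k)^2 * g t := by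
          rw [ht4.1.1, hk]; ring
        have hDt' : ((p1 t : ℂ))^2 - 4 = (((t:ℝ):ℂ)^k)^2 * ((g t : ℝ) : ℂ) := by
          exact_mod_cast hDt
        have hp0' : ((p0 t : ℂ)) = 1 := by exact_mod_cast hp0one t htI
        have hne : ((-g t : ℝ) : ℂ) ≠ 0 := by
          simp only [ne_eq, Complex.ofReal_eq_zero]
          linarith
        have hu2 : u t ^ 2 = -((g t : ℝ) : ℂ) := by
          rw [hu]
          have h2' : Complex.exp (Complex.log ((-g t : ℝ) : ℂ) * (2⁻¹:ℂ)) ^ 2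
              = Complex.exp ((2:ℕ) * (Complex.log ((-g t : ℝ) : ℂ) * (2⁻¹:ℂ))) :=
            (Complex.exp_nat_mul _ 2).symm
          rw [h2']
          have : ((2:ℕ):ℂ) * (Complex.log ((-g t : ℝ) : ℂ) * (2⁻¹:ℂ))
              = Complex.log ((-g t : ℝ) : ℂ) := by push_cast; ring
          rw [this, Complex.exp_log hne]
          push_cast; ring
        linear_combination hp0' - (1/4 : ℂ) * hDt' - ((((t:ℝ):ℂ)^k)^2/4) * hu2 + ((((t:ℝ):ℂ)^k)^2 * u t ^ 2 / 4) * Complex.I_sq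
  · -- p0 ≡ -1 case
    have hp1z : ∀ t ∈ I, p1 t = 0 := by
      intro t ht
      rcases hcase t ht with ⟨h, -⟩ | ⟨-, h⟩
      · rw [hconst t ht, hp00] at h; norm_num at h
      · exact h
    refine ⟨δ, hδpos, fun _ => (1:ℂ), fun _ => (-1:ℂ),
      fun t _ => analyticAt_const, fun t _ => analyticAt_const, ?_⟩
    intro t ht z
    have e0 : ((p0 t : ℂ)) = -1 := by
      rw [hconst t ht, hp00]; norm_num
    have e1 : ((p1 t : ℂ)) = 0 := by exact_mod_cast hp1z t ht
    linear_combination e0 + z * e1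
end

section
/- Let Q(t,z) = z² + q₁(t)z + q₀(t) with q₀, q₁ real-analytic complex-valued functions on a neighborhood of 0 in ℝ, and suppose the discriminant D(t) = q₁(t)² − 4q₀(t) is not identically zero near 0; let k = ord(D) be the order of vanishing of D at 0. Then: (i) Q is completely reducible (there exist δ > 0 and real-analytic η₁, η₂ : (−δ,δ) → ℂ with Q(t,z) = (z − η₁(t))(z − η₂(t)) for |t| < δ) if and only if k is even; (ii) Q is irreducible in K₀[z] (i.e., admits no factorization into two monic degree-1 factors with coefficients real-analytic near 0) if and only if k is odd. -/
/-- `OrdAt f k` says that the order of vanishing of `f : ℝ → ℂ` at `0` is exactly `k`: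
the `k`-th derivative at `0` is nonzero while all lower-order derivatives vanish at `0`. -/
def OrdAt (f : ℝ → ℂ) (k : ℕ) : Prop :=
  iteratedDeriv k f 0 ≠ 0 ∧ ∀ l < k, iteratedDeriv l f 0 = 0

open Filter Topology

lemma iteratedDeriv_eq_coeff {f : ℝ → ℂ} {p : FormalMultilinearSeries ℝ ℝ ℂ}
    (hp : HasFPowerSeriesAt f p 0) (n : ℕ) :
    iteratedDeriv n f 0 = (n.factorial : ℂ) * p.coeff n := by
  obtain ⟨r, hr⟩ := hp
  have h := hr.factorial_smul (1 : ℝ) n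
  rw [iteratedDeriv_eq_iteratedFDeriv, ← h, nsmul_eq_mul]
  rfl

lemma OrdAt.exists_decomp {f : ℝ → ℂ} {k : ℕ} (hf : AnalyticAt ℝ f 0) (hk : OrdAt f k) :
    ∃ g : ℝ → ℂ, AnalyticAt ℝ g 0 ∧ g 0 ≠ 0 ∧ ∀ᶠ t in 𝓝 (0:ℝ), f t = t ^ k • g t := by
  obtain ⟨p, hp⟩ := hf
  have hco : ∀ n, iteratedDeriv n f 0 = (n.factorial : ℂ) * p.coeff n :=
    iteratedDeriv_eq_coeff hp
  have hk0 : p.coeff k ≠ 0 := by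
    intro h
    exact hk.1 (by rw [hco k, h, mul_zero])
  have hpk : p k ≠ 0 := fun h => hk0 (FormalMultilinearSeries.coeff_eq_zero.mpr h)
  have hpne : p ≠ 0 := fun h => hpk (by simp [h])
  have hord : p.order = k := by
    rcases lt_trichotomy p.order k with h | h | h
    · exfalso
      apply p.apply_order_ne_zero hpne
      apply FormalMultilinearSeries.coeff_eq_zero.mp
      have h2 := hk.2 p.order h
      rw [hco p.order] at h2
      have : ((p.order).factorial : ℂ) ≠ 0 := by
        exact_mod_cast Nat.factorial_ne_zero _
      exact (mul_eq_zero.mp h2).resolve_left this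
    · exact h
    · exact absurd (FormalMultilinearSeries.coeff_eq_zero.mpr
        (p.apply_eq_zero_of_lt_order h)) hk0
  refine ⟨(Function.swap dslope 0)^[p.order] f,
    ⟨_, hp.has_fpower_series_iterate_dslope_fslope p.order⟩,
    hp.iterate_dslope_fslope_ne_zero hpne, ?_⟩
  rw [← hord]
  simpa using Filter.Eventually.of_forall hp.eq_pow_order_mul_iterate_dslope

lemma OrdAt.even_of_eventually_sq {f d : ℝ → ℂ} {k : ℕ} (hf : AnalyticAt ℝ f 0)
    (hd : AnalyticAt ℝ d 0) (hk : OrdAt f k) (hsq : ∀ᶠ t in 𝓝 (0:ℝ), f t = d t ^ 2) :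
    Even k := by
  obtain ⟨g, hg, hg0, hfg⟩ := hk.exists_decomp hf
  by_cases hdz : ∀ᶠ t in 𝓝 (0:ℝ), d t = 0
  · exfalso
    apply hg0
    have h1 : ∀ᶠ t in 𝓝[≠] (0:ℝ), g t = 0 := by
      filter_upwards [((hfg.and hsq).and hdz).filter_mono nhdsWithin_le_nhds,
        self_mem_nhdsWithin] with t ht ht0
      obtain ⟨⟨e1, e2⟩, e3⟩ := ht
      have e : t ^ k • g t = 0 := by rw [← e1, e2, e3]; ring
      have htk : t ^ k ≠ 0 := pow_ne_zero _ (Set.mem_compl_singleton_iff.mp ht0)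
      exact (smul_eq_zero.mp e).resolve_left htk
    have h2 : Tendsto g (𝓝[≠] (0:ℝ)) (𝓝 (g 0)) := hg.continuousAt.continuousWithinAt.tendsto
    have h3 : Tendsto g (𝓝[≠] (0:ℝ)) (𝓝 0) :=
      Tendsto.congr' (by filter_upwards [h1] with t ht; exact ht.symm) tendsto_const_nhds
    exact tendsto_nhds_unique h2 h3
  · have hne : analyticOrderAt d 0 ≠ ⊤ := fun h => hdz (analyticOrderAt_eq_top.mp h)
    obtain ⟨n, hn⟩ := WithTop.ne_top_iff_exists.mp hne
    obtain ⟨e, he, he0, hde⟩ := (hd.analyticOrderAt_eq_natCast (n := n)).mp hn.symm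
    have hkey : k = n + n := by
      refine AnalyticAt.unique_eventuallyEq_pow_smul_nonzero (f := f) (z₀ := (0:ℝ))
        ⟨g, hg, hg0, by filter_upwards [hfg] with t ht; simpa using ht⟩
        ⟨fun t => e t ^ 2, he.pow 2, pow_ne_zero 2 he0, ?_⟩
      filter_upwards [hsq, hde] with t h1 h2
      simp only [sub_zero] at h2 ⊢
      rw [h1, h2, smul_pow, ← pow_mul, mul_two]
    exact ⟨n, hkey⟩

lemma exists_sqrt {g : ℝ → ℂ} (hg : AnalyticAt ℝ g 0) (hg0 : g 0 ≠ 0) :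
    ∃ s : ℝ → ℂ, AnalyticAt ℝ s 0 ∧ ∀ᶠ t in 𝓝 (0:ℝ), s t ^ 2 = g t := by
  set w : ℂ := g 0 ^ (((2:ℕ):ℂ))⁻¹ with hwdef
  have hw : w ^ 2 = g 0 := Complex.cpow_nat_inv_pow (g 0) two_ne_zero
  have hm : g 0 * (g 0)⁻¹ ∈ Complex.slitPlane := by
    rw [mul_inv_cancel₀ hg0]
    exact Complex.one_mem_slitPlane
  refine ⟨fun t => w * Complex.exp (Complex.log (g t * (g 0)⁻¹) * (2:ℂ)⁻¹), ?_, ?_⟩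
  · have hq : AnalyticAt ℝ (fun t => g t * (g 0)⁻¹) 0 := hg.mul analyticAt_const
    have hl : AnalyticAt ℝ (fun t => Complex.log (g t * (g 0)⁻¹)) 0 :=
      AnalyticAt.comp_of_eq ((analyticAt_clog hm).restrictScalars (𝕜 := ℝ)) hq rfl
    have hl2 : AnalyticAt ℝ (fun t => Complex.log (g t * (g 0)⁻¹) * (2:ℂ)⁻¹) 0 :=
      hl.mul analyticAt_const
    have he : AnalyticAt ℝ (fun t => Complex.exp (Complex.log (g t * (g 0)⁻¹) * (2:ℂ)⁻¹)) 0 :=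
      AnalyticAt.comp_of_eq (g := Complex.exp)
        (f := fun t => Complex.log (g t * (g 0)⁻¹) * (2:ℂ)⁻¹)
        (analyticAt_cexp.restrictScalars (𝕜 := ℝ)) hl2 rfl
    exact analyticAt_const.mul he
  · filter_upwards [hg.continuousAt.eventually_ne hg0] with t ht
    have hv : g t * (g 0)⁻¹ ≠ 0 := mul_ne_zero ht (inv_ne_zero hg0)
    have h2 : Complex.exp (Complex.log (g t * (g 0)⁻¹) * (2:ℂ)⁻¹) ^ 2
        = g t * (g 0)⁻¹ := by
      rw [← Complex.exp_nat_mul]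
      have h3 : ((2:ℕ):ℂ) * (Complex.log (g t * (g 0)⁻¹) * (2:ℂ)⁻¹) =
          Complex.log (g t * (g 0)⁻¹) := by
        push_cast
        rw [mul_comm ((2:ℂ)) _, mul_assoc, inv_mul_cancel₀ (two_ne_zero), mul_one]
      rw [h3, Complex.exp_log hv]
    rw [mul_pow, hw, h2]
    field_simp

lemma central (q0 q1 : ℝ → ℂ)
    (h0 : AnalyticAt ℝ q0 0) (h1 : AnalyticAt ℝ q1 0)
    (k : ℕ) (hk : OrdAt (fun t => q1 t ^ 2 - 4 * q0 t) k) :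
    (∃ δ : ℝ, 0 < δ ∧ ∃ b c : ℝ → ℂ,
        AnalyticOnNhd ℝ b (Set.Ioo (-δ) δ) ∧ AnalyticOnNhd ℝ c (Set.Ioo (-δ) δ) ∧
        ∀ t ∈ Set.Ioo (-δ) δ, ∀ z : ℂ,
          z ^ 2 + q1 t * z + q0 t = (z + b t) * (z + c t)) ↔ Even k := by
  have hDan : AnalyticAt ℝ (fun t => q1 t ^ 2 - 4 * q0 t) 0 :=
    (h1.pow 2).sub (analyticAt_const.mul h0)
  constructor
  · rintro ⟨δ, hδ, b, c, hb, hc, hbc⟩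
    have h0mem : (0:ℝ) ∈ Set.Ioo (-δ) δ := ⟨by linarith, hδ⟩
    have hball : Set.Ioo (-δ) δ ∈ 𝓝 (0:ℝ) := Ioo_mem_nhds (by linarith) hδ
    have hd : AnalyticAt ℝ (fun t => b t - c t) 0 := (hb 0 h0mem).sub (hc 0 h0mem)
    apply hk.even_of_eventually_sq hDan hd
    filter_upwards [hball] with t ht
    have e0 := hbc t ht 0
    have e1 := hbc t ht 1
    linear_combination (q1 t + b t + c t) * e1 - (q1 t + b t + c t + 4) * e0
  · rintro ⟨m, hm⟩
    obtain ⟨g, hg, hg0, hfg⟩ := hk.exists_decomp hDan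
    obtain ⟨s, hs, hs2⟩ := exists_sqrt hg hg0
    set d : ℝ → ℂ := fun t => (t:ℂ) ^ m * s t with hddef
    have hofReal : ∀ x : ℝ, AnalyticAt ℝ (fun t : ℝ => (t:ℂ)) x := fun x =>
      Complex.ofRealCLM.analyticAt x
    have hEv : ∀ᶠ t in 𝓝 (0:ℝ),
        (AnalyticAt ℝ q0 t ∧ AnalyticAt ℝ q1 t ∧ AnalyticAt ℝ s t) ∧
          d t ^ 2 = q1 t ^ 2 - 4 * q0 t := by
      filter_upwards [h0.eventually_analyticAt, h1.eventually_analyticAt,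
        hs.eventually_analyticAt, hfg, hs2] with t ht0 ht1 hts hfgt hs2t
      refine ⟨⟨ht0, ht1, hts⟩, ?_⟩
      calc d t ^ 2 = (t:ℂ) ^ (m + m) * s t ^ 2 := by rw [hddef]; ring
        _ = (t:ℂ) ^ (m + m) * g t := by rw [hs2t]
        _ = (t:ℂ) ^ k * g t := by rw [← hm]
        _ = q1 t ^ 2 - 4 * q0 t := by
            rw [hfgt, Complex.real_smul]; push_cast; ring
    obtain ⟨ε, hε, hball⟩ := Metric.eventually_nhds_iff.mp hEv
    have hmem : ∀ x ∈ Set.Ioo (-ε) ε,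
        (AnalyticAt ℝ q0 x ∧ AnalyticAt ℝ q1 x ∧ AnalyticAt ℝ s x) ∧
          d x ^ 2 = q1 x ^ 2 - 4 * q0 x := by
      intro x hx
      exact hball (by rw [Real.dist_eq, sub_zero]; exact abs_lt.mpr ⟨hx.1, hx.2⟩)
    have hdan : ∀ x ∈ Set.Ioo (-ε) ε, AnalyticAt ℝ d x := by
      intro x hx
      exact ((hofReal x).pow m).mul (hmem x hx).1.2.2
    refine ⟨ε, hε, fun t => (q1 t + d t) * (2:ℂ)⁻¹, fun t => (q1 t - d t) * (2:ℂ)⁻¹,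
      fun x hx => (((hmem x hx).1.2.1.add (hdan x hx)).mul analyticAt_const),
      fun x hx => (((hmem x hx).1.2.1.sub (hdan x hx)).mul analyticAt_const),
      fun t ht z => ?_⟩
    have hd2 := (hmem t ht).2
    linear_combination (4:ℂ)⁻¹ * hd2

/-- Let `Q(t,z) = z² + q₁(t) z + q₀(t)` with `q₀, q₁` real-analytic near
`0 ∈ ℝ`, whose discriminant `D(t) = q₁(t)² - 4 q₀(t)` has finite order of vanishing
`k = ord(D)` at `0`.  Then (i) `Q` is completely reducible iff `k` is even, and
(ii) `Q` is irreducible in `K₀[z]` iff `k` is odd. -/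
theorem stmt_10 (q0 q1 : ℝ → ℂ)
    (h0 : AnalyticAt ℝ q0 0) (h1 : AnalyticAt ℝ q1 0)
    (k : ℕ) (hk : OrdAt (fun t => q1 t ^ 2 - 4 * q0 t) k) :
    ((∃ δ : ℝ, 0 < δ ∧ ∃ η₁ η₂ : ℝ → ℂ,
        AnalyticOnNhd ℝ η₁ (Set.Ioo (-δ) δ) ∧ AnalyticOnNhd ℝ η₂ (Set.Ioo (-δ) δ) ∧
        ∀ t ∈ Set.Ioo (-δ) δ, ∀ z : ℂ,
          z ^ 2 + q1 t * z + q0 t = (z - η₁ t) * (z - η₂ t)) ↔ Even k)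
    ∧
    ((¬ ∃ δ : ℝ, 0 < δ ∧ ∃ b c : ℝ → ℂ,
        AnalyticOnNhd ℝ b (Set.Ioo (-δ) δ) ∧ AnalyticOnNhd ℝ c (Set.Ioo (-δ) δ) ∧
        ∀ t ∈ Set.Ioo (-δ) δ, ∀ z : ℂ,
          z ^ 2 + q1 t * z + q0 t = (z + b t) * (z + c t)) ↔ Odd k) := by
  have hc := central q0 q1 h0 h1 k hk
  constructor
  · constructor
    · rintro ⟨δ, hδ, η₁, η₂, hη₁, hη₂, hfac⟩
      apply hc.mp
      exact ⟨δ, hδ, fun t => -η₁ t, fun t => -η₂ t,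
        fun x hx => (hη₁ x hx).neg, fun x hx => (hη₂ x hx).neg,
        fun t ht z => by rw [hfac t ht z]; ring⟩
    · intro hev
      obtain ⟨δ, hδ, b, c, hb, hc', hfac⟩ := hc.mpr hev
      exact ⟨δ, hδ, fun t => -b t, fun t => -c t,
        fun x hx => (hb x hx).neg, fun x hx => (hc' x hx).neg,
        fun t ht z => by rw [hfac t ht z]; ring⟩
  · rw [Nat.not_even_iff_odd.symm]
    exact not_congr hc
end

section
/- Let P(t,z) = zⁿ + p_{n−1}(t)z^{n−1} + ⋯ + p_0(t) with n ≥ 2, where each p_j : ℝ → ℂ is real-analytic and 1-periodic. Assume P is simple (no monic Q ∈ K[z] of degree ≥ 1 with Q² dividing P in K[z]) and locally completely reducible: for every s ∈ ℝ there exist δ > 0 and real-analytic functions λ₁, …, λₙ on (s−δ, s+δ) with P(t,z) = ∏_{j=1}^{n}(z − λ_j(t)) for |t−s| < δ. Then there exists an integer k ≥ 0 such that for every s ∈ ℝ and every such local factorization near s, the k-jets (λ_j(s), λ_j′(s), …, λ_j^{(k)}(s)) ∈ ℂ^{k+1}, j = 1, …, n, are pairwise distinct. -/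
open Set Filter Polynomial

attribute [local instance] Classical.propDecidable

noncomputable section

namespace Stmt15Aux

lemma eventually_zero_of_jets {f : ℝ → ℂ} {s : ℝ} (hf : AnalyticAt ℝ f s)
    (h : ∀ l, iteratedDeriv l f s = 0) : f =ᶠ[nhds s] 0 := by
  obtain ⟨q, r, hq⟩ := hf
  have key : ∀ m (y : ℝ), (q m fun _ => y) = 0 := by
    intro m y
    have h1 := hq.factorial_smul y m
    have h2 : iteratedFDeriv ℝ m f s (fun _ => y) = 0 := by
      have h3 := (iteratedFDeriv ℝ m f s).map_smul_univ (fun _ : Fin m => y) (fun _ => (1:ℝ))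
      have h4 : iteratedDeriv m f s = iteratedFDeriv ℝ m f s (fun _ => (1:ℝ)) :=
        iteratedDeriv_eq_iteratedFDeriv ..
      simp only [smul_eq_mul, mul_one] at h3
      rw [h3, ← h4, h m, smul_zero]
    rw [h2] at h1
    have h5 : ((Nat.factorial m : ℂ)) • (q m fun _ => y) = 0 := by
      rw [Nat.cast_smul_eq_nsmul]; exact h1
    rcases smul_eq_zero.mp h5 with h6 | h6
    · exact absurd h6 (by exact_mod_cast Nat.factorial_ne_zero m)
    · exact h6
  filter_upwards [EMetric.ball_mem_nhds s hq.r_pos] with x hx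
  have hx' : x - s ∈ Metric.eball (0:ℝ) r := by
    simpa [Metric.mem_eball, edist_dist, dist_eq_norm] using hx
  have hsum := hq.sum hx'
  simp only [add_sub_cancel] at hsum
  rw [hsum]
  simp [FormalMultilinearSeries.sum, key]


lemma eqOn_zero_or_eqOn_zero {U : Set ℝ} (hUo : IsOpen U) (hUc : IsPreconnected U)
    {f g : ℝ → ℂ} (hf : AnalyticOnNhd ℝ f U) (hg : AnalyticOnNhd ℝ g U)
    (h : ∀ t ∈ U, f t * g t = 0) : EqOn f 0 U ∨ EqOn g 0 U := by
  by_cases hfz : EqOn f 0 U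
  · exact Or.inl hfz
  right
  intro t ht
  rcases (hf t ht).eventually_eq_zero_or_eventually_ne_zero with hev | hev
  · exact absurd (hf.eqOn_zero_of_preconnected_of_eventuallyEq_zero hUc ht hev) hfz
  · have hU' : U ∈ nhds t := hUo.mem_nhds ht
    have hev2 : ∀ᶠ x in nhdsWithin t {t}ᶜ, g x = 0 := by
      filter_upwards [hev, nhdsWithin_le_nhds hU'] with x hx1 hx2
      rcases mul_eq_zero.mp (h x hx2) with h' | h'
      · exact absurd h' hx1
      · exact h'
    have ht1 : Tendsto g (nhdsWithin t {t}ᶜ) (nhds (g t)) :=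
      ((hg t ht).continuousAt.tendsto).mono_left nhdsWithin_le_nhds
    have ht2 : Tendsto g (nhdsWithin t {t}ᶜ) (nhds 0) :=
      Tendsto.congr' (Filter.EventuallyEq.symm hev2) tendsto_const_nhds
    exact tendsto_nhds_unique ht1 ht2

lemma analyticOnNhd_multiset_prod {U : Set ℝ} :
    ∀ (M : Multiset (ℝ → ℂ)), (∀ f ∈ M, AnalyticOnNhd ℝ f U) →
      AnalyticOnNhd ℝ (fun t => (M.map (fun f => f t)).prod) U := by
  intro M
  induction M using Multiset.induction with
  | empty => intro _ x hx; simpa using (analyticAt_const : AnalyticAt ℝ (fun _ : ℝ => (1:ℂ)) x)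
  | cons f M ih =>
    intro h x hx
    have h1 : AnalyticAt ℝ (fun t => f t * (M.map (fun f => f t)).prod) x :=
      ((h f (Multiset.mem_cons_self f M)) x hx).mul
        (ih (fun g hg => h g (Multiset.mem_cons_of_mem hg)) x hx)
    simpa using h1

lemma exists_eqOn_zero_of_prod {U : Set ℝ} (hUo : IsOpen U) (hUc : IsPreconnected U)
    (hUne : U.Nonempty) :
    ∀ (M : Multiset (ℝ → ℂ)), (∀ f ∈ M, AnalyticOnNhd ℝ f U) →
      (∀ t ∈ U, (M.map (fun f => f t)).prod = 0) → ∃ f ∈ M, EqOn f 0 U := by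
  intro M
  induction M using Multiset.induction with
  | empty =>
    intro _ h
    obtain ⟨t, ht⟩ := hUne
    simpa using h t ht
  | cons f M ih =>
    intro han h
    have hfa : AnalyticOnNhd ℝ f U := han f (Multiset.mem_cons_self f M)
    have hMa := analyticOnNhd_multiset_prod M (fun g hg => han g (Multiset.mem_cons_of_mem hg))
    rcases eqOn_zero_or_eqOn_zero hUo hUc hfa hMa (fun t ht => by simpa using h t ht) with h1 | h2
    · exact ⟨f, Multiset.mem_cons_self f M, h1⟩
    · obtain ⟨g, hg, hg0⟩ := ih (fun g hg => han g (Multiset.mem_cons_of_mem hg))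
        (fun t ht => h2 ht)
      exact ⟨g, Multiset.mem_cons_of_mem hg, hg0⟩

lemma multiset_eq_of_prod_eq {m₁ m₂ : Multiset ℂ}
    (h : ∀ z : ℂ, (m₁.map (fun a => z - a)).prod = (m₂.map (fun a => z - a)).prod) :
    m₁ = m₂ := by
  have hP : (m₁.map (fun a => X - C a)).prod = (m₂.map (fun a => X - C a)).prod := by
    apply Polynomial.funext
    intro z
    have := h z
    simpa [Polynomial.eval_multiset_prod, Multiset.map_map, Function.comp] using this
  calc m₁ = ((m₁.map (fun a => X - C a)).prod).roots := (roots_multiset_prod_X_sub_C m₁).symm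
    _ = ((m₂.map (fun a => X - C a)).prod).roots := by rw [hP]
    _ = m₂ := roots_multiset_prod_X_sub_C m₂


lemma rel_of_multiset_eq {U : Set ℝ} (hUo : IsOpen U) (hUc : IsPreconnected U)
    (hUne : U.Nonempty) :
    ∀ (M N : Multiset (ℝ → ℂ)), (∀ f ∈ M, AnalyticOnNhd ℝ f U) →
      (∀ f ∈ N, AnalyticOnNhd ℝ f U) →
      (∀ t ∈ U, M.map (fun f => f t) = N.map (fun f => f t)) →
      Multiset.Rel (fun f g => EqOn f g U) M N := by
  intro M
  induction M using Multiset.induction with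
  | empty =>
    intro N _ _ h
    obtain ⟨t, ht⟩ := hUne
    have : N.map (fun f => f t) = 0 := (h t ht).symm
    rw [Multiset.map_eq_zero] at this
    rw [this]
    exact Multiset.rel_zero_right.mpr rfl
  | cons f M ih =>
    intro N hM hN h
    -- find g ∈ N with EqOn f g U
    have hprod : ∀ t ∈ U, ((N.map (fun g => (fun u => f u - g u))).map (fun q => q t)).prod = 0 := by
      intro t ht
      have hmem : f t ∈ N.map (fun g => g t) := by
        rw [← h t ht]; simp
      obtain ⟨g, hg, hgt⟩ := Multiset.mem_map.mp hmem
      apply Multiset.prod_eq_zero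
      rw [Multiset.map_map]
      apply Multiset.mem_map.mpr
      exact ⟨g, hg, by simp [hgt]⟩
    have han : ∀ q ∈ N.map (fun g => (fun u => f u - g u)), AnalyticOnNhd ℝ q U := by
      intro q hq
      obtain ⟨g, hg, rfl⟩ := Multiset.mem_map.mp hq
      exact fun x hx => ((hM f (Multiset.mem_cons_self f M)) x hx).sub ((hN g hg) x hx)
    obtain ⟨q, hq, hq0⟩ := exists_eqOn_zero_of_prod hUo hUc hUne _ han hprod
    obtain ⟨g, hgN, rfl⟩ := Multiset.mem_map.mp hq
    have hfg : EqOn f g U := by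
      intro t ht
      have := hq0 ht
      simpa [sub_eq_zero] using this
    -- cancel
    have hN' : ∀ t ∈ U, M.map (fun f => f t) = (N.erase g).map (fun f => f t) := by
      intro t ht
      have h1 := h t ht
      have h2 : N = g ::ₘ N.erase g := (Multiset.cons_erase hgN).symm
      rw [h2, Multiset.map_cons, Multiset.map_cons, ← hfg ht] at h1
      exact (Multiset.cons_inj_right _).mp h1
    have hrel := ih (N.erase g) (fun q hq => hM q (Multiset.mem_cons_of_mem hq))
      (fun q hq => hN q (Multiset.mem_of_mem_erase hq)) hN'
    have : Multiset.Rel (fun f g => EqOn f g U) (f ::ₘ M) (g ::ₘ N.erase g) :=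
      Multiset.Rel.cons hfg hrel
    rwa [Multiset.cons_erase hgN] at this


lemma exists_bij_of_rel {ι : Type*} (S : ι → ι → Prop) :
    ∀ (s u : Finset ι), Multiset.Rel S s.val u.val →
      ∃ σ : ι → ι, Set.BijOn σ ↑s ↑u ∧ ∀ i ∈ s, S i (σ i) := by
  intro s
  induction s using Finset.induction with
  | empty =>
    intro u h
    rw [Finset.empty_val, Multiset.rel_zero_left] at h
    have : u = ∅ := Finset.val_eq_zero.mp h
    subst this
    exact ⟨id, by simp [Set.BijOn], by simp⟩
  | @insert a s ha ih =>
    intro u h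
    rw [Finset.insert_val_of_notMem ha, Multiset.rel_cons_left] at h
    obtain ⟨b, N', hSab, hrel, hN⟩ := h
    have hbu : b ∈ u := by
      rw [← Finset.mem_val, hN]; exact Multiset.mem_cons_self b N'
    have hN' : N' = (u.erase b).val := by
      have : (u.val).erase b = N' := by rw [hN]; exact Multiset.erase_cons_head b N'
      rw [← this, Finset.erase_val]
    rw [hN'] at hrel
    obtain ⟨σ', hbij, hS⟩ := ih (u.erase b) hrel
    refine ⟨Function.update σ' a b, ?_, ?_⟩
    · have heq : Set.EqOn (Function.update σ' a b) σ' ↑s := by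
        intro x hx
        have : x ≠ a := by rintro rfl; exact ha (by exact_mod_cast hx)
        simp [Function.update, this]
      have hbij2 : Set.BijOn (Function.update σ' a b) ↑s ↑(u.erase b) :=
        Set.BijOn.congr hbij heq.symm
      have hnotin : Function.update σ' a b a ∉ (↑(u.erase b) : Set ι) := by
        rw [Function.update_self]
        simp
      have hins := Set.BijOn.insert hbij2 hnotin
      rw [Function.update_self] at hins
      have hset : (insert b ↑(u.erase b) : Set ι) = ↑u := by
        rw [← Finset.coe_insert, Finset.insert_erase hbu]
      rw [Finset.coe_insert, ← hset]
      exact hins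
    · intro i hi
      rcases Finset.mem_insert.mp hi with rfl | hi'
      · simpa [Function.update_self] using hSab
      · have : i ≠ a := by rintro rfl; exact ha hi'
        rw [Function.update_of_ne this]
        exact hS i hi'

lemma exists_match {n : ℕ} {U : Set ℝ} (hUo : IsOpen U) (hUc : IsPreconnected U)
    (hUne : U.Nonempty) {f g : Fin n → ℝ → ℂ}
    (hf : ∀ i, AnalyticOnNhd ℝ (f i) U) (hg : ∀ i, AnalyticOnNhd ℝ (g i) U)
    (h : ∀ t ∈ U, ∀ z : ℂ, ∏ i, (z - f i t) = ∏ i, (z - g i t)) :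
    ∃ σ : Fin n → Fin n, Set.BijOn σ Set.univ Set.univ ∧
      ∀ i, Set.EqOn (g i) (f (σ i)) U := by
  have hpt : ∀ t ∈ U, (Finset.univ.val.map (fun i => g i t)) =
      (Finset.univ.val.map (fun i => f i t)) := by
    intro t ht
    apply multiset_eq_of_prod_eq
    intro z
    have h1 := (h t ht z).symm
    simpa [Finset.prod_eq_multiset_prod, Multiset.map_map, Function.comp_def] using h1
  have hrel : Multiset.Rel (fun q r => EqOn q r U)
      (Finset.univ.val.map (fun i => g i)) (Finset.univ.val.map (fun i => f i)) := by
    apply rel_of_multiset_eq hUo hUc hUne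
    · intro q hq; obtain ⟨i, _, rfl⟩ := Multiset.mem_map.mp hq; exact hg i
    · intro q hq; obtain ⟨i, _, rfl⟩ := Multiset.mem_map.mp hq; exact hf i
    · intro t ht
      have := hpt t ht
      simpa [Multiset.map_map, Function.comp_def] using this
  rw [Multiset.rel_map] at hrel
  obtain ⟨σ, hbij, hS⟩ := exists_bij_of_rel _ Finset.univ Finset.univ hrel
  refine ⟨σ, by simpa using hbij, fun i => hS i (Finset.mem_univ i)⟩


lemma eqOn_extend {U V : Set ℝ} (hUc : IsPreconnected U) (hVo : IsOpen V)
    (hVne : V.Nonempty) (hVU : V ⊆ U) {F G : ℝ → ℂ}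
    (hF : AnalyticOnNhd ℝ F U) (hG : AnalyticOnNhd ℝ G U) (h : EqOn F G V) :
    EqOn F G U := by
  obtain ⟨x, hx⟩ := hVne
  apply hF.eqOn_of_preconnected_of_eventuallyEq hG hUc (hVU hx)
  filter_upwards [hVo.mem_nhds hx] with y hy using h hy

lemma analyticOnNhd_iteratedDeriv {U : Set ℝ} {f : ℝ → ℂ} (hf : AnalyticOnNhd ℝ f U)
    (l : ℕ) : AnalyticOnNhd ℝ (iteratedDeriv l f) U := by
  rw [iteratedDeriv_eq_iterate]
  exact hf.iterated_deriv l

lemma itd_eventuallyEq {f g : ℝ → ℂ} {s : ℝ} (h : f =ᶠ[nhds s] g) (l : ℕ) :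
    iteratedDeriv l f =ᶠ[nhds s] iteratedDeriv l g := by
  induction l with
  | zero => simpa using h
  | succ m ih => rw [iteratedDeriv_succ, iteratedDeriv_succ]; exact ih.deriv

lemma itd_sub {U : Set ℝ} (hU : IsOpen U) {f g : ℝ → ℂ}
    (hf : AnalyticOnNhd ℝ f U) (hg : AnalyticOnNhd ℝ g U) (l : ℕ) :
    ∀ x ∈ U, iteratedDeriv l (fun t => f t - g t) x
      = iteratedDeriv l f x - iteratedDeriv l g x := by
  induction l with
  | zero => intro x _; simp
  | succ m ih =>
    intro x hx
    rw [iteratedDeriv_succ, iteratedDeriv_succ, iteratedDeriv_succ]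
    have hev : iteratedDeriv m (fun t => f t - g t) =ᶠ[nhds x]
        (fun t => iteratedDeriv m f t - iteratedDeriv m g t) := by
      filter_upwards [hU.mem_nhds hx] with y hy using ih y hy
    rw [hev.deriv_eq]
    apply deriv_sub
    · exact ((analyticOnNhd_iteratedDeriv hf m) x hx).differentiableAt
    · exact ((analyticOnNhd_iteratedDeriv hg m) x hx).differentiableAt

lemma itd_comp_add_const (f : ℝ → ℂ) (m : ℝ) (l : ℕ) (x : ℝ) :
    iteratedDeriv l (fun t => f (t + m)) x = iteratedDeriv l f (x + m) := by
  have := iteratedDeriv_comp_add_const l f m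
  exact congrFun this x


lemma coeff_prod_analytic {ι : Type*} {U : Set ℝ} (F : ι → ℝ → ℂ) :
    ∀ (s : Finset ι), (∀ l ∈ s, AnalyticOnNhd ℝ (F l) U) →
      ∀ (j : ℕ), AnalyticOnNhd ℝ (fun x => (∏ l ∈ s, (X - C (F l x))).coeff j) U := by
  intro s
  induction s using Finset.induction with
  | empty =>
    intro _ j x hx
    simp only [Finset.prod_empty, Polynomial.coeff_one]
    exact analyticAt_const
  | @insert a s ha ih =>
    intro h j
    have ih' := ih (fun l hl => h l (Finset.mem_insert_of_mem hl))
    have hFa : AnalyticOnNhd ℝ (F a) U := h a (Finset.mem_insert_self a s)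
    cases j with
    | zero =>
      have key : (fun x => (∏ l ∈ insert a s, (X - C (F l x))).coeff 0)
          = fun x => (0:ℂ) - F a x * (∏ l ∈ s, (X - C (F l x))).coeff 0 := by
        funext y
        rw [Finset.prod_insert ha, sub_mul, Polynomial.coeff_sub, Polynomial.coeff_C_mul,
          Polynomial.mul_coeff_zero, Polynomial.coeff_X_zero, zero_mul]
      rw [key]
      exact fun x hx => (analyticAt_const.sub ((hFa x hx).mul (ih' 0 x hx)))
    | succ m =>
      have key : (fun x => (∏ l ∈ insert a s, (X - C (F l x))).coeff (m+1))
          = fun x => (∏ l ∈ s, (X - C (F l x))).coeff m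
              - F a x * (∏ l ∈ s, (X - C (F l x))).coeff (m+1) := by
        funext y
        rw [Finset.prod_insert ha, sub_mul, Polynomial.coeff_sub, Polynomial.coeff_C_mul,
          Polynomial.coeff_X_mul]
      rw [key]
      exact fun x hx => ((ih' m x hx).sub ((hFa x hx).mul (ih' (m+1) x hx)))

lemma analyticAt_fract_comp {q : ℝ → ℂ}
    (hq : AnalyticOnNhd ℝ q (Ioo (-2 : ℝ) 4))
    (hper : ∀ x ∈ Ioo (-2:ℝ) 3, q (x + 1) = q x) :
    ∀ t : ℝ, AnalyticAt ℝ (fun u => q (Int.fract u)) t := by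
  intro t
  have hfr : ∀ u : ℝ, Int.fract u = u - (⌊u⌋ : ℝ) := fun u => rfl
  by_cases h0 : Int.fract t = 0
  · set m : ℝ := (⌊t⌋ : ℝ) with hm
    have htm : t = m := by
      have := hfr t; rw [h0] at this; linarith
    have hmem : Ioo (t - 2⁻¹) (t + 2⁻¹) ∈ nhds t :=
      Ioo_mem_nhds (by linarith) (by linarith)
    have hev : (fun u => q (Int.fract u)) =ᶠ[nhds t] (fun u => q (u - m + 1)) := by
      filter_upwards [hmem] with u hu
      obtain ⟨hu1, hu2⟩ := hu
      rcases le_or_gt m u with hum | hum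
      · have hfl : ⌊u⌋ = ⌊t⌋ := by
          rw [Int.floor_eq_iff]
          constructor
          · rw [← hm, ← htm]; linarith
          · push_cast; rw [← hm, ← htm]; linarith
        have hfru : Int.fract u = u - m := by rw [hfr, hfl, ← hm]
        rw [hfru, hper (u - m) ⟨by linarith, by linarith⟩]
      · have hfl : ⌊u⌋ = ⌊t⌋ - 1 := by
          rw [Int.floor_eq_iff]
          constructor
          · push_cast; rw [← hm, ← htm]; linarith
          · push_cast; rw [← hm, ← htm]; linarith
        have hfru : Int.fract u = u - m + 1 := by
          rw [hfr, hfl]; push_cast; rw [← hm]; ring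
        rw [hfru]
    have hin : AnalyticAt ℝ (fun u => q (u - m + 1)) t := by
      have h1 : AnalyticAt ℝ q (t - m + 1) := by
        apply hq
        constructor
        · rw [htm]; norm_num
        · rw [htm]; norm_num
      have h2 : AnalyticAt ℝ (fun u : ℝ => u - m + 1) t :=
        (analyticAt_id.sub analyticAt_const).add analyticAt_const
      have h3 := AnalyticAt.comp (f := fun u : ℝ => u - m + 1) h1 h2
      simpa [Function.comp_def] using h3
    exact hin.congr hev.symm
  · have h01 : 0 < Int.fract t := lt_of_le_of_ne (Int.fract_nonneg t) (Ne.symm h0)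
    have h1t : Int.fract t < 1 := Int.fract_lt_one t
    set m : ℝ := (⌊t⌋ : ℝ) with hm
    have hmem : Ioo m (m + 1) ∈ nhds t := by
      apply Ioo_mem_nhds
      · have := hfr t; nlinarith [h01]
      · have := hfr t; nlinarith [h1t]
    have hev : (fun u => q (Int.fract u)) =ᶠ[nhds t] (fun u => q (u - m)) := by
      filter_upwards [hmem] with u hu
      obtain ⟨hu1, hu2⟩ := hu
      have hfl : ⌊u⌋ = ⌊t⌋ := by
        rw [Int.floor_eq_iff]
        constructor
        · rw [← hm]; linarith
        · push_cast; rw [← hm]; linarith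
      rw [hfr, hfl, ← hm]
    have hin : AnalyticAt ℝ (fun u => q (u - m)) t := by
      have h1 : AnalyticAt ℝ q (t - m) := by
        apply hq
        constructor
        · have := hfr t; rw [← hm] at this; linarith
        · have := hfr t; rw [← hm] at this; linarith
      have h2 : AnalyticAt ℝ (fun u : ℝ => u - m) t := analyticAt_id.sub analyticAt_const
      have h3 := AnalyticAt.comp (f := fun u : ℝ => u - m) h1 h2
      simpa [Function.comp_def] using h3
    exact hin.congr hev.symm


variable {n : ℕ} (p : Fin n → ℝ → ℂ)

def FactOn (a b : ℝ) : Prop := ∃ lam : Fin n → ℝ → ℂ,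
  (∀ i, AnalyticOnNhd ℝ (lam i) (Ioo a b)) ∧
  ∀ t ∈ Ioo a b, ∀ z : ℂ, z ^ n + ∑ j, p j t * z ^ (j : ℕ) = ∏ i, (z - lam i t)

variable {p}

lemma FactOn.mono {a b a' b' : ℝ} (h : FactOn p a b) (ha : a ≤ a') (hb : b' ≤ b) :
    FactOn p a' b' := by
  obtain ⟨lam, h1, h2⟩ := h
  have hsub : Ioo a' b' ⊆ Ioo a b := Ioo_subset_Ioo ha hb
  exact ⟨lam, fun i x hx => h1 i x (hsub hx), fun t ht => h2 t (hsub ht)⟩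

lemma factOn_empty {a b : ℝ} (h : b ≤ a) : FactOn p a b := by
  refine ⟨fun _ _ => 0, fun i x hx => ?_, fun t ht => ?_⟩
  · exact absurd hx (by simp [Ioo_eq_empty_of_le h])
  · exact absurd ht (by simp [Ioo_eq_empty_of_le h])

lemma FactOn.glue {a b c d : ℝ} (h1 : FactOn p a b) (h2 : FactOn p c d)
    (hac : a ≤ c) (hcb : c < b) (hbd : b ≤ d) : FactOn p a d := by
  obtain ⟨lam, ha1, hf1⟩ := h1
  obtain ⟨lam', ha2, hf2⟩ := h2
  have hUo : IsOpen (Ioo c b) := isOpen_Ioo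
  have hUc : IsPreconnected (Ioo c b) := isPreconnected_Ioo
  have hUne : (Ioo c b).Nonempty := nonempty_Ioo.mpr hcb
  have hsub1 : Ioo c b ⊆ Ioo a b := Ioo_subset_Ioo hac le_rfl
  have hsub2 : Ioo c b ⊆ Ioo c d := Ioo_subset_Ioo le_rfl hbd
  obtain ⟨σ, hbij, hs⟩ := exists_match hUo hUc hUne
    (f := lam) (g := lam') (fun i x hx => ha1 i x (hsub1 hx))
    (fun i x hx => ha2 i x (hsub2 hx))
    (fun t ht z => ((hf1 t (hsub1 ht) z).symm.trans (hf2 t (hsub2 ht) z)))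
  have hσbij : Function.Bijective σ := by
    exact Set.bijOn_univ.mp hbij
  set e := (Equiv.ofBijective σ hσbij).symm with he
  have hσe : ∀ i, σ (e i) = i := fun i => (Equiv.ofBijective σ hσbij).apply_symm_apply i
  set μ : Fin n → ℝ → ℂ := fun i t => if t < b then lam i t else lam' (e i) t with hμ
  have hover : ∀ i, ∀ u ∈ Ioo c b, lam' (e i) u = lam i u := by
    intro i u hu
    have := hs (e i) hu
    rw [hσe i] at this
    exact this
  refine ⟨μ, ?_, ?_⟩
  · intro i x hx
    by_cases hxb : x < b
    · have hev : μ i =ᶠ[nhds x] lam i := by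
        filter_upwards [Iio_mem_nhds hxb] with u hu
        rw [mem_Iio] at hu
        simp only [hμ, if_pos hu]
      exact (ha1 i x ⟨hx.1, hxb⟩).congr hev.symm
    · have hxc : c < x := lt_of_lt_of_le hcb (le_of_not_gt hxb)
      have hev : μ i =ᶠ[nhds x] lam' (e i) := by
        filter_upwards [Ioo_mem_nhds hxc hx.2] with u hu
        by_cases hub : u < b
        · simp only [hμ, if_pos hub]
          exact (hover i u ⟨hu.1, hub⟩).symm
        · simp only [hμ, if_neg hub]
      exact (ha2 (e i) x ⟨hxc, hx.2⟩).congr hev.symm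
  · intro t ht z
    by_cases htb : t < b
    · have h1 := hf1 t ⟨ht.1, htb⟩ z
      rw [h1]
      apply Finset.prod_congr rfl
      intro i _
      simp only [hμ, if_pos htb]
    · have htc : c < t := lt_of_lt_of_le hcb (le_of_not_gt htb)
      have h1 := hf2 t ⟨htc, ht.2⟩ z
      rw [h1]
      have h2 : ∏ i, (z - lam' i t) = ∏ i, (z - lam' (e i) t) :=
        (Equiv.prod_comp e (fun j => z - lam' j t)).symm
      rw [h2]
      apply Finset.prod_congr rfl
      intro i _
      simp only [hμ, if_neg htb]

lemma factOn_all (hLCR : ∀ s : ℝ, ∃ δ : ℝ, 0 < δ ∧ FactOn p (s - δ) (s + δ)) :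
    ∀ x : ℝ, FactOn p (-4) x := by
  by_contra hcon
  push_neg at hcon
  obtain ⟨x₀, hx₀⟩ := hcon
  set B := {x : ℝ | ¬ FactOn p (-4) x} with hB
  have hBne : B.Nonempty := ⟨x₀, hx₀⟩
  have hBbdd : BddBelow B := by
    refine ⟨-4, fun x hx => ?_⟩
    by_contra hx4
    push_neg at hx4
    exact hx (factOn_empty hx4.le)
  set u := sInf B with hu
  obtain ⟨δ, hδ, hfac⟩ := hLCR u
  obtain ⟨x, hxB, hxu⟩ : ∃ x ∈ B, x < u + δ / 2 := by
    apply (csInf_lt_iff hBbdd hBne).mp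
    linarith
  have hux : u ≤ x := csInf_le hBbdd hxB
  apply hxB
  by_cases hcase : u - δ / 2 ≤ -4
  · exact hfac.mono (by linarith) (by linarith)
  · push_neg at hcase
    have hnotB : u - δ / 2 ∉ B := by
      intro hmem
      have := csInf_le hBbdd hmem
      rw [← hu] at this
      linarith
    have h1 : FactOn p (-4) (u - δ / 2) := not_not.mp hnotB
    have h2 : FactOn p (max (u - δ) (-4)) (u + δ) := hfac.mono (le_max_left _ _) le_rfl
    have h3 : FactOn p (-4) (u + δ) := by
      apply h1.glue h2 (le_max_right _ _) _ (by linarith)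
      apply max_lt (by linarith) hcase
    exact h3.mono le_rfl (by linarith)


lemma degenerate_case {n : ℕ} {p : Fin n → ℝ → ℂ}
    (hp_per : ∀ j, ∀ t : ℝ, p j (t + 1) = p j t)
    (Λ : Fin n → ℝ → ℂ)
    (hΛa : ∀ i, AnalyticOnNhd ℝ (Λ i) (Ioo (-2:ℝ) 4))
    (hΛf : ∀ t ∈ Ioo (-2:ℝ) 4, ∀ z : ℂ,
      z ^ n + ∑ j, p j t * z ^ (j:ℕ) = ∏ i, (z - Λ i t))
    {a₀ b₀ : Fin n} (hab : a₀ ≠ b₀) (hrel0 : EqOn (Λ a₀) (Λ b₀) (Ioo (-2:ℝ) 4)) :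
    ∃ d : ℕ, 1 ≤ d ∧ ∃ qc : Fin d → ℝ → ℂ, ∃ r : Fin (n + 1) → ℝ → ℂ,
      (∀ j, ∀ t : ℝ, AnalyticAt ℝ (qc j) t) ∧ (∀ j, ∀ t : ℝ, qc j (t + 1) = qc j t) ∧
      (∀ j, ∀ t : ℝ, AnalyticAt ℝ (r j) t) ∧ (∀ j, ∀ t : ℝ, r j (t + 1) = r j t) ∧
      ∀ (t : ℝ) (z : ℂ),
        z ^ n + ∑ j, p j t * z ^ (j : ℕ) =
          (z ^ d + ∑ j, qc j t * z ^ (j : ℕ)) ^ 2 * (∑ j, r j t * z ^ (j : ℕ)) := by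
  set I : Set ℝ := Ioo (-2:ℝ) 4 with hI
  set U₁ : Set ℝ := Ioo (-2:ℝ) 3 with hU₁
  have hU₁I : U₁ ⊆ I := Ioo_subset_Ioo le_rfl (by norm_num)
  have hIc : IsPreconnected I := isPreconnected_Ioo
  have hU₁o : IsOpen U₁ := isOpen_Ioo
  have hU₁ne : U₁.Nonempty := nonempty_Ioo.mpr (by norm_num)
  -- monodromy
  have hshift_mem : ∀ t ∈ U₁, t + 1 ∈ I := by
    rintro t ⟨h1, h2⟩; exact ⟨by linarith, by linarith⟩
  obtain ⟨σ, hσbijOn, hσ⟩ := exists_match (n := n) hU₁o isPreconnected_Ioo hU₁ne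
    (f := Λ) (g := fun i t => Λ i (t + 1))
    (fun i x hx => hΛa i x (hU₁I hx))
    (fun i x hx => by
      have h1 : AnalyticAt ℝ (Λ i) (x + 1) := hΛa i (x+1) (hshift_mem x hx)
      have h2 : AnalyticAt ℝ (fun u : ℝ => u + 1) x := analyticAt_id.add analyticAt_const
      have h3 := AnalyticAt.comp (f := fun u : ℝ => u + 1) h1 h2
      simpa [Function.comp_def] using h3)
    (fun t ht z => by
      have h1 := hΛf t (hU₁I ht) z
      have h2 := hΛf (t+1) (hshift_mem t ht) z
      have h3 : ∀ j : Fin n, p j (t+1) = p j t := fun j => hp_per j t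
      rw [← h1]
      rw [← h2]
      congr 1
      apply Finset.sum_congr rfl
      intro j _
      rw [h3 j])
  have hσbij : Function.Bijective σ := Set.bijOn_univ.mp hσbijOn
  have hσshift : ∀ i, ∀ t ∈ U₁, Λ i (t + 1) = Λ (σ i) t := fun i t ht => hσ i ht
  -- R relation and σ respects it
  set R : Fin n → Fin n → Prop := fun a b => EqOn (Λ a) (Λ b) I with hR
  have hRrefl : ∀ a, R a a := fun a t _ => rfl
  have hRsymm : ∀ {a b}, R a b → R b a := fun h t ht => (h ht).symm
  have hRtrans : ∀ {a b c'}, R a b → R b c' → R a c' := fun h1 h2 t ht => (h1 ht).trans (h2 ht)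
  have hrelσ : ∀ a b, R a b → R (σ a) (σ b) := by
    intro a b hab'
    apply eqOn_extend hIc hU₁o hU₁ne hU₁I (hΛa (σ a)) (hΛa (σ b))
    intro t ht
    rw [← hσshift a t ht, ← hσshift b t ht]
    exact hab' (hshift_mem t ht)
  have hrelσ' : ∀ a b, R (σ a) (σ b) → R a b := by
    intro a b hab'
    have hV : Ioo (-1:ℝ) 4 ⊆ I := Ioo_subset_Ioo (by norm_num) le_rfl
    apply eqOn_extend hIc isOpen_Ioo (nonempty_Ioo.mpr (by norm_num)) hV (hΛa a) (hΛa b)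
    intro t ht
    have ht1 : t - 1 ∈ U₁ := ⟨by linarith [ht.1], by linarith [ht.2]⟩
    have e1 : Λ a t = Λ (σ a) (t - 1) := by
      have := hσshift a (t-1) ht1; rw [sub_add_cancel] at this; exact this
    have e2 : Λ b t = Λ (σ b) (t - 1) := by
      have := hσshift b (t-1) ht1; rw [sub_add_cancel] at this; exact this
    rw [e1, e2]
    exact hab' (hU₁I ht1)
  -- class representatives
  have hfilne : ∀ a : Fin n, (Finset.univ.filter (fun b => R a b)).Nonempty :=
    fun a => ⟨a, Finset.mem_filter.mpr ⟨Finset.mem_univ a, hRrefl a⟩⟩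
  set c : Fin n → Fin n := fun a => (Finset.univ.filter (fun b => R a b)).min' (hfilne a) with hc
  have hc_rel : ∀ a, R a (c a) := by
    intro a
    have := Finset.min'_mem (Finset.univ.filter (fun b => R a b)) (hfilne a)
    exact (Finset.mem_filter.mp this).2
  have hc_eq : ∀ a b, R a b → c a = c b := by
    intro a b hab'
    have hfil : Finset.univ.filter (fun x => R a x) = Finset.univ.filter (fun x => R b x) := by
      apply Finset.filter_congr
      intro x _
      constructor
      · intro h; exact hRtrans (hRsymm hab') h
      · intro h; exact hRtrans hab' h
    simp only [hc]
    congr 1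
  have hc_idem : ∀ a, c (c a) = c a := fun a => (hc_eq a (c a) (hc_rel a)).symm
  have hcR : ∀ a b, c a = c b → R a b := by
    intro a b h
    have h1 := hc_rel a
    have h2 := hc_rel b
    rw [h] at h1
    exact hRtrans h1 (hRsymm h2)
  -- the finset A of representatives of classes of size ≥ 2
  set A : Finset (Fin n) :=
    Finset.univ.filter (fun j => c j = j ∧ ∃ l, l ≠ j ∧ c l = j) with hA
  have hA_mem : ∀ j, j ∈ A ↔ (c j = j ∧ ∃ l, l ≠ j ∧ c l = j) := by
    intro j; simp [hA]
  have hA_ne : A.Nonempty := by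
    refine ⟨c a₀, (hA_mem _).mpr ⟨hc_idem a₀, ?_⟩⟩
    by_cases h : a₀ = c a₀
    · refine ⟨b₀, ?_, ?_⟩
      · rw [← h]; exact fun hb => hab (hb.symm)
      · rw [← hc_eq a₀ b₀ hrel0, ← h]
    · exact ⟨a₀, h, rfl⟩
  set d := A.card with hd_def
  have hd : 1 ≤ d := Finset.card_pos.mpr hA_ne
  -- second element of each class
  set μ : Fin n → Fin n := fun j =>
    if h : (Finset.univ.filter (fun l => l ≠ j ∧ c l = j)).Nonempty
    then (Finset.univ.filter (fun l => l ≠ j ∧ c l = j)).min' h else j with hμdef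
  have hμ : ∀ j ∈ A, μ j ≠ j ∧ c (μ j) = j := by
    intro j hj
    obtain ⟨hcj, l, hl1, hl2⟩ := (hA_mem j).mp hj
    have hne : (Finset.univ.filter (fun l => l ≠ j ∧ c l = j)).Nonempty :=
      ⟨l, Finset.mem_filter.mpr ⟨Finset.mem_univ l, hl1, hl2⟩⟩
    have hmem := Finset.min'_mem _ hne
    simp only [hμdef, dif_pos hne]
    exact (Finset.mem_filter.mp hmem).2
  -- the induced permutation on A
  set τ : Fin n → Fin n := fun l => c (σ l) with hτdef
  have hτA : ∀ j ∈ A, τ j ∈ A := by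
    intro j hj
    obtain ⟨hcj, l₀, hl1, hl2⟩ := (hA_mem j).mp hj
    have hRl0j : R l₀ j := by
      have := hc_rel l₀; rw [hl2] at this; exact this
    have hceq : c (σ l₀) = c (σ j) := hc_eq _ _ (hrelσ _ _ hRl0j)
    have hσne : σ l₀ ≠ σ j := fun h => hl1 (hσbij.injective h)
    refine (hA_mem _).mpr ⟨hc_idem _, ?_⟩
    by_cases hcase : σ l₀ = τ j
    · refine ⟨σ j, ?_, rfl⟩
      rw [← hcase]; exact fun h => hσne h.symm
    · exact ⟨σ l₀, hcase, by rw [hceq]⟩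
  have hτinj : Set.InjOn τ ↑A := by
    intro j hj j' hj' heq
    have hR1 : R (σ j) (σ j') := hcR _ _ heq
    have hR2 : R j j' := hrelσ' _ _ hR1
    have h1 := ((hA_mem j).mp (by exact_mod_cast hj)).1
    have h2 := ((hA_mem j').mp (by exact_mod_cast hj')).1
    rw [← h1, ← h2]
    exact hc_eq _ _ hR2
  have hτimage : A.image τ = A := by
    apply Finset.eq_of_subset_of_card_le
    · intro x hx
      obtain ⟨j, hj, rfl⟩ := Finset.mem_image.mp hx
      exact hτA j hj
    · rw [Finset.card_image_of_injOn hτinj]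
  have hτsurj : Set.SurjOn τ ↑A ↑A := by
    intro x hx
    rw [← Finset.coe_image, hτimage]
    exact hx
  -- polynomials
  set QP : ℝ → Polynomial ℂ := fun x => ∏ l ∈ A, (X - C (Λ l x)) with hQPdef
  have hQmonic : ∀ x, (QP x).Monic :=
    fun x => monic_prod_of_monic _ _ (fun l _ => monic_X_sub_C _)
  have hQdeg : ∀ x, (QP x).natDegree = d := by
    intro x
    rw [hQPdef]
    rw [Polynomial.natDegree_prod _ _ (fun l _ => X_sub_C_ne_zero _)]
    simp [natDegree_X_sub_C, hd_def]
  have hΛc : ∀ l, ∀ x ∈ I, Λ l x = Λ (c l) x := fun l x hx => hc_rel l hx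
  have hQper : ∀ t ∈ U₁, QP (t + 1) = QP t := by
    intro t ht
    have htI : t ∈ I := hU₁I ht
    have step1 : QP (t+1) = ∏ l ∈ A, (X - C (Λ (τ l) t)) := by
      apply Finset.prod_congr rfl
      intro l _
      rw [hσshift l t ht, hΛc (σ l) t htI]
    rw [step1]
    apply Finset.prod_nbij τ (fun a ha => hτA a ha) hτinj hτsurj
    intro a _
    rfl
  -- the doubled set D
  set D : Finset (Fin n) := A ∪ A.image μ with hDdef
  have hμinjA : Set.InjOn μ ↑A := by
    intro j hj j' hj' heq
    have h1 := (hμ j (by exact_mod_cast hj)).2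
    have h2 := (hμ j' (by exact_mod_cast hj')).2
    rw [← h1, ← h2, heq]
  have hDdisj : Disjoint A (A.image μ) := by
    rw [Finset.disjoint_left]
    intro x hxA hxim
    obtain ⟨j, hj, hx⟩ := Finset.mem_image.mp hxim
    have h1 : c x = j := by rw [← hx]; exact (hμ j hj).2
    have h2 : c x = x := ((hA_mem x).mp hxA).1
    have hxj : x = j := by rw [← h1, h2]
    exact (hμ j hj).1 (hx.trans hxj)
  have hDQ : ∀ x ∈ I, (∏ l ∈ D, (X - C (Λ l x))) = QP x ^ 2 := by
    intro x hx
    rw [hDdef, Finset.prod_union hDdisj, Finset.prod_image (fun a ha b hb h => hμinjA ha hb h)]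
    have : ∏ j ∈ A, (X - C (Λ (μ j) x)) = QP x := by
      apply Finset.prod_congr rfl
      intro j hj
      rw [hΛc (μ j) x hx, (hμ j hj).2]
    rw [this, sq]
  have hDsub : D ⊆ Finset.univ := Finset.subset_univ D
  set RP : ℝ → Polynomial ℂ := fun x => ∏ l ∈ Finset.univ \ D, (X - C (Λ l x)) with hRPdef
  have hTP : ∀ x : ℝ, ∏ l, (X - C (Λ l x)) = RP x * ∏ l ∈ D, (X - C (Λ l x)) :=
    fun x => (Finset.prod_sdiff hDsub).symm
  have hRdeg : ∀ x, (RP x).natDegree < n + 1 := by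
    intro x
    rw [hRPdef]
    rw [Polynomial.natDegree_prod _ _ (fun l _ => X_sub_C_ne_zero _)]
    simp only [natDegree_X_sub_C]
    calc ∑ _l ∈ Finset.univ \ D, 1 = (Finset.univ \ D).card := by
          rw [Finset.sum_const, smul_eq_mul, mul_one]
      _ ≤ Finset.univ.card := Finset.card_le_card (Finset.sdiff_subset)
      _ = n := by simp
      _ < n + 1 := Nat.lt_succ_self n
  have hTper : ∀ t ∈ U₁, (∏ l, (X - C (Λ l (t+1)))) = ∏ l, (X - C (Λ l t)) := by
    intro t ht
    have step1 : (∏ l, (X - C (Λ l (t+1)))) = ∏ l, (X - C (Λ (σ l) t)) := by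
      apply Finset.prod_congr rfl
      intro l _
      rw [hσshift l t ht]
    rw [step1]
    exact hσbij.prod_comp (fun l => X - C (Λ l t))
  have hRper : ∀ t ∈ U₁, RP (t + 1) = RP t := by
    intro t ht
    have htI : t ∈ I := hU₁I ht
    have ht1I : t + 1 ∈ I := hshift_mem t ht
    have h1 : RP (t+1) * (∏ l ∈ D, (X - C (Λ l (t+1)))) = RP t * ∏ l ∈ D, (X - C (Λ l t)) := by
      rw [← hTP, ← hTP]
      exact hTper t ht
    rw [hDQ _ ht1I, hDQ _ htI, hQper t ht] at h1
    have hne : QP t ^ 2 ≠ 0 := pow_ne_zero _ (hQmonic t).ne_zero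
    exact mul_right_cancel₀ hne h1
  -- coefficients
  set qcI : ℕ → ℝ → ℂ := fun j x => (QP x).coeff j with hqcIdef
  set rI : ℕ → ℝ → ℂ := fun j x => (RP x).coeff j with hrIdef
  have hqcIan : ∀ j, AnalyticOnNhd ℝ (qcI j) I :=
    fun j => coeff_prod_analytic Λ A (fun l _ => hΛa l) j
  have hrIan : ∀ j, AnalyticOnNhd ℝ (rI j) I :=
    fun j => coeff_prod_analytic Λ (Finset.univ \ D) (fun l _ => hΛa l) j
  have hqcIper : ∀ j, ∀ x ∈ U₁, qcI j (x + 1) = qcI j x := by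
    intro j x hx
    simp only [hqcIdef]
    rw [hQper x hx]
  have hrIper : ∀ j, ∀ x ∈ U₁, rI j (x + 1) = rI j x := by
    intro j x hx
    simp only [hrIdef]
    rw [hRper x hx]
  refine ⟨d, hd, fun j t => qcI j (Int.fract t), fun j t => rI j (Int.fract t),
    ?_, ?_, ?_, ?_, ?_⟩
  · intro j t
    exact analyticAt_fract_comp (hqcIan j) (hqcIper j) t
  · intro j t
    simp [Int.fract_add_one]
  · intro j t
    exact analyticAt_fract_comp (hrIan j) (hrIper j) t
  · intro j t
    simp [Int.fract_add_one]
  · intro t z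
    set x := Int.fract t with hxdef
    have hxI : x ∈ I := by
      constructor
      · have := Int.fract_nonneg t; linarith
      · have := Int.fract_lt_one t; linarith
    have hp_shift : ∀ j : Fin n, p j t = p j x := by
      intro j
      have hper : Function.Periodic (p j) 1 := hp_per j
      have h1 := hper.sub_int_mul_eq (x := t) ⌊t⌋
      rw [mul_one] at h1
      rw [hxdef]
      rw [Int.fract]
      exact h1.symm
    have hLHS : z ^ n + ∑ j, p j t * z ^ (j:ℕ) = ∏ i, (z - Λ i x) := by
      rw [show (∑ j, p j t * z ^ (j:ℕ)) = ∑ j, p j x * z ^ (j:ℕ) from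
        Finset.sum_congr rfl (fun j _ => by rw [hp_shift j])]
      exact hΛf x hxI z
    rw [hLHS]
    -- express as polynomial evals
    have heval : ∏ i, (z - Λ i x) = eval z (RP x) * eval z (QP x) ^ 2 := by
      have h1 : ∏ i, (z - Λ i x) = eval z (∏ l, (X - C (Λ l x))) := by
        rw [eval_prod]
        apply Finset.prod_congr rfl
        intro l _
        simp
      rw [h1, hTP x, eval_mul, hDQ x hxI, eval_pow]
    rw [heval]
    have hQeval : eval z (QP x) = z ^ d + ∑ j : Fin d, qcI j x * z ^ (j:ℕ) := by
      have h1 : (QP x).natDegree < d + 1 := by rw [hQdeg x]; exact Nat.lt_succ_self d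
      rw [eval_eq_sum_range' h1 z, Finset.sum_range_succ]
      have hlead : (QP x).coeff d = 1 := by
        have := (hQmonic x).coeff_natDegree
        rwa [hQdeg x] at this
      rw [hlead, one_mul]
      rw [add_comm]
      congr 1
      rw [← Fin.sum_univ_eq_sum_range (fun i => (QP x).coeff i * z ^ i) d]
    have hReval : eval z (RP x) = ∑ j : Fin (n+1), rI j x * z ^ (j:ℕ) := by
      rw [eval_eq_sum_range' (hRdeg x) z]
      rw [← Fin.sum_univ_eq_sum_range (fun i => (RP x).coeff i * z ^ i) (n+1)]
    rw [hQeval, hReval]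
    ring


end Stmt15Aux


open Stmt15Aux

/-- Let `P(t,z) = zⁿ + ∑ p_j(t) z^j`, `n ≥ 2`, have coefficients
real-analytic and 1-periodic on `ℝ`, and assume `P` is simple (no monic `Q ∈ K[z]` of
degree `≥ 1` with `Q² ∣ P` in `K[z]`) and locally completely reducible.  Then there is a
`k ≥ 0` such that for every `s ∈ ℝ` and every local analytic factorization
`P(t,z) = ∏ (z - λ_j(t))` on `(s-δ, s+δ)`, the `k`-jets
`(λ_j(s), λ_j'(s), …, λ_j^{(k)}(s))`, `j = 1, …, n`, are pairwise distinct. -/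
theorem stmt_15 (n : ℕ) (hn : 2 ≤ n) (p : Fin n → ℝ → ℂ)
    (hp_an : ∀ j, ∀ t : ℝ, AnalyticAt ℝ (p j) t)
    (hp_per : ∀ j, ∀ t : ℝ, p j (t + 1) = p j t)
    (hsimple : ¬ ∃ d : ℕ, 1 ≤ d ∧ ∃ qc : Fin d → ℝ → ℂ, ∃ r : Fin (n + 1) → ℝ → ℂ,
      (∀ j, ∀ t : ℝ, AnalyticAt ℝ (qc j) t) ∧ (∀ j, ∀ t : ℝ, qc j (t + 1) = qc j t) ∧
      (∀ j, ∀ t : ℝ, AnalyticAt ℝ (r j) t) ∧ (∀ j, ∀ t : ℝ, r j (t + 1) = r j t) ∧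
      ∀ (t : ℝ) (z : ℂ),
        z ^ n + ∑ j, p j t * z ^ (j : ℕ) =
          (z ^ d + ∑ j, qc j t * z ^ (j : ℕ)) ^ 2 * (∑ j, r j t * z ^ (j : ℕ)))
    (hLCR : ∀ s : ℝ, ∃ δ : ℝ, 0 < δ ∧ ∃ lam : Fin n → ℝ → ℂ,
      (∀ i, AnalyticOnNhd ℝ (lam i) (Set.Ioo (s - δ) (s + δ))) ∧
      ∀ t ∈ Set.Ioo (s - δ) (s + δ), ∀ z : ℂ,
        z ^ n + ∑ j, p j t * z ^ (j : ℕ) = ∏ i, (z - lam i t)) :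
    ∃ k : ℕ, ∀ s : ℝ, ∀ δ : ℝ, 0 < δ → ∀ lam : Fin n → ℝ → ℂ,
      (∀ i, AnalyticOnNhd ℝ (lam i) (Set.Ioo (s - δ) (s + δ))) →
      (∀ t ∈ Set.Ioo (s - δ) (s + δ), ∀ z : ℂ,
        z ^ n + ∑ j, p j t * z ^ (j : ℕ) = ∏ i, (z - lam i t)) →
      ∀ i j : Fin n, i ≠ j →
        (fun l : Fin (k + 1) => iteratedDeriv (l : ℕ) (lam i) s)
          ≠ (fun l : Fin (k + 1) => iteratedDeriv (l : ℕ) (lam j) s) := by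
  classical
  set I : Set ℝ := Ioo (-2:ℝ) 4 with hIdef
  have hIc : IsPreconnected I := isPreconnected_Ioo
  -- global factorization on I
  have hLCR' : ∀ s : ℝ, ∃ δ : ℝ, 0 < δ ∧ FactOn p (s - δ) (s + δ) := by
    intro s
    obtain ⟨δ, hδ, lam, h1, h2⟩ := hLCR s
    exact ⟨δ, hδ, lam, h1, h2⟩
  obtain ⟨Λ, hΛa, hΛf⟩ : FactOn p (-2) 4 :=
    (factOn_all hLCR' 5).mono (by norm_num) (by norm_num)
  -- no two root branches globally equal
  have hnodeg : ∀ a b : Fin n, a ≠ b → ¬ EqOn (Λ a) (Λ b) I := by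
    intro a b hab hcon
    exact hsimple (degenerate_case hp_per Λ hΛa hΛf hab hcon)
  -- pointwise jet separation
  have hsep : ∀ a b : Fin n, a ≠ b → ∀ x ∈ Icc (0:ℝ) 1,
      ∃ l, iteratedDeriv l (Λ a) x ≠ iteratedDeriv l (Λ b) x := by
    intro a b hab x hx
    by_contra hcon
    push_neg at hcon
    have hxI : x ∈ I := ⟨by linarith [hx.1], by linarith [hx.2]⟩
    have h0 : ∀ l, iteratedDeriv l (fun t => Λ a t - Λ b t) x = 0 := by
      intro l
      rw [itd_sub isOpen_Ioo (hΛa a) (hΛa b) l x hxI, hcon l, sub_self]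
    have hev := eventually_zero_of_jets ((hΛa a x hxI).sub (hΛa b x hxI)) h0
    have hzero : EqOn (fun t => Λ a t - Λ b t) 0 I :=
      AnalyticOnNhd.eqOn_zero_of_preconnected_of_eventuallyEq_zero
        (fun y hy => (hΛa a y hy).sub (hΛa b y hy)) hIc hxI hev
    apply hnodeg a b hab
    intro t ht
    have := hzero ht
    simpa [sub_eq_zero] using this
  -- uniform bound per pair
  have hK : ∀ a b : Fin n, a ≠ b → ∃ k : ℕ, ∀ x ∈ Icc (0:ℝ) 1,
      ∃ l ≤ k, iteratedDeriv l (Λ a) x ≠ iteratedDeriv l (Λ b) x := by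
    intro a b hab
    set W : ℕ → Set ℝ := fun l =>
      {x | x ∈ I ∧ iteratedDeriv l (Λ a) x ≠ iteratedDeriv l (Λ b) x} with hWdef
    have hWopen : ∀ l, IsOpen (W l) := by
      intro l
      rw [isOpen_iff_mem_nhds]
      rintro x ⟨hxI, hne⟩
      have hfa : ContinuousAt (iteratedDeriv l (Λ a)) x :=
        ((analyticOnNhd_iteratedDeriv (hΛa a) l) x hxI).continuousAt
      have hfb : ContinuousAt (iteratedDeriv l (Λ b)) x :=
        ((analyticOnNhd_iteratedDeriv (hΛa b) l) x hxI).continuousAt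
      have hsub : ContinuousAt
          (fun y => iteratedDeriv l (Λ a) y - iteratedDeriv l (Λ b) y) x := hfa.sub hfb
      have hne' : iteratedDeriv l (Λ a) x - iteratedDeriv l (Λ b) x ≠ 0 :=
        sub_ne_zero.mpr hne
      filter_upwards [hsub.eventually_ne hne', isOpen_Ioo.mem_nhds hxI] with y h1 h2
      exact ⟨h2, sub_ne_zero.mp h1⟩
    have hcover : Icc (0:ℝ) 1 ⊆ ⋃ l, W l := by
      intro x hx
      obtain ⟨l, hl⟩ := hsep a b hab x hx
      exact mem_iUnion.mpr ⟨l, ⟨⟨by linarith [hx.1], by linarith [hx.2]⟩, hl⟩⟩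
    obtain ⟨F, hF⟩ := isCompact_Icc.elim_finite_subcover W hWopen hcover
    refine ⟨F.sup id, ?_⟩
    intro x hx
    have := hF hx
    simp only [mem_iUnion] at this
    obtain ⟨l, hlF, hxl⟩ := this
    exact ⟨l, Finset.le_sup (f := id) hlF, hxl.2⟩
  -- a single k
  have hK' : ∀ ab : Fin n × Fin n, ∃ k : ℕ, ab.1 ≠ ab.2 → ∀ x ∈ Icc (0:ℝ) 1,
      ∃ l ≤ k, iteratedDeriv l (Λ ab.1) x ≠ iteratedDeriv l (Λ ab.2) x := by
    intro ab
    by_cases h : ab.1 = ab.2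
    · exact ⟨0, fun h' => absurd h h'⟩
    · obtain ⟨k, hk⟩ := hK ab.1 ab.2 h
      exact ⟨k, fun _ => hk⟩
  choose KK hKK using hK'
  set k : ℕ := Finset.univ.sup KK with hkdef
  have hk : ∀ a b : Fin n, a ≠ b → ∀ x ∈ Icc (0:ℝ) 1,
      ∃ l ≤ k, iteratedDeriv l (Λ a) x ≠ iteratedDeriv l (Λ b) x := by
    intro a b hab x hx
    obtain ⟨l, hl, hne⟩ := hKK (a, b) hab x hx
    refine ⟨l, le_trans hl ?_, hne⟩
    exact Finset.le_sup (Finset.mem_univ (a, b))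
  refine ⟨k, ?_⟩
  intro s δ hδ lam han hfac i j hij heq
  -- transfer to [0,1)
  set m : ℤ := ⌊s⌋ with hmdef
  set x : ℝ := Int.fract s with hxdef
  have hxm : x = s - (m:ℝ) := rfl
  have hx01 : 0 ≤ x ∧ x < 1 := ⟨Int.fract_nonneg s, Int.fract_lt_one s⟩
  set lam' : Fin n → ℝ → ℂ := fun i' u => lam i' (u + (m:ℝ)) with hlamdef
  have hmem' : ∀ u ∈ Ioo (x - δ) (x + δ), u + (m:ℝ) ∈ Ioo (s - δ) (s + δ) := by
    rintro u ⟨h1, h2⟩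
    constructor
    · have := hxm; linarith [h1]
    · have := hxm; linarith [h2]
  have hana' : ∀ i', AnalyticOnNhd ℝ (lam' i') (Ioo (x - δ) (x + δ)) := by
    intro i' u hu
    have h1 : AnalyticAt ℝ (lam i') (u + (m:ℝ)) := han i' _ (hmem' u hu)
    have h2 : AnalyticAt ℝ (fun v : ℝ => v + (m:ℝ)) u := analyticAt_id.add analyticAt_const
    have h3 := AnalyticAt.comp (f := fun v : ℝ => v + (m:ℝ)) h1 h2
    simpa [Function.comp_def, hlamdef] using h3
  have hfac' : ∀ u ∈ Ioo (x - δ) (x + δ), ∀ z : ℂ,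
      z ^ n + ∑ jj, p jj u * z ^ (jj : ℕ) = ∏ i', (z - lam' i' u) := by
    intro u hu z
    have hper : ∀ jj : Fin n, p jj (u + (m:ℝ)) = p jj u := by
      intro jj
      have hpp : Function.Periodic (p jj) 1 := hp_per jj
      have := (hpp.int_mul m) u
      simpa using this
    have h1 := hfac (u + (m:ℝ)) (hmem' u hu) z
    rw [show (∑ jj, p jj u * z ^ (jj:ℕ)) = ∑ jj, p jj (u + (m:ℝ)) * z ^ (jj:ℕ) from
      Finset.sum_congr rfl (fun jj _ => by rw [hper jj])]
    exact h1
  -- compare with Λ near x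
  set U0 : Set ℝ := Ioo (max (x - δ) (-2)) (min (x + δ) 4) with hU0def
  have hxU0 : x ∈ U0 := by
    constructor
    · apply max_lt (by linarith) (by linarith [hx01.1])
    · apply lt_min (by linarith) (by linarith [hx01.2])
  have hU0o : IsOpen U0 := isOpen_Ioo
  have hU0c : IsPreconnected U0 := isPreconnected_Ioo
  have hU0ne : U0.Nonempty := ⟨x, hxU0⟩
  have hU0I : U0 ⊆ I := Ioo_subset_Ioo (le_max_right _ _) (min_le_right _ _)
  have hU0d : U0 ⊆ Ioo (x - δ) (x + δ) := Ioo_subset_Ioo (le_max_left _ _) (min_le_left _ _)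
  obtain ⟨σ, hσbijOn, hσ⟩ := exists_match (n := n) hU0o hU0c hU0ne
    (f := Λ) (g := lam')
    (fun i' y hy => hΛa i' y (hU0I hy))
    (fun i' y hy => hana' i' y (hU0d hy))
    (fun t ht z => ((hΛf t (hU0I ht) z).symm.trans (hfac' t (hU0d ht) z)))
  have hσinj : Function.Injective σ := (Set.bijOn_univ.mp hσbijOn).injective
  have hids : ∀ i' : Fin n, ∀ l : ℕ,
      iteratedDeriv l (lam i') s = iteratedDeriv l (Λ (σ i')) x := by
    intro i' l
    have h1 : iteratedDeriv l (lam' i') x = iteratedDeriv l (lam i') (x + (m:ℝ)) :=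
      itd_comp_add_const (lam i') (m:ℝ) l x
    have hxs : x + (m:ℝ) = s := by rw [hxm]; ring
    rw [hxs] at h1
    have hev : lam' i' =ᶠ[nhds x] Λ (σ i') := by
      filter_upwards [hU0o.mem_nhds hxU0] with y hy using hσ i' hy
    have h2 : iteratedDeriv l (lam' i') x = iteratedDeriv l (Λ (σ i')) x :=
      (itd_eventuallyEq hev l).eq_of_nhds
    rw [← h1, h2]
  have hx1 : x ∈ Icc (0:ℝ) 1 := ⟨hx01.1, hx01.2.le⟩
  obtain ⟨l, hlk, hlne⟩ := hk (σ i) (σ j) (fun h => hij (hσinj h)) x hx1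
  apply hlne
  have := congrFun heq ⟨l, Nat.lt_succ_of_le hlk⟩
  simp only at this
  rw [← hids i l, ← hids j l, this]
end
end

section
/- Let P(t,z) = zⁿ + p_{n−1}(t)z^{n−1} + ⋯ + p_0(t) with n ≥ 2, where each p_j : ℝ → ℂ is real-analytic and 1-periodic, and assume P is simple and locally completely reducible. Then: (i) there exist real-analytic functions λ₁, …, λₙ : ℝ → ℂ with P(t,z) = ∏_{j=1}^{n}(z − λ_j(t)) for all t ∈ ℝ and z ∈ ℂ; (ii) for any such λ₁, …, λₙ there exists a unique permutation σ of {1, …, n} with λ_j(t+1) = λ_{σ(j)}(t) for all t ∈ ℝ and all j; and (iii) P is completely reducible — i.e., there exist 1-periodic real-analytic μ₁, …, μₙ : ℝ → ℂ with P(t,z) = ∏_{j=1}^{n}(z − μ_j(t)) for all t — if and only if σ is the identity permutation. -/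
open Set Polynomial

lemma selectionOn {E : Type*} [NormedAddCommGroup E] [NormedSpace ℝ E] [CompleteSpace E]
    {ι : Type*} [Finite ι] {U : Set ℝ} (hUo : IsOpen U) (hUc : IsPreconnected U)
    {u v : ℝ} (huv : u < v) (hIcc : Set.Icc u v ⊆ U)
    (F : ι → ℝ → E) (hF : ∀ k, AnalyticOnNhd ℝ (F k) U)
    (h : ∀ t ∈ U, ∃ k, F k t = 0) : ∃ k, ∀ t ∈ U, F k t = 0 := by
  cases nonempty_fintype ι
  have hcov : Set.Icc u v ⊆ ⋃ k, {t | F k t = 0} ∩ Set.Icc u v := by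
    intro t ht
    obtain ⟨k, hk⟩ := h t (hIcc ht)
    exact Set.mem_iUnion.2 ⟨k, hk, ht⟩
  have hinf : ∃ k, ({t | F k t = 0} ∩ Set.Icc u v).Infinite := by
    by_contra hcon
    push_neg at hcon
    have hfin : (Set.Icc u v).Finite :=
      Set.Finite.subset (Set.finite_iUnion hcon) hcov
    exact (Set.Icc_infinite huv) hfin
  obtain ⟨k, hk⟩ := hinf
  obtain ⟨x, hxK, hacc⟩ := hk.exists_accPt_of_subset_isCompact isCompact_Icc
    Set.inter_subset_right
  have hxU : x ∈ U := hIcc hxK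
  have hfreq : ∃ᶠ z in nhdsWithin x {x}ᶜ, F k z = 0 := by
    rw [accPt_iff_frequently] at hacc
    rw [frequently_nhdsWithin_iff]
    exact hacc.mono (by rintro y ⟨hy, hy0, _⟩; exact ⟨hy0, hy⟩)
  refine ⟨k, fun t ht => ?_⟩
  have := (hF k).eqOn_zero_of_preconnected_of_frequently_eq_zero hUc hxU hfreq
  exact this ht

lemma anProd {ι : Type*} (s : Finset ι) (f : ι → ℝ → ℂ) (x : ℝ)
    (h : ∀ i ∈ s, AnalyticAt ℝ (f i) x) :
    AnalyticAt ℝ (fun t => ∏ i ∈ s, f i t) x := by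
  classical
  induction s using Finset.cons_induction with
  | empty => simpa using analyticAt_const
  | cons a s ha IH =>
    simp only [Finset.prod_cons]
    exact (h a (Finset.mem_cons_self a s)).mul
      (IH fun i hi => h i (Finset.mem_cons_of_mem hi))

lemma anSum {ι : Type*} (s : Finset ι) (f : ι → ℝ → ℂ) (x : ℝ)
    (h : ∀ i ∈ s, AnalyticAt ℝ (f i) x) :
    AnalyticAt ℝ (fun t => ∑ i ∈ s, f i t) x := by
  classical
  induction s using Finset.cons_induction with
  | empty => simpa using analyticAt_const
  | cons a s ha IH =>
    simp only [Finset.sum_cons]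
    exact (h a (Finset.mem_cons_self a s)).add
      (IH fun i hi => h i (Finset.mem_cons_of_mem hi))

lemma anShift {f : ℝ → ℂ} (hf : ∀ t, AnalyticAt ℝ f t) (c : ℝ) (t : ℝ) :
    AnalyticAt ℝ (fun s => f (s + c)) t :=
  AnalyticAt.comp (f := fun s : ℝ => s + c) (hf (t + c)) ((analyticAt_id).add analyticAt_const)

lemma eval_form {n : ℕ} (p : Fin n → ℝ → ℂ) (t : ℝ) (z : ℂ) :
    eval z ((X : ℂ[X]) ^ n + ∑ j : Fin n, C (p j t) * X ^ (j : ℕ)) =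
      z ^ n + ∑ j : Fin n, p j t * z ^ (j : ℕ) := by
  simp [eval_finset_sum]

lemma toPoly {n : ℕ} {p : Fin n → ℝ → ℂ} {lam : Fin n → ℝ → ℂ}
    (hfac : ∀ (t : ℝ) (z : ℂ),
      z ^ n + ∑ j, p j t * z ^ (j : ℕ) = ∏ i, (z - lam i t)) (t : ℝ) :
    ((X : ℂ[X]) ^ n + ∑ j : Fin n, C (p j t) * X ^ (j : ℕ)) =
      ∏ i, (X - C (lam i t)) := by
  apply Polynomial.funext
  intro z
  rw [eval_form, hfac t z, eval_prod]
  simp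

lemma roots_fam {n : ℕ} (v : Fin n → ℂ) :
    (∏ i : Fin n, (X - C (v i))).roots = Finset.univ.val.map v := by
  have h : ∏ i : Fin n, (X - C (v i)) =
      ((Finset.univ.val.map v).map (fun a => X - C a)).prod := by
    rw [Multiset.map_map, Finset.prod_eq_multiset_prod]; rfl
  rw [h, roots_multiset_prod_X_sub_C]

lemma monic_fam {ι : Type*} (s : Finset ι) (v : ι → ℂ) :
    (∏ i ∈ s, (X - C (v i))).Monic :=
  monic_prod_of_monic _ _ fun i _ => monic_X_sub_C (v i)

lemma natDegree_fam {ι : Type*} (s : Finset ι) (v : ι → ℂ) :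
    (∏ i ∈ s, (X - C (v i))).natDegree = s.card := by
  rw [natDegree_prod _ _ fun i _ => X_sub_C_ne_zero (v i)]
  simp

lemma matchingAux {U : Set ℝ} (hUo : IsOpen U) (hUc : IsPreconnected U)
    {u v : ℝ} (huv : u < v) (hIcc : Set.Icc u v ⊆ U) {n : ℕ} (f g : Fin n → ℝ → ℂ)
    (hf : ∀ i, AnalyticOnNhd ℝ (f i) U) (hg : ∀ j, AnalyticOnNhd ℝ (g j) U) :
    ∀ (N : ℕ) (s t : Finset (Fin n)), s.card = N → t.card = N →
    (∀ x ∈ U, ∏ i ∈ s, (X - C (f i x)) = ∏ j ∈ t, (X - C (g j x))) →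
    ∃ e : Fin n → Fin n, Set.BijOn e ↑s ↑t ∧ ∀ i ∈ s, ∀ x ∈ U, f i x = g (e i) x := by
  intro N
  induction N with
  | zero =>
    intro s t hs ht _
    rw [Finset.card_eq_zero] at hs ht
    subst hs; subst ht
    exact ⟨id, by simp [Set.BijOn], by simp⟩
  | succ N IH =>
    intro s t hs ht hprod
    obtain ⟨i₀, hi₀⟩ : s.Nonempty := Finset.card_pos.1 (by omega)
    -- f i₀ is pointwise a root of the right product
    have hroot : ∀ x ∈ U, ∃ j : {j // j ∈ t}, f i₀ x - g j.1 x = 0 := by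
      intro x hx
      have h0 : eval (f i₀ x) (∏ i ∈ s, (X - C (f i x))) = 0 := by
        rw [eval_prod]
        exact Finset.prod_eq_zero hi₀ (by simp)
      rw [hprod x hx, eval_prod] at h0
      obtain ⟨j, hj, hj0⟩ := Finset.prod_eq_zero_iff.1 h0
      exact ⟨⟨j, hj⟩, by simpa [sub_eq_zero] using hj0⟩
    obtain ⟨⟨j₀, hj₀⟩, hj₀eq⟩ := selectionOn hUo hUc huv hIcc
      (fun (j : {j // j ∈ t}) x => f i₀ x - g j.1 x)
      (fun j => (hf i₀).sub (hg j.1)) hroot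
    have hfg0 : ∀ x ∈ U, f i₀ x = g j₀ x := by
      intro x hx; have := hj₀eq x hx; linear_combination this
    -- cancel the factor
    have hprod' : ∀ x ∈ U,
        ∏ i ∈ s.erase i₀, (X - C (f i x)) = ∏ j ∈ t.erase j₀, (X - C (g j x)) := by
      intro x hx
      have h1 := hprod x hx
      rw [← Finset.mul_prod_erase s _ hi₀, ← Finset.mul_prod_erase t _ hj₀,
        hfg0 x hx] at h1
      exact mul_left_cancel₀ (X_sub_C_ne_zero (g j₀ x)) h1
    obtain ⟨e', he'bij, he'⟩ := IH (s.erase i₀) (t.erase j₀)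
      (by rw [Finset.card_erase_of_mem hi₀, hs]; omega)
      (by rw [Finset.card_erase_of_mem hj₀, ht]; omega) hprod'
    refine ⟨Function.update e' i₀ j₀, ?_, ?_⟩
    · have h1 : Set.BijOn (Function.update e' i₀ j₀) ↑(s.erase i₀) ↑(t.erase j₀) :=
        he'bij.congr (fun i hi => by
          rw [Finset.coe_erase] at hi
          exact (Function.update_of_ne hi.2 _ _).symm)
      have h2 := h1.insert (a := i₀) (by
        simp [Finset.coe_erase, Function.update_self])
      rw [Function.update_self] at h2
      rwa [Finset.coe_erase, Set.insert_diff_singleton,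
        Set.insert_eq_of_mem (by exact_mod_cast hi₀), Finset.coe_erase,
        Set.insert_diff_singleton, Set.insert_eq_of_mem (by exact_mod_cast hj₀)] at h2
    · intro i hi x hx
      rcases eq_or_ne i i₀ with rfl | hne
      · rw [Function.update_self]; exact hfg0 x hx
      · rw [Function.update_of_ne hne]
        exact he' i (Finset.mem_erase.2 ⟨hne, hi⟩) x hx

lemma prodPoly_eq {ι : Type*} (s : Finset ι) (v : ι → ℂ) :
    ∏ i ∈ s, (X - C (v i)) = ((s.val.map v).map (fun a => X - C a)).prod := by
  rw [Multiset.map_map, Finset.prod_eq_multiset_prod]; rfl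

lemma coeff_prod_fam {ι : Type*} [DecidableEq ι] (s : Finset ι) (v : ι → ℂ) {k : ℕ}
    (hk : k ≤ s.card) :
    (∏ i ∈ s, (X - C (v i))).coeff k =
      (-1) ^ (s.card - k) *
        ∑ A ∈ Finset.powersetCard (s.card - k) s, ∏ i ∈ A, v i := by
  rw [prodPoly_eq]
  have hcard : Multiset.card (s.val.map v) = s.card := by simp
  have h := Multiset.prod_X_sub_C_coeff (s.val.map v) (k := k) (by rw [hcard]; exact hk)
  rw [h, hcard, Finset.esymm_map_val]

lemma distinctRoots (n : ℕ) (p : Fin n → ℝ → ℂ)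
    (hp_per : ∀ j, ∀ t : ℝ, p j (t + 1) = p j t)
    (hsimple : ¬ ∃ d : ℕ, 1 ≤ d ∧ ∃ qc : Fin d → ℝ → ℂ, ∃ r : Fin (n + 1) → ℝ → ℂ,
      (∀ j, ∀ t : ℝ, AnalyticAt ℝ (qc j) t) ∧ (∀ j, ∀ t : ℝ, qc j (t + 1) = qc j t) ∧
      (∀ j, ∀ t : ℝ, AnalyticAt ℝ (r j) t) ∧ (∀ j, ∀ t : ℝ, r j (t + 1) = r j t) ∧
      ∀ (t : ℝ) (z : ℂ),
        z ^ n + ∑ j, p j t * z ^ (j : ℕ) =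
          (z ^ d + ∑ j, qc j t * z ^ (j : ℕ)) ^ 2 * (∑ j, r j t * z ^ (j : ℕ)))
    (lam : Fin n → ℝ → ℂ) (hlam : ∀ i, ∀ t : ℝ, AnalyticAt ℝ (lam i) t)
    (hfac : ∀ (t : ℝ) (z : ℂ),
      z ^ n + ∑ j, p j t * z ^ (j : ℕ) = ∏ i, (z - lam i t))
    {a b : Fin n} (hab : ∀ t, lam a t = lam b t) (hne : a ≠ b) : False := by
  classical
  set Pp : ℝ → ℂ[X] := fun t => (X : ℂ[X]) ^ n + ∑ j : Fin n, C (p j t) * X ^ (j : ℕ)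
    with hPpdef
  have hPP : ∀ t, Pp t = ∏ i, (X - C (lam i t)) := toPoly hfac
  have hPper : ∀ t, Pp (t + 1) = Pp t := by
    intro t
    simp only [hPpdef, hp_per]
  have hPnat : ∀ (m : ℕ) (t : ℝ), Pp (t + m) = Pp t := by
    intro m
    induction m with
    | zero => simp
    | succ k IH =>
      intro t
      have : t + (k + 1 : ℕ) = (t + k) + 1 := by push_cast; ring
      rw [this, hPper, IH]
  have hroots : ∀ (m : ℕ) (t : ℝ),
      Finset.univ.val.map (fun i => lam i (t + m)) =
        Finset.univ.val.map (fun i => lam i t) := by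
    intro m t
    have h1 := hPP (t + m)
    have h2 := hPP t
    rw [hPnat m t] at h1
    have := congrArg Polynomial.roots (h1.symm.trans h2)
    rwa [roots_fam, roots_fam] at this
  have hcount : ∀ (w : ℝ) (cval : ℂ),
      Multiset.count cval (Finset.univ.val.map (fun i => lam i w)) =
        (Finset.univ.filter (fun i => cval = lam i w)).card := by
    intro w cval
    rw [Multiset.count_map, ← Finset.filter_val]
    rfl
  -- Step 1: for every m, a global pair of indices whose lam equal lam a (· + m)
  have pairfn : ∀ m : ℕ, ∃ c : Fin n × Fin n, c.1 ≠ c.2 ∧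
      (∀ t, lam c.1 t = lam a (t + m)) ∧ (∀ t, lam c.2 t = lam a (t + m)) := by
    intro m
    have hpt : ∀ t ∈ (Set.univ : Set ℝ), ∃ c : {c : Fin n × Fin n // c.1 ≠ c.2},
        (lam c.1.1 t - lam a (t + m), lam c.1.2 t - lam a (t + m)) = (0 : ℂ × ℂ) := by
      intro t _
      have hcnt : 2 ≤ (Finset.univ.filter (fun i => lam a (t + m) = lam i t)).card := by
        rw [← hcount t (lam a (t + m)), ← hroots m t, hcount (t + m) (lam a (t + m))]
        have e2 : ({a, b} : Finset (Fin n)) ⊆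
            Finset.univ.filter (fun i => lam a (t + m) = lam i (t + m)) := by
          intro i hi
          simp only [Finset.mem_insert, Finset.mem_singleton] at hi
          rcases hi with rfl | rfl
          · simp
          · simp [← hab (t + m)]
        have h3 := Finset.card_le_card e2
        rwa [Finset.card_pair hne] at h3
      obtain ⟨i, hi, i', hi', hii'⟩ := Finset.one_lt_card.1
        (show 1 < (Finset.univ.filter (fun i => lam a (t + m) = lam i t)).card by omega)
      simp only [Finset.mem_filter] at hi hi'
      exact ⟨⟨(i, i'), hii'⟩, by rw [← hi.2, ← hi'.2]; simp⟩
    obtain ⟨c, hc⟩ := selectionOn (E := ℂ × ℂ) isOpen_univ isPreconnected_univ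
      (zero_lt_one) (Set.subset_univ _)
      (fun (c : {c : Fin n × Fin n // c.1 ≠ c.2}) t =>
        (lam c.1.1 t - lam a (t + m), lam c.1.2 t - lam a (t + m)))
      (fun c t _ => ((hlam c.1.1 t).sub (anShift (hlam a) m t)).prod
        ((hlam c.1.2 t).sub (anShift (hlam a) m t)))
      hpt
    refine ⟨c.1, c.2, ?_, ?_⟩
    · intro t
      have h1 := congrArg Prod.fst (hc t (Set.mem_univ t))
      simpa [sub_eq_zero] using h1
    · intro t
      have h2 := congrArg Prod.snd (hc t (Set.mem_univ t))
      simpa [sub_eq_zero] using h2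
  -- Step 2: pigeonhole to find a periodic shift
  choose A hA1 hA2 hA3 using pairfn
  obtain ⟨m₁, m₂, hmne, hmeq⟩ := Fintype.exists_ne_map_eq_of_card_lt
    (fun m : Fin (n + 1) => (A m).1) (by simp)
  -- wlog M1 < M2
  obtain ⟨M1, M2, hM, hDm⟩ : ∃ M1 M2 : ℕ, M1 < M2 ∧
      ∀ t : ℝ, lam a (t + M2) = lam a (t + M1) := by
    rcases lt_or_gt_of_ne (fun h : (m₁ : ℕ) = (m₂ : ℕ) => hmne (Fin.ext h)) with h | h
    · refine ⟨m₁, m₂, h, fun t => ?_⟩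
      rw [← hA2 (m₁ : ℕ) t, ← hA2 (m₂ : ℕ) t, hmeq]
    · refine ⟨m₂, m₁, h, fun t => ?_⟩
      rw [← hA2 (m₁ : ℕ) t, ← hA2 (m₂ : ℕ) t, hmeq]
  -- Step 3: minimal period q
  have hWex : ∃ d : ℕ, 0 < d ∧ ∀ t : ℝ, lam a (t + M1 + d) = lam a (t + M1) := by
    refine ⟨M2 - M1, by omega, fun t => ?_⟩
    have hc : ((M2 - M1 : ℕ) : ℝ) = (M2 : ℝ) - M1 := by
      rw [Nat.cast_sub hM.le]
    rw [hc]
    have e : t + (M1 : ℝ) + ((M2 : ℝ) - M1) = t + M2 := by ring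
    rw [e, hDm]
  set q := Nat.find hWex with hqdef
  have hq := Nat.find_spec hWex
  have hq0 : 0 < q := hq.1
  set h : ℝ → ℂ := fun t => lam a (t + M1) with hhdef
  have hh_an : ∀ t, AnalyticAt ℝ h t := anShift (hlam a) M1
  have hper : ∀ t, h (t + q) = h t := by
    intro t
    have e : t + (q : ℝ) + M1 = t + M1 + q := by ring
    simp only [hhdef]
    rw [e, hq.2]
  have hdist : ∀ i j : ℕ, i < j → j < q → ¬(∀ t, h (t + i) = h (t + j)) := by
    intro i j hij hjq hcon
    have : ¬ (0 < j - i ∧ ∀ t : ℝ, lam a (t + M1 + (j - i : ℕ)) = lam a (t + M1)) :=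
      Nat.find_min hWex (show j - i < q by omega)
    apply this
    refine ⟨by omega, fun t => ?_⟩
    have h1 := hcon (t - i)
    simp only [hhdef] at h1
    have e1 : t - (i : ℝ) + i + M1 = t + M1 := by ring
    have e2 : t - (i : ℝ) + j + M1 = t + M1 + ((j : ℝ) - i) := by ring
    rw [e1, e2] at h1
    rw [Nat.cast_sub hij.le]
    exact h1.symm
  -- Step 4: the 2q distinct indices, the square factor and the cofactor
  have hc1 : ∀ i : Fin q, ∀ t, lam (A (M1 + i)).1 t = h (t + i) := by
    intro i t
    rw [hA2 (M1 + i) t]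
    simp only [hhdef]
    congr 1
    push_cast; ring
  have hc2 : ∀ i : Fin q, ∀ t, lam (A (M1 + i)).2 t = h (t + i) := by
    intro i t
    rw [hA3 (M1 + i) t]
    simp only [hhdef]
    congr 1
    push_cast; ring
  set g : Fin q × Bool → Fin n :=
    fun y => if y.2 then (A (M1 + y.1)).2 else (A (M1 + y.1)).1 with hgdef
  have hg_lam : ∀ y : Fin q × Bool, ∀ t, lam (g y) t = h (t + y.1) := by
    rintro ⟨i, k⟩ t
    cases k
    · simpa [hgdef] using hc1 i t
    · simpa [hgdef] using hc2 i t
  have hg_inj : Function.Injective g := by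
    rintro ⟨i, k⟩ ⟨i', k'⟩ he
    have hfun : ∀ t, h (t + (i : ℕ)) = h (t + (i' : ℕ)) := by
      intro t
      rw [← hg_lam (i, k) t, he, hg_lam (i', k') t]
    have h1 : i = i' := by
      by_contra hne'
      rcases lt_or_gt_of_ne (fun hh : (i : ℕ) = (i' : ℕ) => hne' (Fin.ext hh)) with hlt | hlt
      · exact hdist _ _ hlt i'.isLt hfun
      · exact hdist _ _ hlt i.isLt (fun t => (hfun t).symm)
    subst h1
    have h2 : k = k' := by
      by_contra hneb
      have hA := hA1 (M1 + i)
      cases k <;> cases k' <;> simp [hgdef] at he hneb ⊢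
      · exact hA he
      · exact hA he.symm
    subst h2
    rfl
  set B : Finset (Fin n) := Finset.univ.image g with hBdef
  have hBcard : B.card = 2 * q := by
    rw [hBdef, Finset.card_image_of_injective _ hg_inj]
    simp [mul_comm]
  set T : Finset (Fin n) := Finset.univ \ B with hTdef
  have h2q : 2 * q ≤ n := by
    have := Finset.card_le_card (Finset.subset_univ B)
    simpa [hBcard] using this
  have hTcard : T.card = n - 2 * q := by
    rw [hTdef, Finset.card_sdiff_of_subset (Finset.subset_univ B), hBcard]
    simp
  set Q : ℝ → ℂ[X] := fun t => ∏ i : Fin q, (X - C (h (t + i))) with hQdef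
  set R : ℝ → ℂ[X] := fun t => ∏ j ∈ T, (X - C (lam j t)) with hRdef
  have hsplit : ∀ t, Pp t = Q t ^ 2 * R t := by
    intro t
    have hB : ∏ j ∈ B, (X - C (lam j t)) = Q t ^ 2 := by
      rw [hBdef, Finset.prod_image (fun y _ y' _ hyy => hg_inj hyy)]
      have e1 : ∀ y : Fin q × Bool,
          (X - C (lam (g y) t)) = (X - C (h (t + y.1))) := by
        intro y
        rw [hg_lam]
      rw [Finset.prod_congr rfl (fun y _ => e1 y), ← Finset.univ_product_univ,
        Finset.prod_product]
      simp only [Finset.prod_const, Finset.card_univ, Fintype.card_bool]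
      rw [hQdef, ← Finset.prod_pow]
    rw [hPP, ← Finset.prod_sdiff (Finset.subset_univ B), hB, ← hTdef, hRdef]
    ring
  have hQmonic : ∀ t, (Q t).Monic := fun t => monic_fam _ _
  have hQdeg : ∀ t, (Q t).natDegree = q := by
    intro t
    rw [hQdef]
    rw [natDegree_fam]
    simp
  have hRdeg : ∀ t, (R t).natDegree = n - 2 * q := by
    intro t
    rw [hRdef, natDegree_fam, hTcard]
  haveI : NeZero q := ⟨hq0.ne'⟩
  have hQper : ∀ t, Q (t + 1) = Q t := by
    intro t
    have key : ∀ i : Fin q, h (t + 1 + (i : ℕ)) = h (t + ((i + 1 : Fin q) : ℕ)) := by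
      intro i
      have hv : ((i + 1 : Fin q) : ℕ) = ((i : ℕ) + 1) % q := by
        rw [Fin.add_def]
        simp [Fin.val_one', Nat.add_mod]
      by_cases hiq : (i : ℕ) + 1 < q
      · rw [hv, Nat.mod_eq_of_lt hiq]
        congr 1
        push_cast; ring
      · have hieq : (i : ℕ) + 1 = q := by have := i.isLt; omega
        have hv0 : ((i + 1 : Fin q) : ℕ) = 0 := by rw [hv, hieq, Nat.mod_self]
        rw [hv0]
        have e : t + 1 + ((i : ℕ) : ℝ) = (t + ((0 : ℕ) : ℝ)) + (q : ℕ) := by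
          have hcast : ((i : ℕ) : ℝ) + 1 = (q : ℝ) := by exact_mod_cast hieq
          push_cast
          linarith
        rw [e, hper (t + ((0 : ℕ) : ℝ))]
    calc Q (t + 1) = ∏ i : Fin q, (X - C (h (t + ((i + 1 : Fin q) : ℕ)))) := by
          rw [hQdef]
          exact Finset.prod_congr rfl (fun i _ => by rw [key i])
      _ = Q t := by
          rw [hQdef]
          refine Fintype.prod_equiv (Equiv.addRight (1 : Fin q)) _ _ (fun i => ?_)
          simp [Equiv.coe_addRight]
  have hRper : ∀ t, R (t + 1) = R t := by
    intro t
    have h1 : Q t ^ 2 * R (t + 1) = Q t ^ 2 * R t :=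
      calc Q t ^ 2 * R (t + 1) = Q (t + 1) ^ 2 * R (t + 1) := by rw [hQper]
        _ = Pp (t + 1) := (hsplit (t + 1)).symm
        _ = Pp t := hPper t
        _ = Q t ^ 2 * R t := hsplit t
    exact mul_left_cancel₀ (pow_ne_zero 2 (hQmonic t).ne_zero) h1
  -- coefficients of Q and R
  set qc : Fin q → ℝ → ℂ := fun j t => (Q t).coeff j with hqcdef
  set rc : Fin (n + 1) → ℝ → ℂ := fun j t => (R t).coeff j with hrcdef
  have hqc_an : ∀ j : Fin q, ∀ t : ℝ, AnalyticAt ℝ (qc j) t := by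
    intro j t
    have hform : qc j = fun t => (-1 : ℂ) ^ (q - (j : ℕ)) *
        ∑ A ∈ Finset.powersetCard (q - (j : ℕ)) (Finset.univ : Finset (Fin q)),
          ∏ i ∈ A, h (t + (i : ℕ)) := by
      funext s
      rw [hqcdef]
      simp only
      rw [hQdef]
      simp only
      rw [coeff_prod_fam _ _ (by simpa using j.isLt.le)]
      simp
    rw [hform]
    exact analyticAt_const.mul (anSum _ _ _ (fun A _ => anProd _ _ _
      (fun i _ => anShift hh_an (i : ℕ) t)))
  have hrc_an : ∀ j : Fin (n + 1), ∀ t : ℝ, AnalyticAt ℝ (rc j) t := by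
    intro j t
    by_cases hj : (j : ℕ) ≤ n - 2 * q
    · have hform : rc j = fun t => (-1 : ℂ) ^ (T.card - (j : ℕ)) *
          ∑ A ∈ Finset.powersetCard (T.card - (j : ℕ)) T, ∏ i ∈ A, lam i t := by
        funext s
        rw [hrcdef]
        simp only
        rw [hRdef]
        simp only
        rw [coeff_prod_fam _ _ (by rw [hTcard]; exact hj)]
      rw [hform]
      exact analyticAt_const.mul (anSum _ _ _ (fun A _ => anProd _ _ _
        (fun i _ => hlam i t)))
    · have hform : rc j = fun t => 0 := by
        funext s
        rw [hrcdef]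
        simp only
        exact coeff_eq_zero_of_natDegree_lt (by rw [hRdeg]; omega)
      rw [hform]
      exact analyticAt_const
  have hqc_per : ∀ j : Fin q, ∀ t : ℝ, qc j (t + 1) = qc j t := by
    intro j t
    rw [hqcdef]
    simp only
    rw [hQper]
  have hrc_per : ∀ j : Fin (n + 1), ∀ t : ℝ, rc j (t + 1) = rc j t := by
    intro j t
    rw [hrcdef]
    simp only
    rw [hRper]
  -- evaluation identities
  have e1 : ∀ (t : ℝ) (z : ℂ), eval z (Q t) = z ^ q + ∑ j : Fin q, qc j t * z ^ (j : ℕ) := by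
    intro t z
    rw [eval_eq_sum_range' (n := q + 1) (by rw [hQdeg]; omega) z]
    rw [Finset.sum_range_succ]
    have hlead : (Q t).coeff q = 1 := by
      have := (hQmonic t).coeff_natDegree
      rwa [hQdeg] at this
    rw [hlead, one_mul]
    rw [Fin.sum_univ_eq_sum_range (fun i => (Q t).coeff i * z ^ i) q]
    ring
  have e2 : ∀ (t : ℝ) (z : ℂ), eval z (R t) = ∑ j : Fin (n + 1), rc j t * z ^ (j : ℕ) := by
    intro t z
    rw [eval_eq_sum_range' (n := n + 1) (by rw [hRdeg]; omega) z]
    rw [Fin.sum_univ_eq_sum_range (fun i => (R t).coeff i * z ^ i) (n + 1)]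
  apply hsimple
  refine ⟨q, hq0, qc, rc, hqc_an, hqc_per, hrc_an, hrc_per, fun t z => ?_⟩
  have := congrArg (eval z) (hsplit t)
  rw [eval_form p t z] at this
  rw [this, eval_mul, eval_pow, e1, e2]

/-- products of linear factors with the same evaluations agree -/
lemma prodEqOfFac {n : ℕ} {p : Fin n → ℝ → ℂ} {lam mu : Fin n → ℝ → ℂ} {t : ℝ}
    (h1 : ∀ z : ℂ, z ^ n + ∑ j, p j t * z ^ (j : ℕ) = ∏ i, (z - lam i t))
    (h2 : ∀ z : ℂ, z ^ n + ∑ j, p j t * z ^ (j : ℕ) = ∏ i, (z - mu i t)) :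
    ∏ i, (X - C (lam i t)) = ∏ i, (X - C (mu i t)) := by
  apply Polynomial.funext
  intro z
  rw [eval_prod, eval_prod]
  simp only [eval_sub, eval_X, eval_C]
  rw [← h1 z, ← h2 z]

/-- Gluing two local factorizations over overlapping intervals. -/
lemma glueLem {n : ℕ} (p : Fin n → ℝ → ℂ) {A B C' D : ℝ} (hover : max A C' < min B D)
    (lam mu : Fin n → ℝ → ℂ)
    (hlam_an : ∀ i, AnalyticOnNhd ℝ (lam i) (Set.Ioo A B))
    (hmu_an : ∀ i, AnalyticOnNhd ℝ (mu i) (Set.Ioo C' D))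
    (hlam_f : ∀ t ∈ Set.Ioo A B, ∀ z : ℂ,
      z ^ n + ∑ j, p j t * z ^ (j : ℕ) = ∏ i, (z - lam i t))
    (hmu_f : ∀ t ∈ Set.Ioo C' D, ∀ z : ℂ,
      z ^ n + ∑ j, p j t * z ^ (j : ℕ) = ∏ i, (z - mu i t)) :
    ∃ nu : Fin n → ℝ → ℂ,
      (∀ i, AnalyticOnNhd ℝ (nu i) (Set.Ioo (min A C') (max B D))) ∧
      (∀ t ∈ Set.Ioo (min A C') (max B D), ∀ z : ℂ,
        z ^ n + ∑ j, p j t * z ^ (j : ℕ) = ∏ i, (z - nu i t)) ∧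
      (∀ i, Set.EqOn (nu i) (lam i) (Set.Ioo A B)) := by
  classical
  set V : Set ℝ := Set.Ioo (max A C') (min B D) with hVdef
  have hVsubL : V ⊆ Set.Ioo A B := fun x hx =>
    ⟨lt_of_le_of_lt (le_max_left _ _) hx.1, lt_of_lt_of_le hx.2 (min_le_left _ _)⟩
  have hVsubR : V ⊆ Set.Ioo C' D := fun x hx =>
    ⟨lt_of_le_of_lt (le_max_right _ _) hx.1, lt_of_lt_of_le hx.2 (min_le_right _ _)⟩
  have h3 : max A C' + (min B D - max A C') / 3 <
      max A C' + 2 * (min B D - max A C') / 3 := by linarith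
  have hIcc : Set.Icc (max A C' + (min B D - max A C') / 3)
      (max A C' + 2 * (min B D - max A C') / 3) ⊆ V := by
    intro x hx
    simp only [Set.mem_Icc] at hx
    exact ⟨by linarith [hover, hx.1, hx.2], by linarith [hover, hx.1, hx.2]⟩
  obtain ⟨e, hebij, heq⟩ := matchingAux (isOpen_Ioo) (isPreconnected_Ioo) h3 hIcc
    lam mu (fun i => (hlam_an i).mono hVsubL) (fun i => (hmu_an i).mono hVsubR)
    n Finset.univ Finset.univ (by simp) (by simp)
    (fun x hx => prodEqOfFac (p := p) (hlam_f x (hVsubL hx)) (hmu_f x (hVsubR hx)))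
  have hebijective : Function.Bijective e := by
    apply Set.bijOn_univ.1
    simpa using hebij
  set nu : Fin n → ℝ → ℂ := fun i t => if t ∈ Set.Ioo A B then lam i t else mu (e i) t
    with hnudef
  have hnu_lam : ∀ i, Set.EqOn (nu i) (lam i) (Set.Ioo A B) := by
    intro i t ht
    simp only [hnudef]
    rw [if_pos ht]
  have hnu_mu : ∀ i, Set.EqOn (nu i) (fun t => mu (e i) t) (Set.Ioo C' D) := by
    intro i t ht
    by_cases h : t ∈ Set.Ioo A B
    · have htV : t ∈ V := ⟨max_lt h.1 ht.1, lt_min h.2 ht.2⟩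
      simp only [hnudef, if_pos h]
      exact heq i (Finset.mem_univ i) t htV
    · simp only [hnudef]
      rw [if_neg h]
  have hmem : ∀ t ∈ Set.Ioo (min A C') (max B D), t ∉ Set.Ioo A B → t ∈ Set.Ioo C' D := by
    intro t ht hnot
    simp only [Set.mem_Ioo, not_and_or, not_lt] at hnot
    obtain ⟨ht1, ht2⟩ := ht
    rcases hnot with h1 | h1
    · refine ⟨?_, by linarith [le_max_left A C', min_le_right B D, hover]⟩
      rcases le_total A C' with h' | h'
      · rw [min_eq_left h'] at ht1; linarith
      · rw [min_eq_right h'] at ht1; exact ht1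
    · refine ⟨by linarith [le_max_right A C', min_le_left B D, hover], ?_⟩
      rcases le_total B D with h' | h'
      · rw [max_eq_right h'] at ht2; exact ht2
      · rw [max_eq_left h'] at ht2; linarith
  refine ⟨nu, ?_, ?_, hnu_lam⟩
  · intro i t ht
    by_cases h : t ∈ Set.Ioo A B
    · exact (hlam_an i t h).congr
        (((hnu_lam i).eventuallyEq_of_mem (isOpen_Ioo.mem_nhds h)).symm)
    · have htCD := hmem t ht h
      exact (hmu_an (e i) t htCD).congr
        (((hnu_mu i).eventuallyEq_of_mem (isOpen_Ioo.mem_nhds htCD)).symm)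
  · intro t ht z
    by_cases h : t ∈ Set.Ioo A B
    · rw [hlam_f t h z]
      exact Finset.prod_congr rfl (fun i _ => by rw [hnu_lam i h])
    · have htCD := hmem t ht h
      rw [hmu_f t htCD z]
      have e1 : ∏ i, (z - nu i t) = ∏ i, (z - mu (e i) t) :=
        Finset.prod_congr rfl (fun i _ => by rw [hnu_mu i htCD])
      rw [e1, Function.Bijective.prod_comp hebijective (fun k => z - mu k t)]

lemma globalFac {n : ℕ} (p : Fin n → ℝ → ℂ)
    (hLCR : ∀ s : ℝ, ∃ δ : ℝ, 0 < δ ∧ ∃ lam : Fin n → ℝ → ℂ,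
      (∀ i, AnalyticOnNhd ℝ (lam i) (Set.Ioo (s - δ) (s + δ))) ∧
      ∀ t ∈ Set.Ioo (s - δ) (s + δ), ∀ z : ℂ,
        z ^ n + ∑ j, p j t * z ^ (j : ℕ) = ∏ i, (z - lam i t)) :
    ∃ lam : Fin n → ℝ → ℂ, (∀ i, ∀ t : ℝ, AnalyticAt ℝ (lam i) t) ∧
      ∀ (t : ℝ) (z : ℂ), z ^ n + ∑ j, p j t * z ^ (j : ℕ) = ∏ i, (z - lam i t) := by
  classical
  obtain ⟨δ₀, hδ₀, lam₀, h0an, h0fac⟩ := hLCR 0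
  set base : Set ℝ := Set.Ioo (-(δ₀ / 2)) (δ₀ / 2) with hbasedef
  have hbase_sub : base ⊆ Set.Ioo (0 - δ₀) (0 + δ₀) := by
    intro x hx
    obtain ⟨h1, h2⟩ := hx
    constructor <;> simp <;> linarith
  set Pred : ℝ → Prop := fun b => δ₀ / 2 ≤ b ∧ ∃ lam : Fin n → ℝ → ℂ,
    (∀ i, AnalyticOnNhd ℝ (lam i) (Set.Ioo (-b) b)) ∧
    (∀ t ∈ Set.Ioo (-b) b, ∀ z : ℂ,
      z ^ n + ∑ j, p j t * z ^ (j : ℕ) = ∏ i, (z - lam i t)) ∧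
    (∀ i, Set.EqOn (lam i) (lam₀ i) base) with hPreddef
  have hS0 : Pred (δ₀ / 2) := by
    refine ⟨le_refl _, lam₀, fun i => (h0an i).mono hbase_sub, ?_, fun i => Set.eqOn_refl _ _⟩
    intro t ht z
    exact h0fac t (hbase_sub ht) z
  have hnb : ¬ BddAbove {b | Pred b} := by
    intro hbdd
    have hne : Set.Nonempty {b | Pred b} := ⟨_, hS0⟩
    set bs := sSup {b | Pred b} with hbsdef
    have hbs : δ₀ / 2 ≤ bs := le_csSup hbdd hS0
    have hbs0 : 0 < bs := lt_of_lt_of_le (by linarith) hbs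
    obtain ⟨δ₁, hδ₁, mu, hmu_an, hmu_f⟩ := hLCR bs
    obtain ⟨δ₂, hδ₂, nu, hnu_an, hnu_f⟩ := hLCR (-bs)
    have hminpos : 0 < min δ₁ δ₂ := lt_min hδ₁ hδ₂
    obtain ⟨b, hbS, hb⟩ := exists_lt_of_lt_csSup hne
      (show bs - min δ₁ δ₂ < bs by linarith)
    have hble : b ≤ bs := le_csSup hbdd hbS
    obtain ⟨hbge, lamb, hban, hbfac, hbeq⟩ := hbS
    have hb0 : 0 < b := lt_of_lt_of_le (by linarith) hbge
    have hover1 : max (-b) (bs - δ₁) < min b (bs + δ₁) := by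
      apply max_lt <;> apply lt_min <;>
        [linarith; linarith; linarith [min_le_left δ₁ δ₂]; linarith]
    obtain ⟨lam1, h1an, h1fac, h1eq⟩ := glueLem p hover1 lamb mu hban hmu_an hbfac hmu_f
    have hover2 : max (min (-b) (bs - δ₁)) (-bs - δ₂) <
        min (max b (bs + δ₁)) (-bs + δ₂) := by
      apply max_lt <;> apply lt_min <;>
        [ linarith [min_le_left (-b) (bs - δ₁), le_max_left b (bs + δ₁)];
          linarith [min_le_left (-b) (bs - δ₁), min_le_right δ₁ δ₂];
          linarith [le_max_left b (bs + δ₁)];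
          linarith]
    obtain ⟨lam2, h2an, h2fac, h2eq⟩ := glueLem p hover2 lam1 nu h1an hnu_an h1fac hnu_f
    set b' := bs + min δ₁ δ₂ with hb'def
    have hsub' : Set.Ioo (-b') b' ⊆
        Set.Ioo (min (min (-b) (bs - δ₁)) (-bs - δ₂)) (max (max b (bs + δ₁)) (-bs + δ₂)) := by
      intro x hx
      obtain ⟨h1, h2⟩ := hx
      constructor
      · have : min (min (-b) (bs - δ₁)) (-bs - δ₂) ≤ -bs - δ₂ := min_le_right _ _
        have h3 : -bs - δ₂ ≤ -b' := by
          rw [hb'def]; linarith [min_le_right δ₁ δ₂]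
        linarith
      · have : bs + δ₁ ≤ max (max b (bs + δ₁)) (-bs + δ₂) :=
          le_trans (le_max_right _ _) (le_max_left _ _)
        have h3 : b' ≤ bs + δ₁ := by
          rw [hb'def]; linarith [min_le_left δ₁ δ₂]
        linarith
    have hbsub : Set.Ioo (-b) b ⊆ Set.Ioo (min (-b) (bs - δ₁)) (max b (bs + δ₁)) := by
      intro x hx
      exact ⟨lt_of_le_of_lt (min_le_left _ _) hx.1, lt_of_lt_of_le hx.2 (le_max_left _ _)⟩
    have hPred' : Pred b' := by
      refine ⟨by rw [hb'def]; linarith, lam2, fun i => (h2an i).mono hsub',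
        fun t ht z => h2fac t (hsub' ht) z, ?_⟩
      intro i t ht
      have htb : t ∈ Set.Ioo (-b) b := by
        obtain ⟨h1, h2⟩ := ht
        constructor <;> linarith
      calc lam2 i t = lam1 i t := h2eq i (hbsub htb)
        _ = lamb i t := h1eq i htb
        _ = lam₀ i t := hbeq i ht
    have : b' ≤ bs := le_csSup hbdd hPred'
    rw [hb'def] at this
    linarith
  -- extract global functions
  have hex : ∀ r : ℝ, ∃ b, Pred b ∧ |r| < b := by
    intro r
    obtain ⟨b, hbS, hb⟩ := not_bddAbove_iff.1 hnb |r|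
    exact ⟨b, hbS, hb⟩
  choose bf hbf habf using hex
  have hex2 : ∀ r : ℝ, ∃ lam : Fin n → ℝ → ℂ,
      (∀ i, AnalyticOnNhd ℝ (lam i) (Set.Ioo (-(bf r)) (bf r))) ∧
      (∀ t ∈ Set.Ioo (-(bf r)) (bf r), ∀ z : ℂ,
        z ^ n + ∑ j, p j t * z ^ (j : ℕ) = ∏ i, (z - lam i t)) ∧
      (∀ i, Set.EqOn (lam i) (lam₀ i) base) := fun r => (hbf r).2
  choose lamf hfan hffac hfeq using hex2
  have hbfge : ∀ r, δ₀ / 2 ≤ bf r := fun r => (hbf r).1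
  have hkey : ∀ r r' : ℝ, ∀ i, Set.EqOn (lamf r i) (lamf r' i)
      (Set.Ioo (-(min (bf r) (bf r'))) (min (bf r) (bf r'))) := by
    intro r r' i
    have hm : δ₀ / 2 ≤ min (bf r) (bf r') := le_min (hbfge r) (hbfge r')
    have hsub1 : Set.Ioo (-(min (bf r) (bf r'))) (min (bf r) (bf r')) ⊆
        Set.Ioo (-(bf r)) (bf r) := by
      intro x hx
      exact ⟨by linarith [hx.1, min_le_left (bf r) (bf r')],
        lt_of_lt_of_le hx.2 (min_le_left _ _)⟩
    have hsub2 : Set.Ioo (-(min (bf r) (bf r'))) (min (bf r) (bf r')) ⊆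
        Set.Ioo (-(bf r')) (bf r') := by
      intro x hx
      exact ⟨by linarith [hx.1, min_le_right (bf r) (bf r')],
        lt_of_lt_of_le hx.2 (min_le_right _ _)⟩
    have hbase1 : base ⊆ Set.Ioo (-(min (bf r) (bf r'))) (min (bf r) (bf r')) := by
      intro x hx
      obtain ⟨h1, h2⟩ := hx
      constructor <;> linarith
    apply AnalyticOnNhd.eqOn_of_preconnected_of_eventuallyEq
      ((hfan r i).mono hsub1) ((hfan r' i).mono hsub2) isPreconnected_Ioo
      (show (0 : ℝ) ∈ Set.Ioo (-(min (bf r) (bf r'))) (min (bf r) (bf r')) by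
        constructor <;> linarith)
    have h0base : (0 : ℝ) ∈ base := by
      simp only [hbasedef, Set.mem_Ioo]
      constructor <;> linarith
    have heqb : Set.EqOn (lamf r i) (lamf r' i) base := fun x hx =>
      (hfeq r i hx).trans (hfeq r' i hx).symm
    exact heqb.eventuallyEq_of_mem (isOpen_Ioo.mem_nhds h0base)
  refine ⟨fun i t => lamf t i t, ?_, ?_⟩
  · intro i t₀
    have ht₀ : t₀ ∈ Set.Ioo (-(bf t₀)) (bf t₀) := by
      have := abs_lt.1 (habf t₀)
      exact ⟨by linarith [this.1], this.2⟩
    have heqV : Set.EqOn (fun t => lamf t i t) (lamf t₀ i)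
        (Set.Ioo (-(bf t₀)) (bf t₀)) := by
      intro t ht
      have habs : |t| < min (bf t) (bf t₀) :=
        lt_min (habf t) (abs_lt.2 ⟨by linarith [ht.1], ht.2⟩)
      have h1 : t ∈ Set.Ioo (-(min (bf t) (bf t₀))) (min (bf t) (bf t₀)) := by
        have := abs_lt.1 habs
        exact ⟨by linarith [this.1], this.2⟩
      exact hkey t t₀ i h1
    exact ((hfan t₀ i) t₀ ht₀).congr
      (heqV.eventuallyEq_of_mem (isOpen_Ioo.mem_nhds ht₀)).symm
  · intro t z
    have ht : t ∈ Set.Ioo (-(bf t)) (bf t) := by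
      have := abs_lt.1 (habf t)
      exact ⟨by linarith [this.1], this.2⟩
    exact hffac t t ht z

section parts
variable {n : ℕ} {p : Fin n → ℝ → ℂ}

/-- Existence and uniqueness of the monodromy permutation, given distinctness. -/
lemma partII (hp_per : ∀ j, ∀ t : ℝ, p j (t + 1) = p j t)
    (lam : Fin n → ℝ → ℂ) (hlam : ∀ i, ∀ t : ℝ, AnalyticAt ℝ (lam i) t)
    (hfac : ∀ (t : ℝ) (z : ℂ),
      z ^ n + ∑ j, p j t * z ^ (j : ℕ) = ∏ i, (z - lam i t))
    (hdis : ∀ a b : Fin n, (∀ t, lam a t = lam b t) → a = b) :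
    ∃! σ : Equiv.Perm (Fin n), ∀ (j : Fin n) (t : ℝ), lam j (t + 1) = lam (σ j) t := by
  classical
  have hsel : ∀ j : Fin n, ∃ k : Fin n, ∀ t : ℝ, lam j (t + 1) = lam k t := by
    intro j
    have hpt : ∀ t ∈ (Set.univ : Set ℝ), ∃ k : Fin n, lam j (t + 1) - lam k t = 0 := by
      intro t _
      have h0 : ∏ i, (lam j (t + 1) - lam i t) = 0 := by
        calc ∏ i, (lam j (t + 1) - lam i t)
            = (lam j (t + 1)) ^ n + ∑ k, p k t * (lam j (t + 1)) ^ (k : ℕ) :=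
              (hfac t _).symm
          _ = (lam j (t + 1)) ^ n + ∑ k, p k (t + 1) * (lam j (t + 1)) ^ (k : ℕ) := by
              simp only [hp_per]
          _ = ∏ i, (lam j (t + 1) - lam i (t + 1)) := hfac (t + 1) _
          _ = 0 := Finset.prod_eq_zero (Finset.mem_univ j) (sub_self _)
      obtain ⟨i, _, hi0⟩ := Finset.prod_eq_zero_iff.1 h0
      exact ⟨i, hi0⟩
    obtain ⟨k, hk⟩ := selectionOn (E := ℂ) isOpen_univ isPreconnected_univ zero_lt_one
      (Set.subset_univ _) (fun (k : Fin n) t => lam j (t + 1) - lam k t)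
      (fun k t _ => (anShift (hlam j) 1 t).sub (hlam k t)) hpt
    exact ⟨k, fun t => sub_eq_zero.1 (hk t (Set.mem_univ t))⟩
  choose sfun hsfun using hsel
  have hinj : Function.Injective sfun := by
    intro j j' hjj
    apply hdis
    intro t
    have h1 := hsfun j (t - 1)
    have h2 := hsfun j' (t - 1)
    rw [hjj] at h1
    have e : t - 1 + 1 = t := by ring
    rw [e] at h1 h2
    rw [h1, ← h2]
  have hbij : Function.Bijective sfun := Finite.injective_iff_bijective.1 hinj
  refine ⟨Equiv.ofBijective sfun hbij, fun j t => hsfun j t, ?_⟩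
  intro σ' hσ'
  ext j
  simp only [Equiv.ofBijective_apply]
  exact congrArg Fin.val (hdis _ _ fun t => (hσ' j t).symm.trans (hsfun j t))

lemma partIII (hp_per : ∀ j, ∀ t : ℝ, p j (t + 1) = p j t)
    (lam : Fin n → ℝ → ℂ) (hlam : ∀ i, ∀ t : ℝ, AnalyticAt ℝ (lam i) t)
    (hfac : ∀ (t : ℝ) (z : ℂ),
      z ^ n + ∑ j, p j t * z ^ (j : ℕ) = ∏ i, (z - lam i t))
    (hdis : ∀ a b : Fin n, (∀ t, lam a t = lam b t) → a = b)
    (σ : Equiv.Perm (Fin n)) (hσ : ∀ (j : Fin n) (t : ℝ), lam j (t + 1) = lam (σ j) t) :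
    (∃ mu : Fin n → ℝ → ℂ,
        (∀ i, ∀ t : ℝ, AnalyticAt ℝ (mu i) t) ∧
        (∀ i, ∀ t : ℝ, mu i (t + 1) = mu i t) ∧
        ∀ (t : ℝ) (z : ℂ),
          z ^ n + ∑ j, p j t * z ^ (j : ℕ) = ∏ i, (z - mu i t))
      ↔ σ = 1 := by
  constructor
  · rintro ⟨mu, hmu_an, hmu_per, hmu_f⟩
    obtain ⟨e, hebij, heq⟩ := matchingAux isOpen_univ isPreconnected_univ zero_lt_one
      (Set.subset_univ (Set.Icc (0:ℝ) 1)) lam mu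
      (fun i x _ => hlam i x) (fun j x _ => hmu_an j x)
      n Finset.univ Finset.univ (by simp) (by simp)
      (fun x _ => prodEqOfFac (p := p) (hfac x) (hmu_f x))
    have hlam_per : ∀ i, ∀ t : ℝ, lam i (t + 1) = lam i t := by
      intro i t
      rw [heq i (Finset.mem_univ i) (t + 1) (Set.mem_univ _),
        heq i (Finset.mem_univ i) t (Set.mem_univ _), hmu_per]
    apply Equiv.ext
    intro j
    rw [Equiv.Perm.one_apply]
    exact hdis _ _ fun t => ((hσ j t).symm.trans (hlam_per j t))
  · rintro rfl
    refine ⟨lam, hlam, ?_, hfac⟩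
    intro i t
    have := hσ i t
    simpa using this

end parts

/-- Let `P(t,z) = zⁿ + ∑ p_j(t) z^j`, `n ≥ 2`, have coefficients
real-analytic and 1-periodic on `ℝ`, and assume `P` is simple and locally completely
reducible.  Then (i) `P` has a global factorization `P(t,z) = ∏ (z - λ_j(t))` with each
`λ_j : ℝ → ℂ` real-analytic; (ii) for any such factorization there is a unique permutation
`σ` with `λ_j(t+1) = λ_{σ(j)}(t)` for all `t, j`; and (iii) `P` is completely reducible
(it has such a factorization with 1-periodic real-analytic roots) iff `σ` is the identity. -/
theorem stmt_16 (n : ℕ) (hn : 2 ≤ n) (p : Fin n → ℝ → ℂ)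
    (hp_an : ∀ j, ∀ t : ℝ, AnalyticAt ℝ (p j) t)
    (hp_per : ∀ j, ∀ t : ℝ, p j (t + 1) = p j t)
    (hsimple : ¬ ∃ d : ℕ, 1 ≤ d ∧ ∃ qc : Fin d → ℝ → ℂ, ∃ r : Fin (n + 1) → ℝ → ℂ,
      (∀ j, ∀ t : ℝ, AnalyticAt ℝ (qc j) t) ∧ (∀ j, ∀ t : ℝ, qc j (t + 1) = qc j t) ∧
      (∀ j, ∀ t : ℝ, AnalyticAt ℝ (r j) t) ∧ (∀ j, ∀ t : ℝ, r j (t + 1) = r j t) ∧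
      ∀ (t : ℝ) (z : ℂ),
        z ^ n + ∑ j, p j t * z ^ (j : ℕ) =
          (z ^ d + ∑ j, qc j t * z ^ (j : ℕ)) ^ 2 * (∑ j, r j t * z ^ (j : ℕ)))
    (hLCR : ∀ s : ℝ, ∃ δ : ℝ, 0 < δ ∧ ∃ lam : Fin n → ℝ → ℂ,
      (∀ i, AnalyticOnNhd ℝ (lam i) (Set.Ioo (s - δ) (s + δ))) ∧
      ∀ t ∈ Set.Ioo (s - δ) (s + δ), ∀ z : ℂ,
        z ^ n + ∑ j, p j t * z ^ (j : ℕ) = ∏ i, (z - lam i t)) :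
    -- (i)
    (∃ lam : Fin n → ℝ → ℂ,
      (∀ i, ∀ t : ℝ, AnalyticAt ℝ (lam i) t) ∧
      ∀ (t : ℝ) (z : ℂ),
        z ^ n + ∑ j, p j t * z ^ (j : ℕ) = ∏ i, (z - lam i t)) ∧
    -- (ii)
    (∀ lam : Fin n → ℝ → ℂ,
      (∀ i, ∀ t : ℝ, AnalyticAt ℝ (lam i) t) →
      (∀ (t : ℝ) (z : ℂ),
        z ^ n + ∑ j, p j t * z ^ (j : ℕ) = ∏ i, (z - lam i t)) →
      ∃! σ : Equiv.Perm (Fin n), ∀ (j : Fin n) (t : ℝ), lam j (t + 1) = lam (σ j) t) ∧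
    -- (iii)
    (∀ lam : Fin n → ℝ → ℂ,
      (∀ i, ∀ t : ℝ, AnalyticAt ℝ (lam i) t) →
      (∀ (t : ℝ) (z : ℂ),
        z ^ n + ∑ j, p j t * z ^ (j : ℕ) = ∏ i, (z - lam i t)) →
      ∀ σ : Equiv.Perm (Fin n),
        (∀ (j : Fin n) (t : ℝ), lam j (t + 1) = lam (σ j) t) →
        ((∃ mu : Fin n → ℝ → ℂ,
            (∀ i, ∀ t : ℝ, AnalyticAt ℝ (mu i) t) ∧
            (∀ i, ∀ t : ℝ, mu i (t + 1) = mu i t) ∧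
            ∀ (t : ℝ) (z : ℂ),
              z ^ n + ∑ j, p j t * z ^ (j : ℕ) = ∏ i, (z - mu i t))
          ↔ σ = 1)) := by
  obtain ⟨lam, hlam_an, hlam_fac⟩ := globalFac p hLCR
  have hdis : ∀ (lam' : Fin n → ℝ → ℂ), (∀ i, ∀ t : ℝ, AnalyticAt ℝ (lam' i) t) →
      (∀ (t : ℝ) (z : ℂ), z ^ n + ∑ j, p j t * z ^ (j : ℕ) = ∏ i, (z - lam' i t)) →
      ∀ a b : Fin n, (∀ t, lam' a t = lam' b t) → a = b := by
    intro lam' h1 h2 a b hab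
    by_contra hne
    exact distinctRoots n p hp_per hsimple lam' h1 h2 hab hne
  refine ⟨⟨lam, hlam_an, hlam_fac⟩, ?_, ?_⟩
  · intro lam' h1 h2
    exact partII hp_per lam' h1 h2 (hdis lam' h1 h2)
  · intro lam' h1 h2 σ hσ
    exact partIII hp_per lam' h1 h2 (hdis lam' h1 h2) σ hσ
end
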